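/- arXiv:1510.05177 — 6 statements merged into one kernel-verified Lean document; each statement's English description precedes it below -/
import Mathlib

section
/- Let ū > u̲ > 0 and v̄ > v̲ > 0, and let R = {(u,v) ∈ ℝ² : u ≥ 0, v ≥ 0, u/u̲ + v/v̲ ≥ 1, u/ū + v/v̄ ≤ 1} be the region enclosed by the coordinate axes and the two lines u/ū + v/v̄ = 1 and u/u̲ + v/v̲ = 1. Let f, g be continuous real-valued functions on the closed first quadrant [0,∞)² such that: (i) the zero sets C_f = {(u,v) : u,v ≥ 0, f(u,v) = 0} and C_g = {(u,v) : u,v ≥ 0, g(u,v) = 0} are contained in R; (ii) there exists δ > 0 such that f(u,v) > 0 and g(u,v) > 0 whenever 0 < u < δ and 0 < v < δ; and (iii) there exists M > 0 such that f(u,v) < 0 and g(u,v) < 0 whenever u > M and v > M. Then for any constants α, β > 0, defining F(u,v) = α·u·f(u,v) + β·v·g(u,v), every point (u,v) with u,v ≥ 0, (u,v) ≠ (0,0), and F(u,v) = 0 lies in R. In other words, the curve C_F = {(u,v) : u,v ≥ 0, F(u,v) = 0} lies completely within R, apart from the origin. -/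
open Set

private lemma lin_fst' : IsLinearMap ℝ (fun p : ℝ × ℝ => p.1) :=
  ⟨fun _ _ => rfl, fun _ _ => rfl⟩

private lemma lin_snd' : IsLinearMap ℝ (fun p : ℝ × ℝ => p.2) :=
  ⟨fun _ _ => rfl, fun _ _ => rfl⟩

private lemma lin_comb' (a b : ℝ) : IsLinearMap ℝ (fun p : ℝ × ℝ => p.1 / a + p.2 / b) := by
  constructor
  · intro x y; simp [Prod.fst_add, Prod.snd_add]; ring
  · intro c x; simp [Prod.smul_fst, Prod.smul_snd, smul_eq_mul]; ring

private lemma convex_low' (a b : ℝ) :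
    Convex ℝ {p : ℝ × ℝ | 0 < p.1 ∧ 0 < p.2 ∧ p.1 / a + p.2 / b < 1} :=
  (convex_halfSpace_gt lin_fst' 0).inter
    ((convex_halfSpace_gt lin_snd' 0).inter (convex_halfSpace_lt (lin_comb' a b) 1))

private lemma convex_high' (a b : ℝ) :
    Convex ℝ {p : ℝ × ℝ | 0 < p.1 ∧ 0 < p.2 ∧ 1 < p.1 / a + p.2 / b} :=
  (convex_halfSpace_gt lin_fst' 0).inter
    ((convex_halfSpace_gt lin_snd' 0).inter (convex_halfSpace_gt (lin_comb' a b) 1))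

/-- On the interior region below the lower line, a function with zeros in `R`
and positive near the origin is positive. -/
private lemma sign_low
    (ubar ulow vbar vlow : ℝ)
    (hulow : 0 < ulow) (hvlow : 0 < vlow)
    (R : Set (ℝ × ℝ))
    (hR : R = {p : ℝ × ℝ | 0 ≤ p.1 ∧ 0 ≤ p.2 ∧
      1 ≤ p.1 / ulow + p.2 / vlow ∧ p.1 / ubar + p.2 / vbar ≤ 1})
    (h : ℝ → ℝ → ℝ)
    (hc : ContinuousOn (fun p : ℝ × ℝ => h p.1 p.2) {p | 0 ≤ p.1 ∧ 0 ≤ p.2})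
    (hC : {p : ℝ × ℝ | 0 ≤ p.1 ∧ 0 ≤ p.2 ∧ h p.1 p.2 = 0} ⊆ R)
    (δ : ℝ) (hδ : 0 < δ)
    (hpos : ∀ u v : ℝ, 0 < u → u < δ → 0 < v → v < δ → 0 < h u v)
    (u v : ℝ) (hu : 0 < u) (hv : 0 < v) (hlt : u / ulow + v / vlow < 1) :
    0 < h u v := by
  set T : Set (ℝ × ℝ) := {p : ℝ × ℝ | 0 < p.1 ∧ 0 < p.2 ∧ p.1 / ulow + p.2 / vlow < 1}
  have hTsub : T ⊆ {p : ℝ × ℝ | 0 ≤ p.1 ∧ 0 ≤ p.2} := fun p hp => ⟨hp.1.le, hp.2.1.le⟩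
  have hne : ∀ p ∈ T, h p.1 p.2 ≠ 0 := by
    intro p hp h0
    have hpR := hC ⟨hp.1.le, hp.2.1.le, h0⟩
    rw [hR] at hpR
    exact absurd hp.2.2 (not_lt.2 hpR.2.2.1)
  set ε : ℝ := min (δ / 2) (min (ulow / 4) (vlow / 4)) with hε
  have hε0 : 0 < ε := by positivity
  have hεδ : ε < δ := lt_of_le_of_lt (min_le_left _ _) (by linarith)
  have hεu : ε ≤ ulow / 4 := le_trans (min_le_right _ _) (min_le_left _ _)
  have hεv : ε ≤ vlow / 4 := le_trans (min_le_right _ _) (min_le_right _ _)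
  have hεT : (ε, ε) ∈ T := by
    refine ⟨hε0, hε0, ?_⟩
    have h1 : ε / ulow ≤ 1 / 4 := by rw [div_le_div_iff₀ hulow (by norm_num)]; linarith
    have h2 : ε / vlow ≤ 1 / 4 := by rw [div_le_div_iff₀ hvlow (by norm_num)]; linarith
    linarith
  have huvT : (u, v) ∈ T := ⟨hu, hv, hlt⟩
  have hεpos : 0 < h ε ε := hpos ε ε hε0 hεδ hε0 hεδ
  rcases (hne (u, v) huvT).lt_or_gt with hneg | hposuv
  · exfalso
    have := (convex_low' ulow vlow).isPreconnected.intermediate_value huvT hεT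
      (hc.mono hTsub)
    have h0 : (0 : ℝ) ∈ Icc (h u v) (h ε ε) := ⟨hneg.le, hεpos.le⟩
    obtain ⟨p, hpT, hp0⟩ := this h0
    exact hne p hpT hp0
  · exact hposuv

/-- On the interior region above the upper line, a function with zeros in `R`
and negative far away is negative. -/
private lemma sign_high
    (ubar ulow vbar vlow : ℝ)
    (hubar : 0 < ubar) (hvbar : 0 < vbar)
    (R : Set (ℝ × ℝ))
    (hR : R = {p : ℝ × ℝ | 0 ≤ p.1 ∧ 0 ≤ p.2 ∧
      1 ≤ p.1 / ulow + p.2 / vlow ∧ p.1 / ubar + p.2 / vbar ≤ 1})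
    (h : ℝ → ℝ → ℝ)
    (hc : ContinuousOn (fun p : ℝ × ℝ => h p.1 p.2) {p | 0 ≤ p.1 ∧ 0 ≤ p.2})
    (hC : {p : ℝ × ℝ | 0 ≤ p.1 ∧ 0 ≤ p.2 ∧ h p.1 p.2 = 0} ⊆ R)
    (M : ℝ) (hM : 0 < M)
    (hnegM : ∀ u v : ℝ, M < u → M < v → h u v < 0)
    (u v : ℝ) (hu : 0 < u) (hv : 0 < v) (hgt : 1 < u / ubar + v / vbar) :
    h u v < 0 := by
  set T : Set (ℝ × ℝ) := {p : ℝ × ℝ | 0 < p.1 ∧ 0 < p.2 ∧ 1 < p.1 / ubar + p.2 / vbar}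
  have hTsub : T ⊆ {p : ℝ × ℝ | 0 ≤ p.1 ∧ 0 ≤ p.2} := fun p hp => ⟨hp.1.le, hp.2.1.le⟩
  have hne : ∀ p ∈ T, h p.1 p.2 ≠ 0 := by
    intro p hp h0
    have hpR := hC ⟨hp.1.le, hp.2.1.le, h0⟩
    rw [hR] at hpR
    exact absurd hp.2.2 (not_lt.2 hpR.2.2.2)
  set K : ℝ := max M (max ubar vbar) + 1 with hK
  have hK0 : 0 < K := by positivity
  have hKM : M < K := lt_of_le_of_lt (le_max_left _ _) (by linarith [le_refl (max M (max ubar vbar))] )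
  have hKu : ubar < K :=
    lt_of_le_of_lt (le_trans (le_max_left _ _) (le_max_right M _)) (by linarith)
  have hKv : vbar < K :=
    lt_of_le_of_lt (le_trans (le_max_right _ _) (le_max_right M _)) (by linarith)
  have hKT : (K, K) ∈ T := by
    refine ⟨hK0, hK0, ?_⟩
    have h1 : 1 < K / ubar := (one_lt_div hubar).2 hKu
    have h2 : 0 < K / vbar := by positivity
    simp only
    linarith
  have huvT : (u, v) ∈ T := ⟨hu, hv, hgt⟩
  have hKneg : h K K < 0 := hnegM K K hKM hKM
  rcases (hne (u, v) huvT).lt_or_gt with hneg | hposuv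
  · exact hneg
  · exfalso
    have := (convex_high' ubar vbar).isPreconnected.intermediate_value hKT huvT
      (hc.mono hTsub)
    have h0 : (0 : ℝ) ∈ Icc (h K K) (h u v) := ⟨hKneg.le, hposuv.le⟩
    obtain ⟨p, hpT, hp0⟩ := this h0
    exact hne p hpT hp0

/-- The zero set of `F(u,v) = α u f(u,v) + β v g(u,v)` in the closed first
quadrant lies (apart from the origin) within the region `R` enclosed by the coordinate
axes and the lines `u/ū + v/v̄ = 1` and `u/u̲ + v/v̲ = 1`. -/
theorem zero_set_of_F_in_R
    (ubar ulow vbar vlow : ℝ)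
    (hulow : 0 < ulow) (hu : ulow < ubar)
    (hvlow : 0 < vlow) (hv : vlow < vbar)
    (R : Set (ℝ × ℝ))
    (hR : R = {p : ℝ × ℝ | 0 ≤ p.1 ∧ 0 ≤ p.2 ∧
      1 ≤ p.1 / ulow + p.2 / vlow ∧ p.1 / ubar + p.2 / vbar ≤ 1})
    (f g : ℝ → ℝ → ℝ)
    (hfc : ContinuousOn (fun p : ℝ × ℝ => f p.1 p.2) {p | 0 ≤ p.1 ∧ 0 ≤ p.2})
    (hgc : ContinuousOn (fun p : ℝ × ℝ => g p.1 p.2) {p | 0 ≤ p.1 ∧ 0 ≤ p.2})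
    (hCf : {p : ℝ × ℝ | 0 ≤ p.1 ∧ 0 ≤ p.2 ∧ f p.1 p.2 = 0} ⊆ R)
    (hCg : {p : ℝ × ℝ | 0 ≤ p.1 ∧ 0 ≤ p.2 ∧ g p.1 p.2 = 0} ⊆ R)
    (hsmall : ∃ δ > 0, ∀ u v : ℝ, 0 < u → u < δ → 0 < v → v < δ →
      0 < f u v ∧ 0 < g u v)
    (hlarge : ∃ M > 0, ∀ u v : ℝ, M < u → M < v →
      f u v < 0 ∧ g u v < 0)
    (α β : ℝ) (hα : 0 < α) (hβ : 0 < β)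
    (u v : ℝ) (hu0 : 0 ≤ u) (hv0 : 0 ≤ v) (hne : (u, v) ≠ (0, 0))
    (hF : α * u * f u v + β * v * g u v = 0) :
    (u, v) ∈ R := by
  obtain ⟨δ, hδ, hδpos⟩ := hsmall
  obtain ⟨M, hM, hMneg⟩ := hlarge
  have hubar : 0 < ubar := hulow.trans hu
  have hvbar : 0 < vbar := hvlow.trans hv
  rcases hu0.eq_or_lt with rfl | hup
  · -- u = 0
    have hvp : 0 < v := by
      rcases hv0.eq_or_lt with rfl | h
      · exact absurd rfl hne
      · exact h
    have hg0 : g 0 v = 0 := by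
      have : β * v * g 0 v = 0 := by simpa using hF
      rcases mul_eq_zero.1 this with h | h
      · exact absurd h (by positivity)
      · exact h
    exact hCg ⟨le_refl 0, hv0, hg0⟩
  rcases hv0.eq_or_lt with rfl | hvp
  · -- v = 0
    have hf0 : f u 0 = 0 := by
      have : α * u * f u 0 = 0 := by simpa using hF
      rcases mul_eq_zero.1 this with h | h
      · exact absurd h (by positivity)
      · exact h
    exact hCf ⟨hu0, le_refl 0, hf0⟩
  -- 0 < u, 0 < v
  by_cases hf0 : f u v = 0
  · exact hCf ⟨hu0, hv0, hf0⟩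
  have hg0 : g u v ≠ 0 := by
    intro h0
    apply hf0
    have : α * u * f u v = 0 := by rw [h0] at hF; linarith
    rcases mul_eq_zero.1 this with h | h
    · exact absurd h (by positivity)
    · exact h
  rw [hR]
  refine ⟨hu0, hv0, ?_, ?_⟩
  · -- 1 ≤ u/ulow + v/vlow
    by_contra hlt
    push_neg at hlt
    have hfpos := sign_low ubar ulow vbar vlow hulow hvlow R hR f hfc hCf δ hδ
      (fun a b h1 h2 h3 h4 => (hδpos a b h1 h2 h3 h4).1) u v hup hvp hlt
    have hgpos := sign_low ubar ulow vbar vlow hulow hvlow R hR g hgc hCg δ hδ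
      (fun a b h1 h2 h3 h4 => (hδpos a b h1 h2 h3 h4).2) u v hup hvp hlt
    nlinarith [mul_pos (mul_pos hα hup) hfpos, mul_pos (mul_pos hβ hvp) hgpos]
  · -- u/ubar + v/vbar ≤ 1
    by_contra hgt
    push_neg at hgt
    have hfneg := sign_high ubar ulow vbar vlow hubar hvbar R hR f hfc hCf M hM
      (fun a b h1 h2 => (hMneg a b h1 h2).1) u v hup hvp hgt
    have hgneg := sign_high ubar ulow vbar vlow hubar hvbar R hR g hgc hCg M hM
      (fun a b h1 h2 => (hMneg a b h1 h2).2) u v hup hvp hgt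
    nlinarith [mul_neg_of_pos_of_neg (mul_pos hα hup) hfneg,
      mul_neg_of_pos_of_neg (mul_pos hβ hvp) hgneg]
end

section
/- (N-barrier maximum principle for two equations: upper bound.) Let d₁, d₂ > 0 and θ ∈ ℝ. Let ū > u̲ > 0 and v̄ > v̲ > 0, and let R = {(u,v) ∈ ℝ² : u ≥ 0, v ≥ 0, u/u̲ + v/v̲ ≥ 1, u/ū + v/v̄ ≤ 1}. Let f, g be continuous real-valued functions on [0,∞)² satisfying: (i) the zero sets {f = 0} and {g = 0} in the closed first quadrant are contained in R; (ii) there exists δ > 0 such that f(u,v), g(u,v) > 0 whenever 0 < u < δ and 0 < v < δ; (iii) there exists M > 0 such that f(u,v), g(u,v) < 0 whenever u > M and v > M. Suppose u, v : ℝ → ℝ are twice continuously differentiable functions with u(x) > 0 and v(x) > 0 for all x ∈ ℝ, satisfying d₁u''(x) + θu'(x) + u(x) f(u(x),v(x)) = 0 and d₂v''(x) + θv'(x) + v(x) g(u(x),v(x)) = 0 for all x ∈ ℝ, and such that (u(x),v(x)) converges as x → −∞ to a point e₋ and as x → +∞ to a point e₊, where each of e₋ and e₊ is one of: (0,0); a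 point (u₁,0) with u₁ > 0 and f(u₁,0) = 0; a point (0,v₂) with v₂ > 0 and g(0,v₂) = 0; or a point (u*,v*) with u*, v* > 0 and f(u*,v*) = g(u*,v*) = 0. Then for every α, β > 0 and every x ∈ ℝ, α·u(x) + β·v(x) ≤ max(α·ū, β·v̄) · max(d₁,d₂)/min(d₁,d₂). -/
open Filter

section NBMPaux

private lemma sign_neg_outer (α β lam : ℝ) (hα : 0 < α) (hβ : 0 < β)
    (f : ℝ → ℝ → ℝ)
    (hfc : ContinuousOn (fun p : ℝ × ℝ => f p.1 p.2) {p : ℝ × ℝ | 0 ≤ p.1 ∧ 0 ≤ p.2})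
    (hzero : ∀ a b : ℝ, 0 ≤ a → 0 ≤ b → f a b = 0 → α * a + β * b ≤ lam)
    (M : ℝ) (hM : 0 < M) (hMneg : ∀ a b : ℝ, M < a → M < b → f a b < 0)
    (a b : ℝ) (ha : 0 < a) (hb : 0 < b) (hab : lam < α * a + β * b) :
    f a b < 0 := by
  by_contra hpos
  push_neg at hpos
  set T : ℝ := max M (lam / α) + 1 with hT_def
  have hTM : M < T := (le_max_left _ _).trans_lt (lt_add_one _)
  have hT0 : 0 < T := hM.trans hTM
  have hTlam : lam < α * T + β * T := by
    have h1 : lam / α < T := (le_max_right _ _).trans_lt (lt_add_one _)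
    have h2 : lam < T * α := (div_lt_iff₀ hα).mp h1
    nlinarith [mul_pos hβ hT0]
  set γ : ℝ → ℝ × ℝ := fun t => ((1 - t) * a + t * T, (1 - t) * b + t * T) with hγ_def
  have hmaps : Set.MapsTo γ (Set.Icc 0 1) {p : ℝ × ℝ | 0 ≤ p.1 ∧ 0 ≤ p.2} := by
    intro t ht
    have h1 := mul_nonneg (sub_nonneg.2 ht.2) ha.le
    have h2 := mul_nonneg (sub_nonneg.2 ht.2) hb.le
    have h3 := mul_nonneg ht.1 hT0.le
    constructor
    · show 0 ≤ (1 - t) * a + t * T; linarith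
    · show 0 ≤ (1 - t) * b + t * T; linarith
  have hγc : Continuous γ := by fun_prop
  have hcont : ContinuousOn (fun t : ℝ => f (γ t).1 (γ t).2) (Set.Icc 0 1) :=
    hfc.comp hγc.continuousOn hmaps
  have hend1 : f (γ 1).1 (γ 1).2 < 0 := by
    have e1 : (γ 1).1 = T := by simp [hγ_def]
    have e2 : (γ 1).2 = T := by simp [hγ_def]
    rw [e1, e2]; exact hMneg T T hTM hTM
  have hend0 : 0 ≤ f (γ 0).1 (γ 0).2 := by
    have e1 : (γ 0).1 = a := by simp [hγ_def]
    have e2 : (γ 0).2 = b := by simp [hγ_def]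
    rw [e1, e2]; exact hpos
  have h0mem : (0:ℝ) ∈ Set.Icc (f (γ 1).1 (γ 1).2) (f (γ 0).1 (γ 0).2) := ⟨hend1.le, hend0⟩
  obtain ⟨t, ht, hft⟩ := intermediate_value_Icc' zero_le_one hcont h0mem
  have h1 : 0 ≤ (γ t).1 := (hmaps ht).1
  have h2 : 0 ≤ (γ t).2 := (hmaps ht).2
  have hle := hzero _ _ h1 h2 hft
  have hve : α * (γ t).1 + β * (γ t).2 = α * ((1-t)*a + t*T) + β * ((1-t)*b + t*T) := rfl
  rw [hve] at hle
  rcases le_total (α*a + β*b) (α*T + β*T) with hc | hc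
  · have h3 := mul_nonneg ht.1 (sub_nonneg.2 hc)
    nlinarith [hab]
  · have h3 := mul_nonneg (sub_nonneg.2 ht.2) (sub_nonneg.2 hc)
    nlinarith [hTlam]

end NBMPaux


private lemma aux_comb_upper (d₁ d₂ Mx α β a b : ℝ) (h1 : d₁ ≤ Mx) (h2 : d₂ ≤ Mx)
    (ha : 0 ≤ α * a) (hb : 0 ≤ β * b) :
    d₂ * α * a + d₁ * β * b ≤ Mx * (α * a + β * b) := by
  have e1 := mul_nonneg (sub_nonneg.2 h2) ha
  have e2 := mul_nonneg (sub_nonneg.2 h1) hb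
  nlinarith

private lemma aux_comb_lower (d₁ d₂ m α β a b : ℝ) (h1 : m ≤ d₁) (h2 : m ≤ d₂)
    (ha : 0 ≤ α * a) (hb : 0 ≤ β * b) :
    m * (α * a + β * b) ≤ d₂ * α * a + d₁ * β * b := by
  have e1 := mul_nonneg (sub_nonneg.2 h2) ha
  have e2 := mul_nonneg (sub_nonneg.2 h1) hb
  nlinarith

set_option maxHeartbeats 1000000 in
/-- N-barrier maximum principle for two equations, upper bound. -/
theorem NBMP_two_equations_upper_bound
    (d₁ d₂ θ : ℝ) (hd₁ : 0 < d₁) (hd₂ : 0 < d₂)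
    (ubar ulow vbar vlow : ℝ)
    (hulow : 0 < ulow) (huu : ulow < ubar)
    (hvlow : 0 < vlow) (hvv : vlow < vbar)
    (R : Set (ℝ × ℝ))
    (hR : R = {p : ℝ × ℝ | 0 ≤ p.1 ∧ 0 ≤ p.2 ∧
      1 ≤ p.1 / ulow + p.2 / vlow ∧ p.1 / ubar + p.2 / vbar ≤ 1})
    (f g : ℝ → ℝ → ℝ)
    (hfc : ContinuousOn (fun p : ℝ × ℝ => f p.1 p.2) {p | 0 ≤ p.1 ∧ 0 ≤ p.2})
    (hgc : ContinuousOn (fun p : ℝ × ℝ => g p.1 p.2) {p | 0 ≤ p.1 ∧ 0 ≤ p.2})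
    (hCf : {p : ℝ × ℝ | 0 ≤ p.1 ∧ 0 ≤ p.2 ∧ f p.1 p.2 = 0} ⊆ R)
    (hCg : {p : ℝ × ℝ | 0 ≤ p.1 ∧ 0 ≤ p.2 ∧ g p.1 p.2 = 0} ⊆ R)
    (hsmall : ∃ δ > 0, ∀ u v : ℝ, 0 < u → u < δ → 0 < v → v < δ →
      0 < f u v ∧ 0 < g u v)
    (hlarge : ∃ M > 0, ∀ u v : ℝ, M < u → M < v →
      f u v < 0 ∧ g u v < 0)
    (u v : ℝ → ℝ)
    (hu : ContDiff ℝ 2 u) (hv : ContDiff ℝ 2 v)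
    (hupos : ∀ x, 0 < u x) (hvpos : ∀ x, 0 < v x)
    (hueq : ∀ x, d₁ * deriv (deriv u) x + θ * deriv u x + u x * f (u x) (v x) = 0)
    (hveq : ∀ x, d₂ * deriv (deriv v) x + θ * deriv v x + v x * g (u x) (v x) = 0)
    (eminus eplus : ℝ × ℝ)
    (hlimminus : Tendsto (fun x => (u x, v x)) atBot (nhds eminus))
    (hlimplus : Tendsto (fun x => (u x, v x)) atTop (nhds eplus))
    (heminus : eminus = (0, 0) ∨
      (∃ u₁ : ℝ, 0 < u₁ ∧ f u₁ 0 = 0 ∧ eminus = (u₁, 0)) ∨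
      (∃ v₂ : ℝ, 0 < v₂ ∧ g 0 v₂ = 0 ∧ eminus = (0, v₂)) ∨
      (∃ us vs : ℝ, 0 < us ∧ 0 < vs ∧ f us vs = 0 ∧ g us vs = 0 ∧ eminus = (us, vs)))
    (heplus : eplus = (0, 0) ∨
      (∃ u₁ : ℝ, 0 < u₁ ∧ f u₁ 0 = 0 ∧ eplus = (u₁, 0)) ∨
      (∃ v₂ : ℝ, 0 < v₂ ∧ g 0 v₂ = 0 ∧ eplus = (0, v₂)) ∨
      (∃ us vs : ℝ, 0 < us ∧ 0 < vs ∧ f us vs = 0 ∧ g us vs = 0 ∧ eplus = (us, vs)))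
    (α β : ℝ) (hα : 0 < α) (hβ : 0 < β) (x : ℝ) :
    α * u x + β * v x ≤ max (α * ubar) (β * vbar) * (max d₁ d₂ / min d₁ d₂) := by
  by_contra hcon
  push_neg at hcon
  -- basic constants
  set m := min d₁ d₂ with hm_def
  set Mx := max d₁ d₂ with hMx_def
  have hm : 0 < m := lt_min hd₁ hd₂
  have hmM : m ≤ Mx := min_le_max
  have hMx0 : 0 < Mx := hm.trans_le hmM
  have hd1m : m ≤ d₁ := min_le_left _ _
  have hd2m : m ≤ d₂ := min_le_right _ _
  have hd1M : d₁ ≤ Mx := le_max_left _ _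
  have hd2M : d₂ ≤ Mx := le_max_right _ _
  set lam := max (α * ubar) (β * vbar) with hlam_def
  have hub : 0 < ubar := hulow.trans huu
  have hvb : 0 < vbar := hvlow.trans hvv
  have hlam0 : 0 < lam := lt_max_iff.mpr (Or.inl (mul_pos hα hub))
  -- points of R satisfy α p₁ + β p₂ ≤ lam
  have hRle : ∀ p : ℝ × ℝ, p ∈ R → α * p.1 + β * p.2 ≤ lam := by
    intro p hp
    rw [hR] at hp
    obtain ⟨h1, h2, -, h4⟩ := hp
    have e1 : α * p.1 ≤ lam * (p.1 / ubar) := by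
      have e : α * p.1 = (α * ubar) * (p.1 / ubar) := by field_simp
      rw [e]
      exact mul_le_mul_of_nonneg_right (le_max_left _ _) (div_nonneg h1 hub.le)
    have e2 : β * p.2 ≤ lam * (p.2 / vbar) := by
      have e : β * p.2 = (β * vbar) * (p.2 / vbar) := by field_simp
      rw [e]
      exact mul_le_mul_of_nonneg_right (le_max_right _ _) (div_nonneg h2 hvb.le)
    calc α * p.1 + β * p.2 ≤ lam * (p.1/ubar + p.2/vbar) := by rw [mul_add]; linarith
      _ ≤ lam * 1 := mul_le_mul_of_nonneg_left h4 hlam0.le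
      _ = lam := mul_one lam
  have hfzero : ∀ a b : ℝ, 0 ≤ a → 0 ≤ b → f a b = 0 → α * a + β * b ≤ lam :=
    fun a b ha hb hf => hRle (a, b) (hCf ⟨ha, hb, hf⟩)
  have hgzero : ∀ a b : ℝ, 0 ≤ a → 0 ≤ b → g a b = 0 → α * a + β * b ≤ lam :=
    fun a b ha hb hg => hRle (a, b) (hCg ⟨ha, hb, hg⟩)
  obtain ⟨M, hM0, hMneg⟩ := hlarge
  have hfneg : ∀ a b : ℝ, 0 < a → 0 < b → lam < α * a + β * b → f a b < 0 :=
    fun a b ha hb hab => sign_neg_outer α β lam hα hβ f hfc hfzero M hM0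
      (fun a b h1 h2 => (hMneg a b h1 h2).1) a b ha hb hab
  have hgneg : ∀ a b : ℝ, 0 < a → 0 < b → lam < α * a + β * b → g a b < 0 :=
    fun a b ha hb hab => sign_neg_outer α β lam hα hβ g hgc hgzero M hM0
      (fun a b h1 h2 => (hMneg a b h1 h2).2) a b ha hb hab
  -- key consequence of the contradiction hypothesis
  have hFxpos : 0 < α * u x + β * v x :=
    add_pos (mul_pos hα (hupos x)) (mul_pos hβ (hvpos x))
  have key : lam * Mx < (α * u x + β * v x) * m := by
    have h : lam * Mx / m < α * u x + β * v x := by rwa [← mul_div_assoc] at hcon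
    exact (div_lt_iff₀ hm).mp h
  clear_value m Mx lam
  clear hcon hRle hR hCf hCg hsmall hMneg hlam_def hm_def hMx_def
  -- differentiability
  have hu1 : Differentiable ℝ u := hu.differentiable two_ne_zero
  have hv1 : Differentiable ℝ v := hv.differentiable two_ne_zero
  have hu2 : Differentiable ℝ (deriv u) := by
    have h2 : ContDiff ℝ ((1:ℕ) + 1) u := by exact_mod_cast hu
    exact (contDiff_succ_iff_deriv.mp h2).2.2.differentiable (by simp)
  have hv2 : Differentiable ℝ (deriv v) := by
    have h2 : ContDiff ℝ ((1:ℕ) + 1) v := by exact_mod_cast hv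
    exact (contDiff_succ_iff_deriv.mp h2).2.2.differentiable (by simp)
  -- the functions F, q, K, H
  set F : ℝ → ℝ := fun y => α * u y + β * v y with hF_def
  set q : ℝ → ℝ := fun y => d₂ * α * u y + d₁ * β * v y with hq_def
  set K : ℝ → ℝ := fun y =>
    -(d₂ * α * (u y * f (u y) (v y)) + d₁ * β * (v y * g (u y) (v y))) with hK_def
  set H : ℝ → ℝ := fun y =>
    d₁ * d₂ * (α * deriv u y + β * deriv v y) + θ * q y with hH_def
  have hFev : ∀ y, F y = α * u y + β * v y := fun y => rfl
  have hqev : ∀ y, q y = d₂ * α * u y + d₁ * β * v y := fun y => rfl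
  have hKev : ∀ y, K y =
    -(d₂ * α * (u y * f (u y) (v y)) + d₁ * β * (v y * g (u y) (v y))) := fun y => rfl
  have hHev : ∀ y, H y =
    d₁ * d₂ * (α * deriv u y + β * deriv v y) + θ * q y := fun y => rfl
  have hFd : ∀ y, HasDerivAt F (α * deriv u y + β * deriv v y) y := fun y =>
    ((hu1 y).hasDerivAt.const_mul α).add ((hv1 y).hasDerivAt.const_mul β)
  have hFcont : Continuous F := by
    have : Differentiable ℝ F := fun y => (hFd y).differentiableAt
    exact this.continuous
  have hHd : ∀ y, HasDerivAt H (K y) y := by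
    intro y
    have h1 : HasDerivAt (fun z => d₁ * d₂ * (α * deriv u z + β * deriv v z))
        (d₁ * d₂ * (α * deriv (deriv u) y + β * deriv (deriv v) y)) y :=
      (((hu2 y).hasDerivAt.const_mul α).add ((hv2 y).hasDerivAt.const_mul β)).const_mul (d₁*d₂)
    have h2 : HasDerivAt q (d₂ * α * deriv u y + d₁ * β * deriv v y) y :=
      ((hu1 y).hasDerivAt.const_mul (d₂*α)).add ((hv1 y).hasDerivAt.const_mul (d₁*β))
    have h3 := h1.add (h2.const_mul θ)
    convert h3 using 1
    have e1 := hueq y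
    have e2 := hveq y
    show -(d₂ * α * (u y * f (u y) (v y)) + d₁ * β * (v y * g (u y) (v y))) = _
    linear_combination (-(α*d₂)) * hueq y + (-(β*d₁)) * hveq y
    all_goals rfl
  -- limits
  have hlin : Continuous (fun p : ℝ × ℝ => α * p.1 + β * p.2) := by fun_prop
  have hFbot : Tendsto F atBot (nhds (α * eminus.1 + β * eminus.2)) :=
    (hlin.tendsto eminus).comp hlimminus
  have hFtop : Tendsto F atTop (nhds (α * eplus.1 + β * eplus.2)) :=
    (hlin.tendsto eplus).comp hlimplus
  clear_value F q K H
  have hembound : α * eminus.1 + β * eminus.2 ≤ lam := by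
    rcases heminus with h | ⟨u₁, hu₁, hf0, h⟩ | ⟨v₂, hv₂, hg0, h⟩ |
      ⟨us, vs, hus, hvs, hf0, hg0, h⟩ <;> subst h
    · simpa using hlam0.le
    · exact hfzero u₁ 0 hu₁.le le_rfl hf0
    · exact hgzero 0 v₂ le_rfl hv₂.le hg0
    · exact hfzero us vs hus.le hvs.le hf0
  have hepbound : α * eplus.1 + β * eplus.2 ≤ lam := by
    rcases heplus with h | ⟨u₁, hu₁, hf0, h⟩ | ⟨v₂, hv₂, hg0, h⟩ |
      ⟨us, vs, hus, hvs, hf0, hg0, h⟩ <;> subst h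
    · simpa using hlam0.le
    · exact hfzero u₁ 0 hu₁.le le_rfl hf0
    · exact hgzero 0 v₂ le_rfl hv₂.le hg0
    · exact hfzero us vs hus.le hvs.le hf0
  clear heminus heplus hlimminus hlimplus hueq hveq hu hv
  -- the intermediate level lp
  set lp := (lam + (m / Mx) * (α * u x + β * v x)) / 2 with hlp_def
  have hmMx : lam < m / Mx * (α * u x + β * v x) := by
    rw [div_mul_eq_mul_div, lt_div_iff₀ hMx0]
    linarith [key]
  have hlp1 : lam < lp := by rw [hlp_def]; linarith
  have hlp2 : Mx * lp < m * (α * u x + β * v x) := by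
    rw [hlp_def]
    have hMxne : Mx ≠ 0 := ne_of_gt hMx0
    have e : Mx * ((lam + m / Mx * (α * u x + β * v x)) / 2)
        = (Mx * lam + m * (α * u x + β * v x)) / 2 := by
      field_simp
    rw [e]
    linarith [key]
  clear_value lp
  clear hlp_def key hmMx
  have hlpFx : lp < α * u x + β * v x := by
    have h1 : m * (α * u x + β * v x) ≤ Mx * (α * u x + β * v x) :=
      mul_le_mul_of_nonneg_right hmM hFxpos.le
    have h2 : Mx * lp < Mx * (α * u x + β * v x) := lt_of_lt_of_le hlp2 h1
    exact lt_of_mul_lt_mul_left h2 hMx0.le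
  have hlppos : 0 < lp := hlam0.trans hlp1
  have hFxlp : lp < F x := by rw [hFev x]; exact hlpFx
  -- construction of x₁
  have hevbot : ∀ᶠ y in atBot, F y < lp :=
    hFbot.eventually_lt_const (lt_of_le_of_lt hembound hlp1)
  have hAne : Set.Nonempty {y : ℝ | y ≤ x ∧ F y ≤ lp} := by
    obtain ⟨y, hy1, hy2⟩ := (hevbot.and (eventually_le_atBot x)).exists
    exact ⟨y, hy2, hy1.le⟩
  have hAbdd : BddAbove {y : ℝ | y ≤ x ∧ F y ≤ lp} := ⟨x, fun y hy => hy.1⟩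
  have hAclosed : IsClosed {y : ℝ | y ≤ x ∧ F y ≤ lp} := by
    have e : {y : ℝ | y ≤ x ∧ F y ≤ lp} = Set.Iic x ∩ F ⁻¹' Set.Iic lp := rfl
    rw [e]; exact isClosed_Iic.inter (isClosed_Iic.preimage hFcont)
  set x₁ := sSup {y : ℝ | y ≤ x ∧ F y ≤ lp} with hx₁_def
  have hx₁mem := hAclosed.csSup_mem hAne hAbdd
  have hx₁le : x₁ ≤ x := hx₁mem.1
  have hFx₁le : F x₁ ≤ lp := hx₁mem.2
  have hx₁lt : x₁ < x := by
    rcases eq_or_lt_of_le hx₁le with h | h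
    · exfalso; rw [h] at hFx₁le; exact absurd hFx₁le (not_le.mpr hFxlp)
    · exact h
  have hgt₁ : ∀ y, x₁ < y → y ≤ x → lp < F y := by
    intro y hy1 hy2
    by_contra hle
    push_neg at hle
    exact absurd (le_csSup hAbdd ⟨hy2, hle⟩) (not_le.mpr hy1)
  have hFx₁ : F x₁ = lp := by
    rcases eq_or_lt_of_le hFx₁le with h | h
    · exact h
    · exfalso
      have hev : ∀ᶠ y in nhdsWithin x₁ (Set.Ioi x₁), F y < lp :=
        ((hFcont.continuousAt).eventually_lt_const h).filter_mono nhdsWithin_le_nhds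
      obtain ⟨y, hy1, hy2⟩ := (hev.and (Ioo_mem_nhdsGT_of_mem ⟨le_rfl, hx₁lt⟩)).exists
      exact absurd hy1 (not_lt.mpr (hgt₁ y hy2.1 hy2.2.le).le)
  clear_value x₁
  clear hx₁_def hx₁mem hAclosed hAbdd hAne hevbot hFx₁le
  -- construction of x₂
  have hevtop : ∀ᶠ y in atTop, F y < lp :=
    hFtop.eventually_lt_const (lt_of_le_of_lt hepbound hlp1)
  have hBne : Set.Nonempty {y : ℝ | x ≤ y ∧ F y ≤ lp} := by
    obtain ⟨y, hy1, hy2⟩ := (hevtop.and (eventually_ge_atTop x)).exists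
    exact ⟨y, hy2, hy1.le⟩
  have hBbdd : BddBelow {y : ℝ | x ≤ y ∧ F y ≤ lp} := ⟨x, fun y hy => hy.1⟩
  have hBclosed : IsClosed {y : ℝ | x ≤ y ∧ F y ≤ lp} := by
    have e : {y : ℝ | x ≤ y ∧ F y ≤ lp} = Set.Ici x ∩ F ⁻¹' Set.Iic lp := rfl
    rw [e]; exact isClosed_Ici.inter (isClosed_Iic.preimage hFcont)
  set x₂ := sInf {y : ℝ | x ≤ y ∧ F y ≤ lp} with hx₂_def
  have hx₂mem := hBclosed.csInf_mem hBne hBbdd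
  have hx₂ge : x ≤ x₂ := hx₂mem.1
  have hFx₂le : F x₂ ≤ lp := hx₂mem.2
  have hx₂gt : x < x₂ := by
    rcases eq_or_lt_of_le hx₂ge with h | h
    · exfalso; rw [← h] at hFx₂le; exact absurd hFx₂le (not_le.mpr hFxlp)
    · exact h
  have hgt₂ : ∀ y, x ≤ y → y < x₂ → lp < F y := by
    intro y hy1 hy2
    by_contra hle
    push_neg at hle
    exact absurd (csInf_le hBbdd ⟨hy1, hle⟩) (not_le.mpr hy2)
  have hFx₂ : F x₂ = lp := by
    rcases eq_or_lt_of_le hFx₂le with h | h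
    · exact h
    · exfalso
      have hev : ∀ᶠ y in nhdsWithin x₂ (Set.Iio x₂), F y < lp :=
        ((hFcont.continuousAt).eventually_lt_const h).filter_mono nhdsWithin_le_nhds
      obtain ⟨y, hy1, hy2⟩ := (hev.and (Ioo_mem_nhdsLT_of_mem ⟨hx₂gt, le_rfl⟩)).exists
      exact absurd hy1 (not_lt.mpr (hgt₂ y hy2.1.le hy2.2).le)
  clear_value x₂
  clear hx₂_def hx₂mem hBclosed hBbdd hBne hevtop hFx₂le
  have hx₁₂ : x₁ < x₂ := hx₁lt.trans hx₂gt
  -- F ≥ lp on [x₁, x₂]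
  have hFge : ∀ y ∈ Set.Icc x₁ x₂, lp ≤ F y := by
    intro y hy
    rcases le_or_gt y x with h | h
    · rcases eq_or_lt_of_le hy.1 with h1 | h1
      · rw [← h1]; exact hFx₁.ge
      · exact (hgt₁ y h1 h).le
    · rcases eq_or_lt_of_le hy.2 with h2 | h2
      · rw [h2]; exact hFx₂.ge
      · exact (hgt₂ y h.le h2).le
  -- K > 0 on [x₁, x₂]
  have hKpos : ∀ y ∈ Set.Icc x₁ x₂, 0 < K y := by
    intro y hy
    have hFy : lam < α * u y + β * v y := by
      have := hFge y hy
      rw [hFev y] at this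
      linarith
    have h1 := hfneg (u y) (v y) (hupos y) (hvpos y) hFy
    have h2 := hgneg (u y) (v y) (hupos y) (hvpos y) hFy
    have t1 : d₂ * α * (u y * f (u y) (v y)) < 0 :=
      mul_neg_of_pos_of_neg (mul_pos hd₂ hα) (mul_neg_of_pos_of_neg (hupos y) h1)
    have t2 : d₁ * β * (v y * g (u y) (v y)) < 0 :=
      mul_neg_of_pos_of_neg (mul_pos hd₁ hβ) (mul_neg_of_pos_of_neg (hvpos y) h2)
    rw [hKev y]
    linarith
  -- H strictly monotone on [x₁, x₂]
  have hHcont : Continuous H := by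
    have : Differentiable ℝ H := fun y => (hHd y).differentiableAt
    exact this.continuous
  have hmono : StrictMonoOn H (Set.Icc x₁ x₂) := by
    apply strictMonoOn_of_deriv_pos (convex_Icc x₁ x₂) hHcont.continuousOn
    intro y hy
    rw [interior_Icc] at hy
    rw [(hHd y).deriv]
    exact hKpos y (Set.mem_Icc_of_Ioo hy)
  -- the max point z₀
  obtain ⟨z₀, hz₀mem, hz₀max⟩ :=
    isCompact_Icc.exists_isMaxOn (Set.nonempty_Icc.mpr hx₁₂.le) hFcont.continuousOn
  have hxmem : x ∈ Set.Icc x₁ x₂ := ⟨hx₁lt.le, hx₂gt.le⟩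
  have hFzx : F x ≤ F z₀ := hz₀max hxmem
  have hlpz₀ : lp < F z₀ := lt_of_lt_of_le hFxlp hFzx
  have hz₀x₁ : x₁ < z₀ := by
    rcases eq_or_lt_of_le hz₀mem.1 with h | h
    · exfalso; rw [← h] at hlpz₀; rw [hFx₁] at hlpz₀; exact lt_irrefl _ hlpz₀
    · exact h
  have hz₀x₂ : z₀ < x₂ := by
    rcases eq_or_lt_of_le hz₀mem.2 with h | h
    · exfalso; rw [h] at hlpz₀; rw [hFx₂] at hlpz₀; exact lt_irrefl _ hlpz₀
    · exact h
  have hlocmax : IsLocalMax F z₀ := hz₀max.isLocalMax (Icc_mem_nhds hz₀x₁ hz₀x₂)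
  have hFz₀' : α * deriv u z₀ + β * deriv v z₀ = 0 := by
    have hd := hlocmax.deriv_eq_zero
    rw [(hFd z₀).deriv] at hd
    exact hd
  -- derivative signs at x₁ and x₂
  have hslope₁ : 0 ≤ α * deriv u x₁ + β * deriv v x₁ := by
    have h := hFd x₁
    rw [hasDerivAt_iff_tendsto_slope] at h
    have h2 : Tendsto (slope F x₁) (nhdsWithin x₁ (Set.Ioi x₁))
        (nhds (α * deriv u x₁ + β * deriv v x₁)) :=
      h.mono_left (nhdsWithin_mono _ (fun y hy => ne_of_gt hy))
    refine ge_of_tendsto h2 ?_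
    filter_upwards [Ioo_mem_nhdsGT_of_mem (Set.mem_Ico.mpr ⟨le_rfl, hx₁₂⟩)] with y hy
    rw [slope_def_field]
    apply div_nonneg
    · have hge := hFge y ⟨hy.1.le, hy.2.le⟩
      rw [hFx₁]
      linarith
    · linarith [hy.1]
  have hslope₂ : α * deriv u x₂ + β * deriv v x₂ ≤ 0 := by
    have h := hFd x₂
    rw [hasDerivAt_iff_tendsto_slope] at h
    have h2 : Tendsto (slope F x₂) (nhdsWithin x₂ (Set.Iio x₂))
        (nhds (α * deriv u x₂ + β * deriv v x₂)) :=
      h.mono_left (nhdsWithin_mono _ (fun y hy => ne_of_lt hy))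
    refine le_of_tendsto h2 ?_
    filter_upwards [Ioo_mem_nhdsLT_of_mem (Set.mem_Ioc.mpr ⟨hx₁₂, le_rfl⟩)] with y hy
    rw [slope_def_field]
    apply div_nonpos_of_nonneg_of_nonpos
    · have hge := hFge y ⟨hy.1.le, hy.2.le⟩
      rw [hFx₂]
      linarith
    · linarith [hy.2]
  -- chain of inequalities
  have h1 : H x₁ < H z₀ := hmono ⟨le_rfl, hx₁₂.le⟩ hz₀mem hz₀x₁
  have h2 : H z₀ < H x₂ := hmono hz₀mem ⟨hx₁₂.le, le_rfl⟩ hz₀x₂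
  have e₀ : H z₀ = θ * q z₀ := by
    rw [hHev z₀, hFz₀']
    ring
  have hq₁le : θ * q x₁ ≤ H x₁ := by
    rw [hHev x₁]
    have := mul_nonneg (mul_pos hd₁ hd₂).le hslope₁
    linarith
  have hq₂ge : H x₂ ≤ θ * q x₂ := by
    rw [hHev x₂]
    have := mul_nonpos_of_nonneg_of_nonpos (mul_pos hd₁ hd₂).le hslope₂
    linarith
  have hq₁ : q x₁ ≤ Mx * lp := by
    have h := aux_comb_upper d₁ d₂ Mx α β (u x₁) (v x₁) hd1M hd2M
      (mul_pos hα (hupos x₁)).le (mul_pos hβ (hvpos x₁)).le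
    rw [← hFev x₁, hFx₁] at h
    rw [hqev x₁]
    exact h
  have hq₂ : q x₂ ≤ Mx * lp := by
    have h := aux_comb_upper d₁ d₂ Mx α β (u x₂) (v x₂) hd1M hd2M
      (mul_pos hα (hupos x₂)).le (mul_pos hβ (hvpos x₂)).le
    rw [← hFev x₂, hFx₂] at h
    rw [hqev x₂]
    exact h
  have hqz : Mx * lp < q z₀ := by
    have h3 := aux_comb_lower d₁ d₂ m α β (u z₀) (v z₀) hd1m hd2m
      (mul_pos hα (hupos z₀)).le (mul_pos hβ (hvpos z₀)).le
    rw [← hFev z₀, ← hqev z₀] at h3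
    have h4 : m * F x ≤ m * F z₀ := mul_le_mul_of_nonneg_left hFzx hm.le
    rw [hFev x] at h4
    linarith [hlp2]
  have hθ1 : θ * q x₁ < θ * q z₀ := by rw [← e₀]; linarith
  have hθ2 : θ * q z₀ < θ * q x₂ := by rw [← e₀]; linarith
  have c1 : q x₁ < q z₀ := lt_of_le_of_lt hq₁ hqz
  have c2 : q x₂ < q z₀ := lt_of_le_of_lt hq₂ hqz
  have hp : 0 < θ := by
    by_contra h
    push_neg at h
    have := mul_le_mul_of_nonpos_left c1.le h
    linarith
  have hn : θ < 0 := by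
    by_contra h
    push_neg at h
    have := mul_le_mul_of_nonneg_left c2.le h
    linarith
  linarith
end

section
/- (N-barrier maximum principle for two equations: lower bound.) Let d₁, d₂ > 0 and θ ∈ ℝ. Let ū > u̲ > 0 and v̄ > v̲ > 0, and let R = {(u,v) ∈ ℝ² : u ≥ 0, v ≥ 0, u/u̲ + v/v̲ ≥ 1, u/ū + v/v̄ ≤ 1}. Let f, g be continuous real-valued functions on [0,∞)² satisfying: (i) the zero sets {f = 0} and {g = 0} in the closed first quadrant are contained in R; (ii) there exists δ > 0 such that f(u,v), g(u,v) > 0 whenever 0 < u < δ and 0 < v < δ; (iii) there exists M > 0 such that f(u,v), g(u,v) < 0 whenever u > M and v > M. Suppose u, v : ℝ → ℝ are twice continuously differentiable functions with u(x) > 0 and v(x) > 0 for all x ∈ ℝ, satisfying d₁u''(x) + θu'(x) + u(x) f(u(x),v(x)) = 0 and d₂v''(x) + θv'(x) + v(x) g(u(x),v(x)) = 0 for all x ∈ ℝ, and such that (u(x),v(x)) converges as x → −∞ to a point e₋ and as x → +∞ to a point e₊, where each of e₋ and e₊ is one of: a point (u₁,0) with u₁ > 0 and f(u₁,0) = 0;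 a point (0,v₂) with v₂ > 0 and g(0,v₂) = 0; or a point (u*,v*) with u*, v* > 0 and f(u*,v*) = g(u*,v*) = 0 (in particular, neither e₋ nor e₊ is the extinction state (0,0)). Then for every α, β > 0 and every x ∈ ℝ, α·u(x) + β·v(x) ≥ min(α·u̲, β·v̲) · min(d₁,d₂)/max(d₁,d₂). -/
open Filter

open Set Topology

private lemma cd2_deriv {u : ℝ → ℝ} (hu : ContDiff ℝ 2 u) : Differentiable ℝ (deriv u) := by
  have h : ContDiff ℝ ((1 : WithTop ℕ∞) + 1) u := by exact_mod_cast hu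
  exact (contDiff_succ_iff_deriv.mp h).2.2.differentiable one_ne_zero

private lemma deriv_nonpos_right {φ : ℝ → ℝ} {w z : ℝ} (hφ : DifferentiableAt ℝ φ w)
    (hwz : w < z) (h : ∀ x, w < x → x ≤ z → φ x ≤ φ w) : deriv φ w ≤ 0 := by
  by_contra hc
  push_neg at hc
  have hs : Tendsto (slope φ w) (𝓝[≠] w) (𝓝 (deriv φ w)) :=
    hasDerivAt_iff_tendsto_slope.mp hφ.hasDerivAt
  have hev : ∀ᶠ y in 𝓝[≠] w, 0 < slope φ w y := hs.eventually (eventually_gt_nhds hc)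
  have hev' : ∀ᶠ y in 𝓝[>] w, 0 < slope φ w y :=
    hev.filter_mono (nhdsWithin_mono w fun y hy => ne_of_gt hy)
  have hmem : Set.Ioo w z ∈ 𝓝[>] w := Ioo_mem_nhdsGT_of_mem ⟨le_refl w, hwz⟩
  obtain ⟨y, hy1, hy2⟩ := (hev'.and (eventually_of_mem hmem fun y hy => hy)).exists
  have h3 : φ y ≤ φ w := h y hy2.1 hy2.2.le
  rw [slope_def_field] at hy1
  rcases div_pos_iff.mp hy1 with ⟨h4, _⟩ | ⟨_, h5⟩
  · linarith
  · linarith [hy2.1]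

private lemma deriv_nonneg_left {φ : ℝ → ℝ} {w z : ℝ} (hφ : DifferentiableAt ℝ φ z)
    (hwz : w < z) (h : ∀ x, w ≤ x → x < z → φ x ≤ φ z) : 0 ≤ deriv φ z := by
  by_contra hc
  push_neg at hc
  have hs : Tendsto (slope φ z) (𝓝[≠] z) (𝓝 (deriv φ z)) :=
    hasDerivAt_iff_tendsto_slope.mp hφ.hasDerivAt
  have hev : ∀ᶠ y in 𝓝[≠] z, slope φ z y < 0 := hs.eventually (eventually_lt_nhds hc)
  have hev' : ∀ᶠ y in 𝓝[<] z, slope φ z y < 0 :=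
    hev.filter_mono (nhdsWithin_mono z fun y hy => ne_of_lt hy)
  have hmem : Set.Ioo w z ∈ 𝓝[<] z := Ioo_mem_nhdsLT_of_mem ⟨hwz, le_refl z⟩
  obtain ⟨y, hy1, hy2⟩ := (hev'.and (eventually_of_mem hmem fun y hy => hy)).exists
  have h3 : φ y ≤ φ z := h y hy2.1.le hy2.2
  rw [slope_def_field] at hy1
  rcases div_neg_iff.mp hy1 with ⟨h4, h5⟩ | ⟨h4, h5⟩ <;> linarith [hy2.2, h3]
set_option maxHeartbeats 1000000 in
private lemma key (d₁ d₂ θ α β m : ℝ) (hd₁ : 0 < d₁) (hd₂ : 0 < d₂) (hd : d₁ ≤ d₂)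
    (hθ : θ ≤ 0) (hα : 0 < α) (hβ : 0 < β) (hm : 0 < m)
    (u v a b : ℝ → ℝ) (hu : ContDiff ℝ 2 u) (hv : ContDiff ℝ 2 v)
    (hupos : ∀ x, 0 < u x) (hvpos : ∀ x, 0 < v x)
    (hueq : ∀ x, d₁ * deriv (deriv u) x + θ * deriv u x + a x = 0)
    (hveq : ∀ x, d₂ * deriv (deriv v) x + θ * deriv v x + b x = 0)
    (ha : ∀ x, α * u x + β * v x < m → 0 < a x)
    (hb : ∀ x, α * u x + β * v x < m → 0 < b x)
    (Pb Pt : ℝ × ℝ)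
    (hPb : Tendsto (fun x => (u x, v x)) atBot (𝓝 Pb))
    (hPt : Tendsto (fun x => (u x, v x)) atTop (𝓝 Pt))
    (hPb1 : 0 ≤ Pb.1) (hPb2 : 0 ≤ Pb.2) (hPbm : m ≤ α * Pb.1 + β * Pb.2)
    (hPt1 : 0 ≤ Pt.1) (hPt2 : 0 ≤ Pt.2) (hPtm : m ≤ α * Pt.1 + β * Pt.2) :
    ∀ x, m * (d₁ / d₂) ≤ α * u x + β * v x := by
  by_contra hcon
  push_neg at hcon
  obtain ⟨x₀, hx₀⟩ := hcon
  -- differentiability facts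
  have hu1 : Differentiable ℝ u := hu.differentiable two_ne_zero
  have hv1 : Differentiable ℝ v := hv.differentiable two_ne_zero
  have hud : Differentiable ℝ (deriv u) := cd2_deriv hu
  have hvd : Differentiable ℝ (deriv v) := cd2_deriv hv
  -- the basic functions
  set p : ℝ → ℝ := fun x => α * u x + β * v x with hpdef
  set q : ℝ → ℝ := fun x => α * d₁ * u x + β * d₂ * v x with hqdef
  set D : ℝ → ℝ := fun x => α * d₁ * deriv u x + β * d₂ * deriv v x with hDdef
  set F : ℝ → ℝ := fun x => D x + θ * p x with hFdef
  have hpx : ∀ x, p x = α * u x + β * v x := fun _ => rfl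
  have hqx : ∀ x, q x = α * d₁ * u x + β * d₂ * v x := fun _ => rfl
  have hDx : ∀ x, D x = α * d₁ * deriv u x + β * d₂ * deriv v x := fun _ => rfl
  have hFx : ∀ x, F x = D x + θ * p x := fun _ => rfl
  -- continuity / derivatives
  have hpc : Continuous p := (continuous_const.mul hu1.continuous).add (continuous_const.mul hv1.continuous)
  have hqc : Continuous q := (continuous_const.mul hu1.continuous).add (continuous_const.mul hv1.continuous)
  have hpd : ∀ x, HasDerivAt p (α * deriv u x + β * deriv v x) x := fun x =>
    (((hu1 x).hasDerivAt.const_mul α).add ((hv1 x).hasDerivAt.const_mul β))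
  have hqd : ∀ x, HasDerivAt q (D x) x := fun x =>
    (((hu1 x).hasDerivAt.const_mul (α * d₁)).add ((hv1 x).hasDerivAt.const_mul (β * d₂)))
  have hDd : ∀ x, HasDerivAt D (α * d₁ * deriv (deriv u) x + β * d₂ * deriv (deriv v) x) x :=
    fun x => (((hud x).hasDerivAt.const_mul (α * d₁)).add ((hvd x).hasDerivAt.const_mul (β * d₂)))
  have hFd : ∀ x, HasDerivAt F
      ((α * d₁ * deriv (deriv u) x + β * d₂ * deriv (deriv v) x)
        + θ * (α * deriv u x + β * deriv v x)) x :=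
    fun x => (hDd x).add ((hpd x).const_mul θ)
  -- limits
  have htub : Tendsto u atBot (𝓝 Pb.1) := (continuous_fst.tendsto Pb).comp hPb
  have htvb : Tendsto v atBot (𝓝 Pb.2) := (continuous_snd.tendsto Pb).comp hPb
  have htut : Tendsto u atTop (𝓝 Pt.1) := (continuous_fst.tendsto Pt).comp hPt
  have htvt : Tendsto v atTop (𝓝 Pt.2) := (continuous_snd.tendsto Pt).comp hPt
  have hpb : Tendsto p atBot (𝓝 (α * Pb.1 + β * Pb.2)) := (htub.const_mul α).add (htvb.const_mul β)
  have hpt : Tendsto p atTop (𝓝 (α * Pt.1 + β * Pt.2)) := (htut.const_mul α).add (htvt.const_mul β)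
  have hqb : Tendsto q atBot (𝓝 (α * d₁ * Pb.1 + β * d₂ * Pb.2)) :=
    (htub.const_mul (α * d₁)).add (htvb.const_mul (β * d₂))
  have hqt : Tendsto q atTop (𝓝 (α * d₁ * Pt.1 + β * d₂ * Pt.2)) :=
    (htut.const_mul (α * d₁)).add (htvt.const_mul (β * d₂))
  clear_value p q D F
  have hx₀' : p x₀ < m * (d₁ / d₂) := by rw [hpx]; exact hx₀
  have hlam_le : m * (d₁ / d₂) ≤ m := by
    have h1 : d₁ / d₂ ≤ 1 := (div_le_one hd₂).mpr hd
    nlinarith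
  have hx₀m : p x₀ < m := lt_of_lt_of_le hx₀' hlam_le
  have hqlow : ∀ x, d₁ * p x ≤ q x := by
    intro x
    have hv0 := (hvpos x).le
    rw [hpx, hqx]
    nlinarith [mul_nonneg (mul_nonneg (sub_nonneg.mpr hd) hβ.le) hv0]
  have hqhigh : ∀ x, q x ≤ d₂ * p x := by
    intro x
    have hu0 := (hupos x).le
    rw [hpx, hqx]
    nlinarith [mul_nonneg (mul_nonneg (sub_nonneg.mpr hd) hα.le) hu0]
  have hQbm : d₁ * m ≤ α * d₁ * Pb.1 + β * d₂ * Pb.2 := by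
    nlinarith [mul_le_mul_of_nonneg_left hPbm hd₁.le,
      mul_nonneg (mul_nonneg (sub_nonneg.mpr hd) hβ.le) hPb2]
  have hQtm : d₁ * m ≤ α * d₁ * Pt.1 + β * d₂ * Pt.2 := by
    nlinarith [mul_le_mul_of_nonneg_left hPtm hd₁.le,
      mul_nonneg (mul_nonneg (sub_nonneg.mpr hd) hβ.le) hPt2]
  -- global minimum of p exists
  have hminex : ∃ z₀, ∀ y, p z₀ ≤ p y := by
    have h1 : p x₀ < α * Pb.1 + β * Pb.2 := lt_of_lt_of_le hx₀m hPbm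
    have h2 : p x₀ < α * Pt.1 + β * Pt.2 := lt_of_lt_of_le hx₀m hPtm
    obtain ⟨N₁, hN₁⟩ := eventually_atBot.mp (hpb.eventually (eventually_gt_nhds h1))
    obtain ⟨N₂, hN₂⟩ := eventually_atTop.mp (hpt.eventually (eventually_gt_nhds h2))
    have hne : (Icc (min N₁ x₀) (max N₂ x₀)).Nonempty :=
      ⟨x₀, min_le_right _ _, le_max_right _ _⟩
    obtain ⟨z₀, hz₀mem, hz₀min⟩ := isCompact_Icc.exists_isMinOn hne hpc.continuousOn
    refine ⟨z₀, fun y => ?_⟩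
    by_cases hy : y ∈ Icc (min N₁ x₀) (max N₂ x₀)
    · exact hz₀min hy
    · have hx₀mem : x₀ ∈ Icc (min N₁ x₀) (max N₂ x₀) := ⟨min_le_right _ _, le_max_right _ _⟩
      have h3 : p x₀ < p y := by
        rcases lt_or_ge y (min N₁ x₀) with h | h
        · exact hN₁ y (le_trans h.le (min_le_left _ _))
        · have h' : max N₂ x₀ < y := by
            by_contra h2
            push_neg at h2
            exact hy ⟨h, h2⟩
          exact hN₂ y (le_trans (le_max_left _ _) h'.le)
      exact le_of_lt (lt_of_le_of_lt (hz₀min hx₀mem) h3)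
  obtain ⟨z₀, hz₀⟩ := hminex
  have hz₀lam : p z₀ < m * (d₁ / d₂) := lt_of_le_of_lt (hz₀ x₀) hx₀'
  -- derivative of F negative where p < m
  have hFneg : ∀ x, p x < m → deriv F x < 0 := by
    intro x hx
    rw [hpx] at hx
    rw [(hFd x).deriv]
    have h3 : α * d₁ * deriv (deriv u) x + α * θ * deriv u x + α * a x = 0 := by
      linear_combination α * hueq x
    have h4 : β * d₂ * deriv (deriv v) x + β * θ * deriv v x + β * b x = 0 := by
      linear_combination β * hveq x
    have h5 : 0 < α * a x := mul_pos hα (ha x hx)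
    have h6 : 0 < β * b x := mul_pos hβ (hb x hx)
    nlinarith [h3, h4, h5, h6]
  -- strict decrease of F on intervals where p < m
  have hanti : ∀ w z : ℝ, w < z → (∀ x, w < x → x < z → p x < m) → F z < F w := by
    intro w z hwz hpm
    have hcont : ContinuousOn F (Icc w z) :=
      (Differentiable.continuous fun x => (hFd x).differentiableAt).continuousOn
    have hSA : StrictAntiOn F (Icc w z) := by
      apply strictAntiOn_of_deriv_neg (convex_Icc w z) hcont
      intro x hx
      rw [interior_Icc] at hx
      exact hFneg x (hpm x hx.1 hx.2)
    exact hSA (left_mem_Icc.mpr hwz.le) (right_mem_Icc.mpr hwz.le) hwz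
  -- a generic bound : q z < d₁ * m whenever p z < m * (d₁/d₂)
  have hqsmall : ∀ z, p z < m * (d₁ / d₂) → q z < d₁ * m := by
    intro z hz
    have h1 := hqhigh z
    have h2 : d₂ * p z < d₂ * (m * (d₁ / d₂)) := mul_lt_mul_of_pos_left hz hd₂
    have h3 : d₂ * (m * (d₁ / d₂)) = d₁ * m := by field_simp
    linarith
  by_cases hex : ∃ z, (∀ y, p z ≤ p y) ∧ 0 ≤ D z
  · -- good case: some global minimum point with D ≥ 0
    obtain ⟨z, hzmin, hDz⟩ := hex
    have hpz : p z < m * (d₁ / d₂) := lt_of_le_of_lt (hzmin x₀) hx₀'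
    have hqz : q z < d₁ * m := hqsmall z hpz
    obtain ⟨c, hc1, hc2⟩ : ∃ c, q z < c ∧ c < d₁ * m := ⟨(q z + d₁ * m) / 2, by linarith, by linarith⟩
    have hclim : c < α * d₁ * Pb.1 + β * d₂ * Pb.2 := lt_of_lt_of_le hc2 hQbm
    obtain ⟨M₁, hM₁⟩ := eventually_atBot.mp (hqb.eventually (eventually_gt_nhds hclim))
    obtain ⟨z₁, hz₁le, hqz₁, hbet⟩ :
        ∃ z₁, z₁ ≤ z ∧ c ≤ q z₁ ∧ (∀ x, z₁ < x → x ≤ z → q x < c) := by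
      have hSne : (Iic z ∩ q ⁻¹' (Ici c)).Nonempty :=
        ⟨min M₁ z, Set.mem_Iic.mpr (min_le_right _ _),
          Set.mem_Ici.mpr (le_of_lt (hM₁ _ (min_le_left _ _)))⟩
      have hSbd : BddAbove (Iic z ∩ q ⁻¹' (Ici c)) := ⟨z, fun x hx => hx.1⟩
      have hScl : IsClosed (Iic z ∩ q ⁻¹' (Ici c)) := isClosed_Iic.inter (isClosed_Ici.preimage hqc)
      have hmem := hScl.csSup_mem hSne hSbd
      refine ⟨sSup _, hmem.1, hmem.2, fun x h1 h2 => ?_⟩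
      by_contra h3
      push_neg at h3
      exact absurd (le_csSup hSbd ⟨Set.mem_Iic.mpr h2, Set.mem_Ici.mpr h3⟩) (not_le.mpr h1)
    have hz₁lt : z₁ < z := lt_of_le_of_ne hz₁le (by intro h; rw [h] at hqz₁; linarith)
    have hDz₁ : D z₁ ≤ 0 := by
      have h0 := deriv_nonpos_right (hqd z₁).differentiableAt hz₁lt
        (fun x h1 h2 => le_trans (le_of_lt (hbet x h1 h2)) hqz₁)
      rwa [(hqd z₁).deriv] at h0
    have hpm : ∀ x, z₁ < x → x < z → p x < m := by
      intro x h1 h2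
      have h3 := hbet x h1 h2.le
      have h4 := hqlow x
      have h5 : d₁ * p x < d₁ * m := by linarith
      exact lt_of_mul_lt_mul_left h5 hd₁.le
    have hF := hanti z₁ z hz₁lt hpm
    rw [hFx, hFx] at hF
    have hθp : θ * p z₁ ≤ θ * p z := mul_le_mul_of_nonpos_left (hzmin z₁) hθ
    linarith
  · -- bad case
    push_neg at hex
    have hDz₀ : D z₀ < 0 := hex z₀ hz₀
    have hlocmin : IsLocalMin p z₀ := Filter.Eventually.of_forall hz₀
    have hpz₀' : α * deriv u z₀ + β * deriv v z₀ = 0 := by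
      have h1 := hlocmin.deriv_eq_zero
      rw [(hpd z₀).deriv] at h1
      exact h1
    have hDval : D z₀ = (d₂ - d₁) * (β * deriv v z₀) := by
      rw [hDx]
      linear_combination d₁ * hpz₀'
    have hbv : β * deriv v z₀ < 0 := by
      rcases lt_trichotomy (β * deriv v z₀) 0 with h | h | h
      · exact h
      · exfalso; rw [hDval, h, mul_zero] at hDz₀; linarith
      · exfalso
        have := mul_nonneg (sub_nonneg.mpr hd) h.le
        rw [hDval] at hDz₀; linarith
    have hau : 0 < deriv u z₀ := by
      have h1 : 0 < α * deriv u z₀ := by linarith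
      by_contra h2
      push_neg at h2
      nlinarith [mul_nonpos_of_nonneg_of_nonpos hα.le h2]
    have hqz₀ : q z₀ < d₁ * m := hqsmall z₀ hz₀lam
    obtain ⟨c, hc1, hc2⟩ : ∃ c, q z₀ < c ∧ c < d₁ * m :=
      ⟨(q z₀ + d₁ * m) / 2, by linarith, by linarith⟩
    -- find z₃ : first crossing of level c to the right of z₀
    have hclimt : c < α * d₁ * Pt.1 + β * d₂ * Pt.2 := lt_of_lt_of_le hc2 hQtm
    obtain ⟨M₂, hM₂⟩ := eventually_atTop.mp (hqt.eventually (eventually_gt_nhds hclimt))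
    obtain ⟨z₃, hz₃ge, hqz₃, hbet₃⟩ :
        ∃ z₃, z₀ ≤ z₃ ∧ c ≤ q z₃ ∧ (∀ x, z₀ ≤ x → x < z₃ → q x < c) := by
      have hS₃bd : BddBelow (Ici z₀ ∩ q ⁻¹' (Ici c)) := ⟨z₀, fun x hx => hx.1⟩
      have hS₃ne : (Ici z₀ ∩ q ⁻¹' (Ici c)).Nonempty :=
        ⟨max M₂ z₀, Set.mem_Ici.mpr (le_max_right _ _),
          Set.mem_Ici.mpr (le_of_lt (hM₂ _ (le_max_left _ _)))⟩
      have hS₃cl : IsClosed (Ici z₀ ∩ q ⁻¹' (Ici c)) := isClosed_Ici.inter (isClosed_Ici.preimage hqc)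
      have hmem := hS₃cl.csInf_mem hS₃ne hS₃bd
      refine ⟨sInf _, hmem.1, hmem.2, fun x h1 h2 => ?_⟩
      by_contra h3
      push_neg at h3
      exact absurd (csInf_le hS₃bd ⟨Set.mem_Ici.mpr h1, Set.mem_Ici.mpr h3⟩) (not_le.mpr h2)
    have hz₀₃ : z₀ < z₃ := lt_of_le_of_ne hz₃ge (by intro h; rw [← h] at hqz₃; linarith)
    have hDz₃ : 0 ≤ D z₃ := by
      have h0 := deriv_nonneg_left (hqd z₃).differentiableAt hz₀₃
        (fun x h1 h2 => le_trans (le_of_lt (hbet₃ x h1 h2)) hqz₃)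
      rwa [(hqd z₃).deriv] at h0
    have hq₃c : q z₃ ≤ c := by
      have hcw : Tendsto q (𝓝[Iio z₃] z₃) (𝓝 (q z₃)) :=
        (hqc.continuousWithinAt : ContinuousWithinAt q (Iio z₃) z₃)
      refine le_of_tendsto hcw ?_
      filter_upwards [Ioo_mem_nhdsLT_of_mem (⟨hz₀₃, le_refl z₃⟩ : z₃ ∈ Ioc z₀ z₃)] with x hx
      exact (hbet₃ x hx.1.le hx.2).le
    have hρm : p z₃ < m := by
      have h1 := hqlow z₃
      have h2 : d₁ * p z₃ < d₁ * m := by linarith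
      exact lt_of_mul_lt_mul_left h2 hd₁.le
    have hρ₀ : p z₀ < p z₃ := by
      by_contra h
      push_neg at h
      have hz₃min : ∀ y, p z₃ ≤ p y := fun y => le_trans h (hz₀ y)
      exact absurd hDz₃ (not_le.mpr (hex z₃ hz₃min))
    -- find w : last time p ≥ p z₃ before z₀
    have hρlim : p z₃ < α * Pb.1 + β * Pb.2 := lt_of_lt_of_le hρm hPbm
    obtain ⟨M₃, hM₃⟩ := eventually_atBot.mp (hpb.eventually (eventually_gt_nhds hρlim))
    obtain ⟨w, hwz₀le, hpw, hbetw⟩ :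
        ∃ w, w ≤ z₀ ∧ p z₃ ≤ p w ∧ (∀ x, w < x → x ≤ z₀ → p x < p z₃) := by
      have hTbd : BddAbove (Iic z₀ ∩ p ⁻¹' (Ici (p z₃))) := ⟨z₀, fun x hx => hx.1⟩
      have hTne : (Iic z₀ ∩ p ⁻¹' (Ici (p z₃))).Nonempty :=
        ⟨min M₃ z₀, Set.mem_Iic.mpr (min_le_right _ _),
          Set.mem_Ici.mpr (hM₃ _ (min_le_left _ _)).le⟩
      have hTcl : IsClosed (Iic z₀ ∩ p ⁻¹' (Ici (p z₃))) :=
        isClosed_Iic.inter (isClosed_Ici.preimage hpc)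
      have hmem := hTcl.csSup_mem hTne hTbd
      refine ⟨sSup _, hmem.1, hmem.2, fun x h1 h2 => ?_⟩
      by_contra h3
      push_neg at h3
      exact absurd (le_csSup hTbd ⟨Set.mem_Iic.mpr h2, Set.mem_Ici.mpr h3⟩) (not_le.mpr h1)
    have hwlt : w < z₀ := lt_of_le_of_ne hwz₀le (by intro h; rw [h] at hpw; linarith)
    have hp'w : α * deriv u w + β * deriv v w ≤ 0 := by
      have h0 := deriv_nonpos_right (hpd w).differentiableAt hwlt
        (fun x h1 h2 => le_trans (le_of_lt (hbetw x h1 h2)) hpw)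
      rwa [(hpd w).deriv] at h0
    -- exponential-weighted derivative of u is strictly decreasing on [w, z₀]
    have hWd : ∀ x, HasDerivAt (fun y => Real.exp (θ * y / d₁) * deriv u y)
        (Real.exp (θ * x / d₁) * (θ / d₁) * deriv u x
          + Real.exp (θ * x / d₁) * deriv (deriv u) x) x := by
      intro x
      have h1 : HasDerivAt (fun y : ℝ => θ * y / d₁) (θ / d₁) x := by
        simpa using (((hasDerivAt_id x).const_mul θ).div_const d₁)
      have h2 : HasDerivAt (fun y : ℝ => Real.exp (θ * y / d₁))
          (Real.exp (θ * x / d₁) * (θ / d₁)) x := h1.exp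
      exact h2.mul ((hud x).hasDerivAt)
    have hWanti : StrictAntiOn (fun y => Real.exp (θ * y / d₁) * deriv u y) (Icc w z₀) := by
      apply strictAntiOn_of_deriv_neg (convex_Icc _ _)
      · exact (Differentiable.continuous fun x => (hWd x).differentiableAt).continuousOn
      · intro x hx
        rw [interior_Icc] at hx
        rw [(hWd x).deriv]
        have hpxm : p x < m := lt_trans (hbetw x hx.1 hx.2.le) hρm
        rw [hpx] at hpxm
        have hax : 0 < a x := ha x hpxm
        have heq2 : d₁ * deriv (deriv u) x + θ * deriv u x = -a x := by linarith [hueq x]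
        have hE : 0 < Real.exp (θ * x / d₁) := Real.exp_pos _
        have hrw : Real.exp (θ * x / d₁) * (θ / d₁) * deriv u x
            + Real.exp (θ * x / d₁) * deriv (deriv u) x
            = (Real.exp (θ * x / d₁) / d₁) * (d₁ * deriv (deriv u) x + θ * deriv u x) := by
          field_simp
          ring
        rw [hrw, heq2]
        exact mul_neg_of_pos_of_neg (div_pos hE hd₁) (by linarith)
    have hWw : 0 < deriv u w := by
      have h1 := hWanti (left_mem_Icc.mpr hwlt.le) (right_mem_Icc.mpr hwlt.le) hwlt
      have h2 : 0 < Real.exp (θ * z₀ / d₁) * deriv u z₀ := mul_pos (Real.exp_pos _) hau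
      have h3 : 0 < Real.exp (θ * w / d₁) * deriv u w := by
        simp only [] at h1
        linarith
      by_contra h4
      push_neg at h4
      nlinarith [mul_nonpos_of_nonneg_of_nonpos (Real.exp_pos (θ * w / d₁)).le h4]
    have hDw : D w ≤ 0 := by
      have h1 : β * deriv v w ≤ 0 := by nlinarith [mul_pos hα hWw]
      have h2 : D w = d₁ * (α * deriv u w + β * deriv v w) + (d₂ - d₁) * (β * deriv v w) := by
        rw [hDx]; ring
      nlinarith [mul_nonpos_of_nonneg_of_nonpos hd₁.le hp'w,
        mul_nonpos_of_nonneg_of_nonpos (sub_nonneg.mpr hd) h1]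
    have hpm₂ : ∀ x, w < x → x < z₃ → p x < m := by
      intro x h1 h2
      rcases le_or_gt x z₀ with h3 | h3
      · exact lt_trans (hbetw x h1 h3) hρm
      · have h4 := hbet₃ x h3.le h2
        have h5 := hqlow x
        have h6 : d₁ * p x < d₁ * m := by linarith
        exact lt_of_mul_lt_mul_left h6 hd₁.le
    have hF := hanti w z₃ (lt_trans hwlt hz₀₃) hpm₂
    rw [hFx, hFx] at hF
    have hθw : θ * p w ≤ θ * p z₃ := mul_le_mul_of_nonpos_left hpw hθ
    linarith
private lemma keyBoth (d₁ d₂ θ α β m : ℝ) (hd₁ : 0 < d₁) (hd₂ : 0 < d₂)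
    (hθ : θ ≤ 0) (hα : 0 < α) (hβ : 0 < β) (hm : 0 < m)
    (u v a b : ℝ → ℝ) (hu : ContDiff ℝ 2 u) (hv : ContDiff ℝ 2 v)
    (hupos : ∀ x, 0 < u x) (hvpos : ∀ x, 0 < v x)
    (hueq : ∀ x, d₁ * deriv (deriv u) x + θ * deriv u x + a x = 0)
    (hveq : ∀ x, d₂ * deriv (deriv v) x + θ * deriv v x + b x = 0)
    (ha : ∀ x, α * u x + β * v x < m → 0 < a x)
    (hb : ∀ x, α * u x + β * v x < m → 0 < b x)
    (Pb Pt : ℝ × ℝ)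
    (hPb : Tendsto (fun x => (u x, v x)) atBot (𝓝 Pb))
    (hPt : Tendsto (fun x => (u x, v x)) atTop (𝓝 Pt))
    (hPb1 : 0 ≤ Pb.1) (hPb2 : 0 ≤ Pb.2) (hPbm : m ≤ α * Pb.1 + β * Pb.2)
    (hPt1 : 0 ≤ Pt.1) (hPt2 : 0 ≤ Pt.2) (hPtm : m ≤ α * Pt.1 + β * Pt.2) :
    ∀ x, m * (min d₁ d₂ / max d₁ d₂) ≤ α * u x + β * v x := by
  rcases le_total d₁ d₂ with h | h
  · have hk := key d₁ d₂ θ α β m hd₁ hd₂ h hθ hα hβ hm u v a b hu hv hupos hvpos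
      hueq hveq ha hb Pb Pt hPb hPt hPb1 hPb2 hPbm hPt1 hPt2 hPtm
    intro x
    rw [min_eq_left h, max_eq_right h]
    exact hk x
  · have htub : Tendsto u atBot (𝓝 Pb.1) := (continuous_fst.tendsto Pb).comp hPb
    have htvb : Tendsto v atBot (𝓝 Pb.2) := (continuous_snd.tendsto Pb).comp hPb
    have htut : Tendsto u atTop (𝓝 Pt.1) := (continuous_fst.tendsto Pt).comp hPt
    have htvt : Tendsto v atTop (𝓝 Pt.2) := (continuous_snd.tendsto Pt).comp hPt
    have hk := key d₂ d₁ θ β α m hd₂ hd₁ h hθ hβ hα hm v u b a hv hu hvpos hupos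
      hveq hueq (fun x hx => hb x (by linarith)) (fun x hx => ha x (by linarith))
      (Pb.2, Pb.1) (Pt.2, Pt.1) (htvb.prodMk_nhds htub) (htvt.prodMk_nhds htut)
      hPb2 hPb1 (by dsimp only; linarith) hPt2 hPt1 (by dsimp only; linarith)
    intro x
    rw [min_eq_right h, max_eq_left h]
    have := hk x
    linarith
set_option maxHeartbeats 1000000 in
/-- N-barrier maximum principle for two equations, lower bound. -/
theorem NBMP_two_equations_lower_bound
    (d₁ d₂ θ : ℝ) (hd₁ : 0 < d₁) (hd₂ : 0 < d₂)
    (ubar ulow vbar vlow : ℝ)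
    (hulow : 0 < ulow) (huu : ulow < ubar)
    (hvlow : 0 < vlow) (hvv : vlow < vbar)
    (R : Set (ℝ × ℝ))
    (hR : R = {p : ℝ × ℝ | 0 ≤ p.1 ∧ 0 ≤ p.2 ∧
      1 ≤ p.1 / ulow + p.2 / vlow ∧ p.1 / ubar + p.2 / vbar ≤ 1})
    (f g : ℝ → ℝ → ℝ)
    (hfc : ContinuousOn (fun p : ℝ × ℝ => f p.1 p.2) {p | 0 ≤ p.1 ∧ 0 ≤ p.2})
    (hgc : ContinuousOn (fun p : ℝ × ℝ => g p.1 p.2) {p | 0 ≤ p.1 ∧ 0 ≤ p.2})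
    (hCf : {p : ℝ × ℝ | 0 ≤ p.1 ∧ 0 ≤ p.2 ∧ f p.1 p.2 = 0} ⊆ R)
    (hCg : {p : ℝ × ℝ | 0 ≤ p.1 ∧ 0 ≤ p.2 ∧ g p.1 p.2 = 0} ⊆ R)
    (hsmall : ∃ δ > 0, ∀ u v : ℝ, 0 < u → u < δ → 0 < v → v < δ →
      0 < f u v ∧ 0 < g u v)
    (hlarge : ∃ M > 0, ∀ u v : ℝ, M < u → M < v →
      f u v < 0 ∧ g u v < 0)
    (u v : ℝ → ℝ)
    (hu : ContDiff ℝ 2 u) (hv : ContDiff ℝ 2 v)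
    (hupos : ∀ x, 0 < u x) (hvpos : ∀ x, 0 < v x)
    (hueq : ∀ x, d₁ * deriv (deriv u) x + θ * deriv u x + u x * f (u x) (v x) = 0)
    (hveq : ∀ x, d₂ * deriv (deriv v) x + θ * deriv v x + v x * g (u x) (v x) = 0)
    (eminus eplus : ℝ × ℝ)
    (hlimminus : Tendsto (fun x => (u x, v x)) atBot (nhds eminus))
    (hlimplus : Tendsto (fun x => (u x, v x)) atTop (nhds eplus))
    (heminus : (∃ u₁ : ℝ, 0 < u₁ ∧ f u₁ 0 = 0 ∧ eminus = (u₁, 0)) ∨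
      (∃ v₂ : ℝ, 0 < v₂ ∧ g 0 v₂ = 0 ∧ eminus = (0, v₂)) ∨
      (∃ us vs : ℝ, 0 < us ∧ 0 < vs ∧ f us vs = 0 ∧ g us vs = 0 ∧ eminus = (us, vs)))
    (heplus : (∃ u₁ : ℝ, 0 < u₁ ∧ f u₁ 0 = 0 ∧ eplus = (u₁, 0)) ∨
      (∃ v₂ : ℝ, 0 < v₂ ∧ g 0 v₂ = 0 ∧ eplus = (0, v₂)) ∨
      (∃ us vs : ℝ, 0 < us ∧ 0 < vs ∧ f us vs = 0 ∧ g us vs = 0 ∧ eplus = (us, vs)))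
    (α β : ℝ) (hα : 0 < α) (hβ : 0 < β) (x : ℝ) :
    min (α * ulow) (β * vlow) * (min d₁ d₂ / max d₁ d₂) ≤ α * u x + β * v x := by
  set m : ℝ := min (α * ulow) (β * vlow) with hmdef
  have hm : 0 < m := lt_min (mul_pos hα hulow) (mul_pos hβ hvlow)
  have hmu : m ≤ α * ulow := min_le_left _ _
  have hmv : m ≤ β * vlow := min_le_right _ _
  -- lower line bound
  have hRlow : ∀ X Y : ℝ, 0 ≤ X → 0 ≤ Y → 1 ≤ X / ulow + Y / vlow → m ≤ α * X + β * Y := by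
    intro X Y hX hY hline
    have h1 : m * (X / ulow) ≤ α * X := by
      have h2 : m * (X / ulow) ≤ (α * ulow) * (X / ulow) :=
        mul_le_mul_of_nonneg_right hmu (div_nonneg hX hulow.le)
      have h3 : (α * ulow) * (X / ulow) = α * X := by field_simp
      linarith
    have h4 : m * (Y / vlow) ≤ β * Y := by
      have h2 : m * (Y / vlow) ≤ (β * vlow) * (Y / vlow) :=
        mul_le_mul_of_nonneg_right hmv (div_nonneg hY hvlow.le)
      have h3 : (β * vlow) * (Y / vlow) = β * Y := by field_simp
      linarith
    have h5 : m * 1 ≤ m * (X / ulow + Y / vlow) := mul_le_mul_of_nonneg_left hline hm.le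
    nlinarith
  -- points of R satisfy the bound
  have hRpt : ∀ P : ℝ × ℝ, P ∈ R → 0 ≤ P.1 ∧ 0 ≤ P.2 ∧ m ≤ α * P.1 + β * P.2 := by
    intro P hP
    rw [hR] at hP
    obtain ⟨h1, h2, h3, _⟩ := hP
    exact ⟨h1, h2, hRlow P.1 P.2 h1 h2 h3⟩
  -- positivity of f and g strictly below the lower line
  have hsign : ∀ (F : ℝ → ℝ → ℝ),
      ContinuousOn (fun p : ℝ × ℝ => F p.1 p.2) {p | 0 ≤ p.1 ∧ 0 ≤ p.2} →
      ({p : ℝ × ℝ | 0 ≤ p.1 ∧ 0 ≤ p.2 ∧ F p.1 p.2 = 0} ⊆ R) →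
      (∃ δ > 0, ∀ A B : ℝ, 0 < A → A < δ → 0 < B → B < δ → 0 < F A B) →
      ∀ A B : ℝ, 0 < A → 0 < B → α * A + β * B < m → 0 < F A B := by
    intro F hFc hCF hsm A B hA hB hAB
    obtain ⟨δ, hδ, hsm⟩ := hsm
    have hαβ : 0 < α + β := by linarith
    obtain ⟨s, hs0, hsδ, hssm⟩ : ∃ s, 0 < s ∧ s < δ ∧ α * s + β * s < m := by
      refine ⟨min (δ / 2) (m / (2 * (α + β))), lt_min (by linarith) (by positivity),
        lt_of_le_of_lt (min_le_left _ _) (by linarith), ?_⟩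
      have h1 : min (δ / 2) (m / (2 * (α + β))) ≤ m / (2 * (α + β)) := min_le_right _ _
      have h2 : (α + β) * min (δ / 2) (m / (2 * (α + β))) ≤ (α + β) * (m / (2 * (α + β))) :=
        mul_le_mul_of_nonneg_left h1 hαβ.le
      have h3 : (α + β) * (m / (2 * (α + β))) = m / 2 := by field_simp
      nlinarith
    have hfss : 0 < F s s := hsm s s hs0 hsδ hs0 hsδ
    by_contra hle
    push_neg at hle
    -- path from (s,s) to (A,B)
    have hγc : Continuous (fun t : ℝ => ((1 - t) * s + t * A, (1 - t) * s + t * B)) := by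
      apply Continuous.prodMk <;> exact
        (((continuous_const.sub continuous_id).mul continuous_const).add
          (continuous_id.mul continuous_const))
    have hγmem : ∀ t ∈ Set.Icc (0:ℝ) 1,
        0 < (1 - t) * s + t * A ∧ 0 < (1 - t) * s + t * B ∧
          α * ((1 - t) * s + t * A) + β * ((1 - t) * s + t * B) < m := by
      intro t ht
      obtain ⟨h0, h1⟩ := ht
      have hsA : 0 < min s A := lt_min hs0 hA
      have hsB : 0 < min s B := lt_min hs0 hB
      refine ⟨?_, ?_, ?_⟩
      · have e1 : (1 - t) * min s A ≤ (1 - t) * s :=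
          mul_le_mul_of_nonneg_left (min_le_left s A) (by linarith)
        have e2 : t * min s A ≤ t * A := mul_le_mul_of_nonneg_left (min_le_right s A) h0
        nlinarith
      · have e1 : (1 - t) * min s B ≤ (1 - t) * s :=
          mul_le_mul_of_nonneg_left (min_le_left s B) (by linarith)
        have e2 : t * min s B ≤ t * B := mul_le_mul_of_nonneg_left (min_le_right s B) h0
        nlinarith
      · rcases eq_or_lt_of_le h0 with h2 | h2
        · rw [← h2]; ring_nf; linarith [hssm]
        · have e1 : (1 - t) * (α * s + β * s) ≤ (1 - t) * m :=
            mul_le_mul_of_nonneg_left hssm.le (by linarith)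
          have e2 : t * (α * A + β * B) < t * m := mul_lt_mul_of_pos_left hAB h2
          nlinarith
    have hφc : ContinuousOn
        (fun t : ℝ => F ((1 - t) * s + t * A) ((1 - t) * s + t * B)) (Set.Icc 0 1) := by
      have hmap : Set.MapsTo (fun t : ℝ => ((1 - t) * s + t * A, (1 - t) * s + t * B))
          (Set.Icc (0:ℝ) 1) {p : ℝ × ℝ | 0 ≤ p.1 ∧ 0 ≤ p.2} := by
        intro t ht
        exact ⟨(hγmem t ht).1.le, (hγmem t ht).2.1.le⟩
      exact hFc.comp hγc.continuousOn hmap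
    have hIVT := intermediate_value_Icc' (zero_le_one) hφc
    have h0mem : (0:ℝ) ∈ Set.Icc (F ((1 - 1) * s + 1 * A) ((1 - 1) * s + 1 * B))
        (F ((1 - 0) * s + 0 * A) ((1 - 0) * s + 0 * B)) := by
      constructor
      · norm_num
        exact hle
      · norm_num
        exact hfss.le
    obtain ⟨t, ht, hft⟩ := hIVT h0mem
    have hmem := hγmem t ht
    have hRmem : ((1 - t) * s + t * A, (1 - t) * s + t * B) ∈ R :=
      hCF ⟨hmem.1.le, hmem.2.1.le, hft⟩
    have hfin := hRpt _ hRmem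
    have := hfin.2.2
    dsimp only at this
    linarith [hmem.2.2]
  have hfpos := hsign f hfc hCf
    (by obtain ⟨δ, hδ, hs⟩ := hsmall; exact ⟨δ, hδ, fun A B h1 h2 h3 h4 => (hs A B h1 h2 h3 h4).1⟩)
  have hgpos := hsign g hgc hCg
    (by obtain ⟨δ, hδ, hs⟩ := hsmall; exact ⟨δ, hδ, fun A B h1 h2 h3 h4 => (hs A B h1 h2 h3 h4).2⟩)
  -- boundary states lie in R
  have hEb : 0 ≤ eminus.1 ∧ 0 ≤ eminus.2 ∧ m ≤ α * eminus.1 + β * eminus.2 := by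
    rcases heminus with ⟨u₁, h1, h2, h3⟩ | ⟨v₂, h1, h2, h3⟩ | ⟨us, vs, h1, h2, h3, h4, h5⟩
    · rw [h3]; exact hRpt (u₁, 0) (hCf ⟨h1.le, le_refl 0, h2⟩)
    · rw [h3]; exact hRpt (0, v₂) (hCg ⟨le_refl 0, h1.le, h2⟩)
    · rw [h5]; exact hRpt (us, vs) (hCf ⟨h1.le, h2.le, h3⟩)
  have hEt : 0 ≤ eplus.1 ∧ 0 ≤ eplus.2 ∧ m ≤ α * eplus.1 + β * eplus.2 := by
    rcases heplus with ⟨u₁, h1, h2, h3⟩ | ⟨v₂, h1, h2, h3⟩ | ⟨us, vs, h1, h2, h3, h4, h5⟩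
    · rw [h3]; exact hRpt (u₁, 0) (hCf ⟨h1.le, le_refl 0, h2⟩)
    · rw [h3]; exact hRpt (0, v₂) (hCg ⟨le_refl 0, h1.le, h2⟩)
    · rw [h5]; exact hRpt (us, vs) (hCf ⟨h1.le, h2.le, h3⟩)
  have ha : ∀ y, α * u y + β * v y < m → 0 < u y * f (u y) (v y) :=
    fun y hy => mul_pos (hupos y) (hfpos (u y) (v y) (hupos y) (hvpos y) hy)
  have hb : ∀ y, α * u y + β * v y < m → 0 < v y * g (u y) (v y) :=
    fun y hy => mul_pos (hvpos y) (hgpos (u y) (v y) (hupos y) (hvpos y) hy)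
  rcases le_total θ 0 with hθ | hθ
  · exact keyBoth d₁ d₂ θ α β m hd₁ hd₂ hθ hα hβ hm u v
      (fun y => u y * f (u y) (v y)) (fun y => v y * g (u y) (v y)) hu hv hupos hvpos
      hueq hveq ha hb eminus eplus hlimminus hlimplus
      hEb.1 hEb.2.1 hEb.2.2 hEt.1 hEt.2.1 hEt.2.2 x
  · -- reflect
    have hu1 : Differentiable ℝ u := hu.differentiable two_ne_zero
    have hv1 : Differentiable ℝ v := hv.differentiable two_ne_zero
    have hud : Differentiable ℝ (deriv u) := cd2_deriv hu
    have hvd : Differentiable ℝ (deriv v) := cd2_deriv hv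
    have hnegC : ContDiff ℝ 2 (fun y : ℝ => -y) := (contDiff_id (𝕜 := ℝ)).neg
    have hruC : ContDiff ℝ 2 (fun y => u (-y)) := hu.comp hnegC
    have hrvC : ContDiff ℝ 2 (fun y => v (-y)) := hv.comp hnegC
    have hruD : ∀ (w : ℝ → ℝ), Differentiable ℝ w →
        (deriv (fun y => w (-y)) = fun y => -(deriv w (-y))) := by
      intro w hw
      funext y
      have h := ((hw (-y)).hasDerivAt).comp y (hasDerivAt_neg y)
      simpa [Function.comp_def] using h.deriv
    have hruD2 : ∀ (w : ℝ → ℝ), Differentiable ℝ w → Differentiable ℝ (deriv w) →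
        ∀ y : ℝ, deriv (deriv (fun x => w (-x))) y = deriv (deriv w) (-y) := by
      intro w hw hw' y
      rw [hruD w hw]
      have h := (((hw' (-y)).hasDerivAt).comp y (hasDerivAt_neg y)).neg
      simpa [Function.comp_def] using h.deriv
    have hrueq : ∀ y, d₁ * deriv (deriv (fun x => u (-x))) y + (-θ) * deriv (fun x => u (-x)) y
        + (fun y => u (-y) * f (u (-y)) (v (-y))) y = 0 := by
      intro y
      rw [hruD2 u hu1 hud y, hruD u hu1]
      have h := hueq (-y)
      dsimp only
      linarith
    have hrveq : ∀ y, d₂ * deriv (deriv (fun x => v (-x))) y + (-θ) * deriv (fun x => v (-x)) y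
        + (fun y => v (-y) * g (u (-y)) (v (-y))) y = 0 := by
      intro y
      rw [hruD2 v hv1 hvd y, hruD v hv1]
      have h := hveq (-y)
      dsimp only
      linarith
    have hlb : Tendsto (fun y => (u (-y), v (-y))) atBot (𝓝 eplus) :=
      hlimplus.comp tendsto_neg_atBot_atTop
    have hlt : Tendsto (fun y => (u (-y), v (-y))) atTop (𝓝 eminus) :=
      hlimminus.comp tendsto_neg_atTop_atBot
    have hres := keyBoth d₁ d₂ (-θ) α β m hd₁ hd₂ (by linarith) hα hβ hm
      (fun y => u (-y)) (fun y => v (-y))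
      (fun y => u (-y) * f (u (-y)) (v (-y))) (fun y => v (-y) * g (u (-y)) (v (-y)))
      hruC hrvC (fun y => hupos (-y)) (fun y => hvpos (-y)) hrueq hrveq
      (fun y hy => ha (-y) hy) (fun y hy => hb (-y) hy)
      eplus eminus hlb hlt
      hEt.1 hEt.2.1 hEt.2.2 hEb.1 hEb.2.1 hEb.2.2 (-x)
    simpa using hres
end

section
/- Let ū > u̲ > 0, v̄ > v̲ > 0, w̄ > w̲ > 0, and let PH = {(u,v,w) ∈ ℝ³ : u,v,w ≥ 0, u/u̲ + v/v̲ + w/w̲ ≥ 1, u/ū + v/v̄ + w/w̄ ≤ 1} be the pentahedron enclosed by the three coordinate planes and the planes u/ū + v/v̄ + w/w̄ = 1 and u/u̲ + v/v̲ + w/w̲ = 1. Let f, g, h be continuous real-valued functions on the closed first octant [0,∞)³ such that: (i) the zero sets S_f = {f = 0}, S_g = {g = 0}, S_h = {h = 0} in the closed first octant are contained in PH; (ii) there exists δ > 0 such that f, g, h > 0 at every (u,v,w) with 0 < u,v,w < δ; and (iii) there exists M > 0 such that f, g, h < 0 at every (u,v,w) with u,v,w > M. Then for any constants α, β, γ >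 0, defining G(u,v,w) = α·u·f(u,v,w) + β·v·g(u,v,w) + γ·w·h(u,v,w), every point (u,v,w) with u,v,w ≥ 0, (u,v,w) ≠ (0,0,0), and G(u,v,w) = 0 lies in PH. -/
lemma pos_on_convex {S : Set (ℝ × ℝ × ℝ)} (hS : Convex ℝ S) {F : ℝ × ℝ × ℝ → ℝ}
    (hF : ContinuousOn F S) (hz : ∀ q ∈ S, F q ≠ 0) {a p : ℝ × ℝ × ℝ}
    (ha : a ∈ S) (hp : p ∈ S) (hFa : 0 < F a) : 0 < F p := by
  by_contra hle
  push_neg at hle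
  have hlt : F p < 0 := lt_of_le_of_ne hle (hz p hp)
  have hicc := hS.isPreconnected.intermediate_value hp ha hF
  obtain ⟨q, hq, hq0⟩ := hicc ⟨hlt.le, hFa.le⟩
  exact hz q hq hq0

lemma convD (c1 c2 c3 : ℝ) :
    Convex ℝ {p : ℝ × ℝ × ℝ | 0 ≤ p.1 ∧ 0 ≤ p.2.1 ∧ 0 ≤ p.2.2 ∧
      p.1 / c1 + p.2.1 / c2 + p.2.2 / c3 < 1} := by
  intro x hx y hy a b ha hb hab
  obtain ⟨hx1, hx2, hx3, hx4⟩ := hx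
  obtain ⟨hy1, hy2, hy3, hy4⟩ := hy
  simp only [Set.mem_setOf_eq, Prod.fst_add, Prod.snd_add, Prod.smul_fst, Prod.smul_snd,
    smul_eq_mul]
  refine ⟨by nlinarith, by nlinarith, by nlinarith, ?_⟩
  have key : (a * x.1 + b * y.1) / c1 + (a * x.2.1 + b * y.2.1) / c2 +
      (a * x.2.2 + b * y.2.2) / c3 =
      a * (x.1 / c1 + x.2.1 / c2 + x.2.2 / c3) + b * (y.1 / c1 + y.2.1 / c2 + y.2.2 / c3) := by
    ring
  rw [key]
  rcases ha.lt_or_eq with hpos | hzero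
  · nlinarith [mul_pos hpos (sub_pos.mpr hx4), mul_nonneg hb (sub_nonneg.mpr hy4.le)]
  · nlinarith

lemma convE (c1 c2 c3 : ℝ) :
    Convex ℝ {p : ℝ × ℝ × ℝ | 0 ≤ p.1 ∧ 0 ≤ p.2.1 ∧ 0 ≤ p.2.2 ∧
      1 < p.1 / c1 + p.2.1 / c2 + p.2.2 / c3} := by
  intro x hx y hy a b ha hb hab
  obtain ⟨hx1, hx2, hx3, hx4⟩ := hx
  obtain ⟨hy1, hy2, hy3, hy4⟩ := hy
  simp only [Set.mem_setOf_eq, Prod.fst_add, Prod.snd_add, Prod.smul_fst, Prod.smul_snd,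
    smul_eq_mul]
  refine ⟨by nlinarith, by nlinarith, by nlinarith, ?_⟩
  have key : (a * x.1 + b * y.1) / c1 + (a * x.2.1 + b * y.2.1) / c2 +
      (a * x.2.2 + b * y.2.2) / c3 =
      a * (x.1 / c1 + x.2.1 / c2 + x.2.2 / c3) + b * (y.1 / c1 + y.2.1 / c2 + y.2.2 / c3) := by
    ring
  rw [key]
  rcases ha.lt_or_eq with hpos | hzero
  · nlinarith [mul_pos hpos (sub_pos.mpr hx4), mul_nonneg hb (sub_nonneg.mpr hy4.le)]
  · nlinarith

/-- The zero set of `G(u,v,w) = α u f + β v g + γ w h` in the closed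
first octant lies (apart from the origin) within the pentahedron `PH` enclosed by the
coordinate planes and the planes `u/ū + v/v̄ + w/w̄ = 1` and `u/u̲ + v/v̲ + w/w̲ = 1`. -/
theorem zero_set_of_G_in_PH
    (ubar ulow vbar vlow wbar wlow : ℝ)
    (hulow : 0 < ulow) (huu : ulow < ubar)
    (hvlow : 0 < vlow) (hvv : vlow < vbar)
    (hwlow : 0 < wlow) (hww : wlow < wbar)
    (PH : Set (ℝ × ℝ × ℝ))
    (hPH : PH = {p : ℝ × ℝ × ℝ | 0 ≤ p.1 ∧ 0 ≤ p.2.1 ∧ 0 ≤ p.2.2 ∧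
      1 ≤ p.1 / ulow + p.2.1 / vlow + p.2.2 / wlow ∧
      p.1 / ubar + p.2.1 / vbar + p.2.2 / wbar ≤ 1})
    (f g h : ℝ → ℝ → ℝ → ℝ)
    (hfc : ContinuousOn (fun p : ℝ × ℝ × ℝ => f p.1 p.2.1 p.2.2)
      {p | 0 ≤ p.1 ∧ 0 ≤ p.2.1 ∧ 0 ≤ p.2.2})
    (hgc : ContinuousOn (fun p : ℝ × ℝ × ℝ => g p.1 p.2.1 p.2.2)
      {p | 0 ≤ p.1 ∧ 0 ≤ p.2.1 ∧ 0 ≤ p.2.2})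
    (hhc : ContinuousOn (fun p : ℝ × ℝ × ℝ => h p.1 p.2.1 p.2.2)
      {p | 0 ≤ p.1 ∧ 0 ≤ p.2.1 ∧ 0 ≤ p.2.2})
    (hSf : {p : ℝ × ℝ × ℝ | 0 ≤ p.1 ∧ 0 ≤ p.2.1 ∧ 0 ≤ p.2.2 ∧ f p.1 p.2.1 p.2.2 = 0} ⊆ PH)
    (hSg : {p : ℝ × ℝ × ℝ | 0 ≤ p.1 ∧ 0 ≤ p.2.1 ∧ 0 ≤ p.2.2 ∧ g p.1 p.2.1 p.2.2 = 0} ⊆ PH)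
    (hSh : {p : ℝ × ℝ × ℝ | 0 ≤ p.1 ∧ 0 ≤ p.2.1 ∧ 0 ≤ p.2.2 ∧ h p.1 p.2.1 p.2.2 = 0} ⊆ PH)
    (hsmall : ∃ δ > 0, ∀ u v w : ℝ, 0 < u → u < δ → 0 < v → v < δ → 0 < w → w < δ →
      0 < f u v w ∧ 0 < g u v w ∧ 0 < h u v w)
    (hlarge : ∃ M > 0, ∀ u v w : ℝ, M < u → M < v → M < w →
      f u v w < 0 ∧ g u v w < 0 ∧ h u v w < 0)
    (α β γ : ℝ) (hα : 0 < α) (hβ : 0 < β) (hγ : 0 < γ)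
    (u v w : ℝ) (hu0 : 0 ≤ u) (hv0 : 0 ≤ v) (hw0 : 0 ≤ w)
    (hne : (u, v, w) ≠ (0, 0, 0))
    (hG : α * u * f u v w + β * v * g u v w + γ * w * h u v w = 0) :
    (u, v, w) ∈ PH := by
  -- some coordinate is positive
  have hcoord : 0 < u ∨ 0 < v ∨ 0 < w := by
    by_contra hc
    push_neg at hc
    exact hne (by
      have h1 : u = 0 := le_antisymm hc.1 hu0
      have h2 : v = 0 := le_antisymm hc.2.1 hv0
      have h3 : w = 0 := le_antisymm hc.2.2 hw0
      simp [h1, h2, h3])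
  by_contra hnot
  rw [hPH] at hnot
  simp only [Set.mem_setOf_eq] at hnot
  push_neg at hnot
  have hcases : u / ulow + v / vlow + w / wlow < 1 ∨
      1 < u / ubar + v / vbar + w / wbar := by
    by_contra hc
    push_neg at hc
    exact absurd (hnot hu0 hv0 hw0 hc.1) (not_lt.mpr hc.2)
  rcases hcases with hlow | hup
  · -- below the lower plane: f, g, h all positive there
    set D : Set (ℝ × ℝ × ℝ) := {p | 0 ≤ p.1 ∧ 0 ≤ p.2.1 ∧ 0 ≤ p.2.2 ∧
      p.1 / ulow + p.2.1 / vlow + p.2.2 / wlow < 1} with hDdef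
    have hDsub : D ⊆ {p : ℝ × ℝ × ℝ | 0 ≤ p.1 ∧ 0 ≤ p.2.1 ∧ 0 ≤ p.2.2} :=
      fun q hq => ⟨hq.1, hq.2.1, hq.2.2.1⟩
    have hDconv := convD ulow vlow wlow
    obtain ⟨δ, hδ, hsm⟩ := hsmall
    set c : ℝ := 1 / ulow + 1 / vlow + 1 / wlow with hcdef
    have hcpos : 0 < c := by positivity
    set ε : ℝ := min (δ / 2) ((2 * c)⁻¹) with hεdef
    have hε0 : 0 < ε := lt_min (by linarith) (by positivity)
    have hεδ : ε < δ := lt_of_le_of_lt (min_le_left _ _) (by linarith)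
    have h1 : ε ≤ (2 * c)⁻¹ := min_le_right _ _
    clear_value ε
    clear_value c
    have haD : ((ε, ε, ε) : ℝ × ℝ × ℝ) ∈ D := by
      refine ⟨hε0.le, hε0.le, hε0.le, ?_⟩
      have key : (ε : ℝ) / ulow + ε / vlow + ε / wlow = ε * c := by
        rw [hcdef]; ring
      rw [key]
      have : ε * c ≤ (2 * c)⁻¹ * c := mul_le_mul_of_nonneg_right h1 hcpos.le
      have h2 : (2 * c)⁻¹ * c = 1 / 2 := by field_simp
      rw [h2] at this
      linarith
    have hpD : ((u, v, w) : ℝ × ℝ × ℝ) ∈ D := ⟨hu0, hv0, hw0, hlow⟩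
    obtain ⟨hfa, hga, hha⟩ := hsm ε ε ε hε0 hεδ hε0 hεδ hε0 hεδ
    have hDnPH : ∀ q ∈ D, q ∉ PH := by
      intro q hq hqPH
      rw [hPH] at hqPH
      exact absurd hqPH.2.2.2.1 (not_le.mpr hq.2.2.2)
    have hfz : ∀ q ∈ D, f q.1 q.2.1 q.2.2 ≠ 0 := fun q hq hz =>
      hDnPH q hq (hSf ⟨hq.1, hq.2.1, hq.2.2.1, hz⟩)
    have hgz : ∀ q ∈ D, g q.1 q.2.1 q.2.2 ≠ 0 := fun q hq hz =>
      hDnPH q hq (hSg ⟨hq.1, hq.2.1, hq.2.2.1, hz⟩)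
    have hhz : ∀ q ∈ D, h q.1 q.2.1 q.2.2 ≠ 0 := fun q hq hz =>
      hDnPH q hq (hSh ⟨hq.1, hq.2.1, hq.2.2.1, hz⟩)
    have hfp : 0 < f u v w := pos_on_convex hDconv (hfc.mono hDsub) hfz haD hpD hfa
    have hgp : 0 < g u v w := pos_on_convex hDconv (hgc.mono hDsub) hgz haD hpD hga
    have hhp : 0 < h u v w := pos_on_convex hDconv (hhc.mono hDsub) hhz haD hpD hha
    have t1 : 0 ≤ α * u * f u v w := mul_nonneg (mul_nonneg hα.le hu0) hfp.le
    have t2 : 0 ≤ β * v * g u v w := mul_nonneg (mul_nonneg hβ.le hv0) hgp.le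
    have t3 : 0 ≤ γ * w * h u v w := mul_nonneg (mul_nonneg hγ.le hw0) hhp.le
    rcases hcoord with hu | hv | hw
    · have : 0 < α * u * f u v w := mul_pos (mul_pos hα hu) hfp
      linarith
    · have : 0 < β * v * g u v w := mul_pos (mul_pos hβ hv) hgp
      linarith
    · have : 0 < γ * w * h u v w := mul_pos (mul_pos hγ hw) hhp
      linarith
  · -- above the upper plane: f, g, h all negative there
    set E : Set (ℝ × ℝ × ℝ) := {p | 0 ≤ p.1 ∧ 0 ≤ p.2.1 ∧ 0 ≤ p.2.2 ∧
      1 < p.1 / ubar + p.2.1 / vbar + p.2.2 / wbar} with hEdef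
    have hEsub : E ⊆ {p : ℝ × ℝ × ℝ | 0 ≤ p.1 ∧ 0 ≤ p.2.1 ∧ 0 ≤ p.2.2} :=
      fun q hq => ⟨hq.1, hq.2.1, hq.2.2.1⟩
    have hEconv := convE ubar vbar wbar
    obtain ⟨M, hM, hlg⟩ := hlarge
    set T : ℝ := max M ubar + 1 with hTdef
    have hTM : M < T := lt_of_le_of_lt (le_max_left _ _) (by linarith)
    have hTu : ubar < T := lt_of_le_of_lt (le_max_right _ _) (by linarith)
    have hT0 : 0 < T := lt_trans hM hTM
    have hub : 0 < ubar := lt_trans hulow huu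
    have hvb : 0 < vbar := lt_trans hvlow hvv
    have hwb : 0 < wbar := lt_trans hwlow hww
    have haE : ((T, T, T) : ℝ × ℝ × ℝ) ∈ E := by
      refine ⟨hT0.le, hT0.le, hT0.le, ?_⟩
      have h1 : 1 < T / ubar := (one_lt_div hub).mpr hTu
      have h2 : 0 ≤ T / vbar := by positivity
      have h3 : 0 ≤ T / wbar := by positivity
      linarith
    have hpE : ((u, v, w) : ℝ × ℝ × ℝ) ∈ E := ⟨hu0, hv0, hw0, hup⟩
    obtain ⟨hfa, hga, hha⟩ := hlg T T T hTM hTM hTM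
    have hEnPH : ∀ q ∈ E, q ∉ PH := by
      intro q hq hqPH
      rw [hPH] at hqPH
      exact absurd hqPH.2.2.2.2 (not_le.mpr hq.2.2.2)
    have hfz : ∀ q ∈ E, f q.1 q.2.1 q.2.2 ≠ 0 := fun q hq hz =>
      hEnPH q hq (hSf ⟨hq.1, hq.2.1, hq.2.2.1, hz⟩)
    have hgz : ∀ q ∈ E, g q.1 q.2.1 q.2.2 ≠ 0 := fun q hq hz =>
      hEnPH q hq (hSg ⟨hq.1, hq.2.1, hq.2.2.1, hz⟩)
    have hhz : ∀ q ∈ E, h q.1 q.2.1 q.2.2 ≠ 0 := fun q hq hz =>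
      hEnPH q hq (hSh ⟨hq.1, hq.2.1, hq.2.2.1, hz⟩)
    have hfp : 0 < -f u v w := pos_on_convex hEconv ((hfc.mono hEsub).neg)
      (fun q hq => neg_ne_zero.mpr (hfz q hq)) haE hpE (by simpa using hfa)
    have hgp : 0 < -g u v w := pos_on_convex hEconv ((hgc.mono hEsub).neg)
      (fun q hq => neg_ne_zero.mpr (hgz q hq)) haE hpE (by simpa using hga)
    have hhp : 0 < -h u v w := pos_on_convex hEconv ((hhc.mono hEsub).neg)
      (fun q hq => neg_ne_zero.mpr (hhz q hq)) haE hpE (by simpa using hha)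
    have t1 : 0 ≤ α * u * (-f u v w) := mul_nonneg (mul_nonneg hα.le hu0) hfp.le
    have t2 : 0 ≤ β * v * (-g u v w) := mul_nonneg (mul_nonneg hβ.le hv0) hgp.le
    have t3 : 0 ≤ γ * w * (-h u v w) := mul_nonneg (mul_nonneg hγ.le hw0) hhp.le
    rcases hcoord with hu | hv | hw
    · have : 0 < α * u * (-f u v w) := mul_pos (mul_pos hα hu) hfp
      nlinarith
    · have : 0 < β * v * (-g u v w) := mul_pos (mul_pos hβ hv) hgp
      nlinarith
    · have : 0 < γ * w * (-h u v w) := mul_pos (mul_pos hγ hw) hhp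
      nlinarith
end

section
/- (N-barrier maximum principle for systems of three equations: upper bound.) Let d₁, d₂, d₃ > 0 and θ ∈ ℝ. Let ū > u̲ > 0, v̄ > v̲ > 0, w̄ > w̲ > 0, and let PH = {(u,v,w) ∈ ℝ³ : u,v,w ≥ 0, u/u̲ + v/v̲ + w/w̲ ≥ 1, u/ū + v/v̄ + w/w̄ ≤ 1}. Let f, g, h be continuous real-valued functions on [0,∞)³ satisfying: (i) the zero sets {f = 0}, {g = 0}, {h = 0} in the closed first octant are contained in PH; (ii) there exists δ > 0 such that f, g, h > 0 at every (u,v,w) with 0 < u,v,w < δ; (iii) there exists M > 0 such that f, g, h < 0 at every (u,v,w) with u,v,w > M. Suppose u, v, w : ℝ → ℝ are twice continuously differentiable functions, positive on ℝ, satisfying d₁u'' + θu' + u f(u,v,w) = 0, d₂v'' + θv' + v g(u,v,w) = 0, and d₃w'' + θw' + w h(u,v,w) = 0 on ℝ, and such that (u(x),v(x),w(x)) converges as x → −∞ to a point e₋ and as x → +∞ to a point e₊, where each of e₋ and e₊ is one of: (0,0,0); a point (u₁,0,0) with u₁ > 0 and f(u₁,0,0) = 0; a point (0,v₂,0) with v₂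 > 0 and g(0,v₂,0) = 0; a point (0,0,w₃) with w₃ > 0 and h(0,0,w₃) = 0; or a point (u*,v*,w*) with u*,v*,w* > 0 and f(u*,v*,w*) = g(u*,v*,w*) = h(u*,v*,w*) = 0. Then for every α, β, γ > 0 and every x ∈ ℝ, α·u(x) + β·v(x) + γ·w(x) ≤ max(α·ū, β·v̄, γ·w̄) · max(d₁,d₂,d₃)/min(d₁,d₂,d₃). -/
open Filter
open Set


private lemma bern_rpow' {s r : ℝ} (hs0 : 0 ≤ s) (hr : 1 ≤ r) :
    1 - s ^ r ≤ r * (1 - s) := by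
  have key := one_add_mul_self_le_rpow_one_add (show (-1:ℝ) ≤ s - 1 by linarith) hr
  rw [show (1:ℝ) + (s - 1) = s by ring] at key
  linarith

private lemma rpow_le_self' {s r : ℝ} (hs0 : 0 < s) (hs1 : s ≤ 1) (hr : 1 ≤ r) :
    s ^ r ≤ s := by
  calc s ^ r ≤ s ^ (1:ℝ) := Real.rpow_le_rpow_of_exponent_ge hs0 hs1 hr
  _ = s := Real.rpow_one s

private lemma diff_rpow_le' {β s r : ℝ} (hβ0 : 0 < β) (hβs : β ≤ s) (hs1 : s ≤ 1)
    (hr : 1 ≤ r) : s ^ r - β ^ r ≤ r * (s - β) := by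
  have hs0 : 0 < s := hβ0.trans_le hβs
  have key := one_add_mul_self_le_rpow_one_add
    (show (-1:ℝ) ≤ β / s - 1 by
      have : 0 ≤ β / s := by positivity
      linarith) hr
  rw [show (1:ℝ) + (β / s - 1) = β / s by ring, Real.div_rpow hβ0.le hs0.le] at key
  have hsr : 0 < s ^ r := Real.rpow_pos_of_pos hs0 r
  have key2 : (1 + r * (β / s - 1)) * s ^ r ≤ β ^ r := (le_div_iff₀ hsr).mp key
  have expand : (1 + r * (β / s - 1)) * s ^ r = s ^ r - r * (s - β) * (s ^ r / s) := by
    field_simp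
    ring
  have hq : s ^ r / s ≤ 1 := by
    rw [div_le_one hs0]
    exact rpow_le_self' hs0 hs1 hr
  have hfin : r * (s - β) * (s ^ r / s) ≤ r * (s - β) := by
    have h1 : 0 ≤ r * (s - β) := by nlinarith
    nlinarith [div_nonneg hsr.le hs0.le]
  linarith [key2, expand ▸ key2]

private lemma clear_aux {β s r : ℝ} (hβ0 : 0 < β) (hβs : β ≤ s) (hs1 : s ≤ 1) (hr : 1 ≤ r) :
    (1 - s ^ r) * (1 - β) ≤ r * (1 - s) * (1 - β ^ r) ∧
    (s ^ r - β ^ r) * (1 - β) ≤ r * (s - β) * (1 - β ^ r) := by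
  have hs0 : 0 < s := hβ0.trans_le hβs
  have F1 := bern_rpow' hs0.le hr
  have F2 := diff_rpow_le' hβ0 hβs hs1 hr
  have F3 : 1 - β ≤ 1 - β ^ r := by
    have := rpow_le_self' hβ0 (hβs.trans hs1) hr
    linarith
  have G1 : (0:ℝ) ≤ 1 - β := by nlinarith
  have G2 : (0:ℝ) ≤ r * (1 - s) := by nlinarith
  have G3 : (0:ℝ) ≤ r * (s - β) := by nlinarith
  constructor
  · calc (1 - s ^ r) * (1 - β) ≤ r * (1 - s) * (1 - β) :=
          mul_le_mul_of_nonneg_right F1 G1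
      _ ≤ r * (1 - s) * (1 - β ^ r) := mul_le_mul_of_nonneg_left F3 G2
  · calc (s ^ r - β ^ r) * (1 - β) ≤ r * (s - β) * (1 - β) :=
          mul_le_mul_of_nonneg_right F2 G1
      _ ≤ r * (s - β) * (1 - β ^ r) := mul_le_mul_of_nonneg_left F3 G3

private lemma clear_aux2 {A X B r : ℝ} (hA0 : 0 < A) (hAX : A ≤ X) (hXB : X ≤ B)
    (hAB : A < B) (hr : 1 ≤ r) :
    (B ^ r - X ^ r) * (B - A) ≤ r * (B - X) * (B ^ r - A ^ r) ∧
    (X ^ r - A ^ r) * (B - A) ≤ r * (X - A) * (B ^ r - A ^ r) := by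
  have hB0 : 0 < B := hA0.trans hAB
  have hX0 : 0 < X := hA0.trans_le hAX
  have hBne : B ≠ 0 := hB0.ne'
  have hBr : 0 < B ^ r := Real.rpow_pos_of_pos hB0 r
  have hBrne : B ^ r ≠ 0 := hBr.ne'
  obtain ⟨C1, C2⟩ := clear_aux (β := A / B) (s := X / B) (by positivity)
    (by gcongr) (by rw [div_le_one hB0]; exact hXB) hr
  rw [Real.div_rpow hX0.le hB0.le, Real.div_rpow hA0.le hB0.le] at C1 C2
  have hM : (0:ℝ) ≤ B ^ r * B := by positivity
  constructor
  · calc (B ^ r - X ^ r) * (B - A)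
        = (B ^ r * B) * ((1 - X ^ r / B ^ r) * (1 - A / B)) := by first | (field_simp; ring) | field_simp
      _ ≤ (B ^ r * B) * (r * (1 - X / B) * (1 - A ^ r / B ^ r)) :=
          mul_le_mul_of_nonneg_left C1 hM
      _ = r * (B - X) * (B ^ r - A ^ r) := by first | (field_simp; ring) | field_simp
  · calc (X ^ r - A ^ r) * (B - A)
        = (B ^ r * B) * ((X ^ r / B ^ r - A ^ r / B ^ r) * (1 - A / B)) := by
          first | (field_simp; ring) | field_simp
      _ ≤ (B ^ r * B) * (r * (X / B - A / B) * (1 - A ^ r / B ^ r)) :=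
          mul_le_mul_of_nonneg_left C2 hM
      _ = r * (X - A) * (B ^ r - A ^ r) := by first | (field_simp; ring) | field_simp

private lemma clear_aux3 {A X B r : ℝ} (hB0 : 0 < B) (hBX : B ≤ X) (hXA : X ≤ A)
    (hBA : B < A) (hr : 1 ≤ r) :
    (A ^ r - X ^ r) * (A - B) ≤ r * (A - X) * (A ^ r - B ^ r) ∧
    (X ^ r - B ^ r) * (A - B) ≤ r * (X - B) * (A ^ r - B ^ r) := by
  have hA0 : 0 < A := hB0.trans hBA
  have hX0 : 0 < X := hB0.trans_le hBX
  have hAne : A ≠ 0 := hA0.ne'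
  have hAr : 0 < A ^ r := Real.rpow_pos_of_pos hA0 r
  have hArne : A ^ r ≠ 0 := hAr.ne'
  obtain ⟨C1, C2⟩ := clear_aux (β := B / A) (s := X / A) (by positivity)
    (by gcongr) (by rw [div_le_one hA0]; exact hXA) hr
  rw [Real.div_rpow hX0.le hA0.le, Real.div_rpow hB0.le hA0.le] at C1 C2
  have hM : (0:ℝ) ≤ A ^ r * A := by positivity
  constructor
  · calc (A ^ r - X ^ r) * (A - B)
        = (A ^ r * A) * ((1 - X ^ r / A ^ r) * (1 - B / A)) := by first | (field_simp; ring) | field_simp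
      _ ≤ (A ^ r * A) * (r * (1 - X / A) * (1 - B ^ r / A ^ r)) :=
          mul_le_mul_of_nonneg_left C1 hM
      _ = r * (A - X) * (A ^ r - B ^ r) := by first | (field_simp; ring) | field_simp
  · calc (X ^ r - B ^ r) * (A - B)
        = (A ^ r * A) * ((X ^ r / A ^ r - B ^ r / A ^ r) * (1 - B / A)) := by
          first | (field_simp; ring) | field_simp
      _ ≤ (A ^ r * A) * (r * (X / A - B / A) * (1 - B ^ r / A ^ r)) :=
          mul_le_mul_of_nonneg_left C2 hM
      _ = r * (X - B) * (A ^ r - B ^ r) := by first | (field_simp; ring) | field_simp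

private lemma exp_rpow_aux (z r : ℝ) : Real.exp z ^ r = Real.exp (r * z) := by
  rw [Real.rpow_def_of_pos (Real.exp_pos z), Real.log_exp, mul_comm]

private lemma pivot {c r a x b : ℝ} (hc : c ≠ 0) (hr : 1 ≤ r) (hax : a < x) (hxb : x < b) :
    (Real.exp (-(r*c)*a) - Real.exp (-(r*c)*x)) / (Real.exp (-(r*c)*a) - Real.exp (-(r*c)*b))
      ≤ r * ((Real.exp (-c*a) - Real.exp (-c*x)) / (Real.exp (-c*a) - Real.exp (-c*b)))
  ∧ 1 - (Real.exp (-(r*c)*a) - Real.exp (-(r*c)*x)) / (Real.exp (-(r*c)*a) - Real.exp (-(r*c)*b))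
      ≤ r * (1 - (Real.exp (-c*a) - Real.exp (-c*x)) / (Real.exp (-c*a) - Real.exp (-c*b))) := by
  have hr0 : 0 < r := lt_of_lt_of_le one_pos hr
  have hpow : ∀ t : ℝ, Real.exp (-(r*c)*t) = (Real.exp (-c*t)) ^ r := by
    intro t; rw [exp_rpow_aux]; congr 1; ring
  rw [hpow a, hpow x, hpow b]
  set A := Real.exp (-c*a) with hA
  set X := Real.exp (-c*x) with hX
  set B := Real.exp (-c*b) with hB
  have hA0 : 0 < A := Real.exp_pos _
  have hX0 : 0 < X := Real.exp_pos _
  have hB0 : 0 < B := Real.exp_pos _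
  rcases lt_or_gt_of_ne hc with hneg | hpos
  · -- c < 0 : A < X < B
    have hAX : A < X := Real.exp_lt_exp.mpr (by nlinarith)
    have hXB : X < B := Real.exp_lt_exp.mpr (by nlinarith)
    have hAB : A < B := hAX.trans hXB
    have hABr : A ^ r < B ^ r := Real.rpow_lt_rpow hA0.le hAB hr0
    obtain ⟨C1, C2⟩ := clear_aux2 hA0 hAX.le hXB.le hAB hr
    have h2 : (0:ℝ) < B ^ r - A ^ r := by linarith
    have h2' : (0:ℝ) < B - A := by linarith
    have eQ : (A ^ r - X ^ r) / (A ^ r - B ^ r) = (X ^ r - A ^ r) / (B ^ r - A ^ r) := by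
      rw [div_eq_div_iff (by linarith) (by linarith)]; ring
    have eQ' : (A - X) / (A - B) = (X - A) / (B - A) := by
      rw [div_eq_div_iff (by linarith) (by linarith)]; ring
    rw [eQ, eQ']
    constructor
    · rw [← mul_div_assoc, div_le_div_iff₀ h2 h2']
      calc (X ^ r - A ^ r) * (B - A) ≤ r * (X - A) * (B ^ r - A ^ r) := C2
        _ = r * (X - A) * (B ^ r - A ^ r) := rfl
    · have ec1 : 1 - (X ^ r - A ^ r) / (B ^ r - A ^ r) = (B ^ r - X ^ r) / (B ^ r - A ^ r) := by
        field_simp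
        ring
      have ec2 : 1 - (X - A) / (B - A) = (B - X) / (B - A) := by
        field_simp
        ring
      rw [ec1, ec2, ← mul_div_assoc, div_le_div_iff₀ h2 h2']
      exact C1
  · -- c > 0 : A > X > B
    have hXA : X < A := Real.exp_lt_exp.mpr (by nlinarith)
    have hBX : B < X := Real.exp_lt_exp.mpr (by nlinarith)
    have hBA : B < A := hBX.trans hXA
    have hBAr : B ^ r < A ^ r := Real.rpow_lt_rpow hB0.le hBA hr0
    obtain ⟨C1, C2⟩ := clear_aux3 hB0 hBX.le hXA.le hBA hr
    have h2 : (0:ℝ) < A ^ r - B ^ r := by linarith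
    have h2' : (0:ℝ) < A - B := by linarith
    constructor
    · rw [← mul_div_assoc, div_le_div_iff₀ h2 h2']
      exact C1
    · have ec1 : 1 - (A ^ r - X ^ r) / (A ^ r - B ^ r) = (X ^ r - B ^ r) / (A ^ r - B ^ r) := by
        field_simp
        ring
      have ec2 : 1 - (A - X) / (A - B) = (X - B) / (A - B) := by
        field_simp
        ring
      rw [ec1, ec2, ← mul_div_assoc, div_le_div_iff₀ h2 h2']
      exact C2

private lemma core_comp {u W : ℝ → ℝ} (hu : ContDiff ℝ 2 u) {d θ a b : ℝ}
    (hd : 0 < d) (hab : a < b)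
    (hW : ∀ y : ℝ, HasDerivAt W (Real.exp (-(θ / d) * y)) y)
    (hode : ∀ y ∈ Set.Ioo a b, 0 < d * deriv (deriv u) y + θ * deriv u y)
    {x : ℝ} (hx : x ∈ Set.Icc a b) :
    u x ≤ u a + (u b - u a) * ((W x - W a) / (W b - W a)) := by
  set k := θ / d with hk
  have hud : Differentiable ℝ u := hu.differentiable (by norm_num)
  have hud1 : Differentiable ℝ (deriv u) := by
    have h2 : ContDiff ℝ (1 + 1) u := by
      convert hu using 2
      norm_num
    exact ((contDiff_succ_iff_deriv.mp h2).2.2).differentiable one_ne_zero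
  have hWdiff : Differentiable ℝ W := fun y => (hW y).differentiableAt
  have hWmono : StrictMono W := by
    apply strictMono_of_deriv_pos
    intro y
    rw [(hW y).deriv]
    exact Real.exp_pos _
  have hZ : 0 < W b - W a := sub_pos.mpr (hWmono hab)
  set Δ : ℝ := (u b - u a) / (W b - W a) with hΔ
  set g : ℝ → ℝ := fun y => (u y - u a) - Δ * (W y - W a) with hg
  suffices hgoal : g x ≤ 0 by
    have h1 : u x - u a - Δ * (W x - W a) ≤ 0 := hgoal
    have hΔval : Δ * (W x - W a) = (u b - u a) * ((W x - W a) / (W b - W a)) := by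
      rw [hΔ]; ring
    linarith [hΔval ▸ h1]
  by_contra hcon
  push_neg at hcon
  have hgd : ∀ y : ℝ, HasDerivAt g (deriv u y - Δ * Real.exp (-k * y)) y := by
    intro y
    have h1 : HasDerivAt (fun z => u z - u a) (deriv u y) y :=
      (hud y).hasDerivAt.sub_const (u a)
    have h2 : HasDerivAt (fun z => Δ * (W z - W a)) (Δ * Real.exp (-k * y)) y :=
      ((hW y).sub_const (W a)).const_mul Δ
    exact h1.sub h2
  have hgderiv : ∀ y, deriv g y = deriv u y - Δ * Real.exp (-k * y) :=
    fun y => (hgd y).deriv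
  have hgc : Continuous g := by
    have hcu : Continuous u := hud.continuous
    have hcW : Continuous W := hWdiff.continuous
    exact (hcu.sub continuous_const).sub (continuous_const.mul (hcW.sub continuous_const))
  obtain ⟨c, hcmem, hcmax⟩ :=
    isCompact_Icc.exists_isMaxOn (nonempty_Icc.mpr hab.le) hgc.continuousOn
  have hgc0 : 0 < g c := lt_of_lt_of_le hcon (hcmax hx)
  have hga : g a = 0 := by simp [hg]
  have hgb : g b = 0 := by
    show (u b - u a) - Δ * (W b - W a) = 0
    rw [hΔ, div_mul_cancel₀ _ hZ.ne']
    ring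
  have hca : c ≠ a := by
    intro hcc
    rw [hcc, hga] at hgc0
    exact lt_irrefl _ hgc0
  have hcb : c ≠ b := by
    intro hcc
    rw [hcc, hgb] at hgc0
    exact lt_irrefl _ hgc0
  have hcio : c ∈ Set.Ioo a b :=
    ⟨lt_of_le_of_ne hcmem.1 (Ne.symm hca), lt_of_le_of_ne hcmem.2 hcb⟩
  have hloc : IsLocalMax g c := hcmax.isLocalMax (Icc_mem_nhds hcio.1 hcio.2)
  have hderiv0 : deriv g c = 0 := hloc.deriv_eq_zero
  set H : ℝ → ℝ := fun y => deriv u y * Real.exp (k * y) - Δ with hH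
  have hrel : ∀ y, deriv g y = H y * Real.exp (-k * y) := by
    intro y
    have e1 : Real.exp (k * y) * Real.exp (-k * y) = 1 := by
      rw [← Real.exp_add]
      norm_num
    rw [hgderiv y]
    calc deriv u y - Δ * Real.exp (-k * y)
        = deriv u y * (Real.exp (k * y) * Real.exp (-k * y)) - Δ * Real.exp (-k * y) := by
          rw [e1]; ring
      _ = (deriv u y * Real.exp (k * y) - Δ) * Real.exp (-k * y) := by ring
  have hHc : H c = 0 := by
    have h1 := hrel c
    rw [hderiv0] at h1
    rcases mul_eq_zero.mp h1.symm with h | h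
    · exact h
    · exact absurd h (Real.exp_pos _).ne'
  have hHd : ∀ y : ℝ, HasDerivAt H
      (deriv (deriv u) y * Real.exp (k * y) + deriv u y * (Real.exp (k * y) * k)) y := by
    intro y
    have h1 : HasDerivAt (deriv u) (deriv (deriv u) y) y := (hud1 y).hasDerivAt
    have h2 : HasDerivAt (fun z => Real.exp (k * z)) (Real.exp (k * y) * k) y := by
      simpa using ((hasDerivAt_id y).const_mul k).exp
    exact (h1.mul h2).sub_const Δ
  have hHcont : Continuous H := by
    have h2 : Continuous fun z => Real.exp (k * z) :=
      Real.continuous_exp.comp (continuous_const.mul continuous_id)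
    exact ((hud1.continuous).mul h2).sub continuous_const
  have hHderiv : ∀ y ∈ Set.Ioo a b, 0 < deriv H y := by
    intro y hy
    rw [(hHd y).deriv]
    have hodey := hode y hy
    have heq : deriv (deriv u) y * Real.exp (k * y) + deriv u y * (Real.exp (k * y) * k)
        = ((d * deriv (deriv u) y + θ * deriv u y) / d) * Real.exp (k * y) := by
      rw [hk]; field_simp
    rw [heq]
    exact mul_pos (div_pos hodey hd) (Real.exp_pos _)
  have hHmono : StrictMonoOn H (Set.Icc c b) := by
    apply strictMonoOn_of_deriv_pos (convex_Icc c b) hHcont.continuousOn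
    intro y hy
    rw [interior_Icc] at hy
    exact hHderiv y ⟨hcio.1.trans hy.1, hy.2⟩
  have hHpos : ∀ y ∈ Set.Ioo c b, 0 < H y := by
    intro y hy
    have := hHmono (left_mem_Icc.mpr hcio.2.le) ⟨hy.1.le, hy.2.le⟩ hy.1
    rw [hHc] at this
    exact this
  have hgmono : StrictMonoOn g (Set.Icc c b) := by
    apply strictMonoOn_of_deriv_pos (convex_Icc c b) hgc.continuousOn
    intro y hy
    rw [interior_Icc] at hy
    rw [hrel y]
    exact mul_pos (hHpos y hy) (Real.exp_pos _)
  have hfin := hgmono (left_mem_Icc.mpr hcio.2.le) (right_mem_Icc.mpr hcio.2.le) hcio.2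
  rw [hgb] at hfin
  linarith


private lemma species_bound {u : ℝ → ℝ} (hu : ContDiff ℝ 2 u) {dd θ a b x : ℝ}
    (hdd : 0 < dd) (hθ : θ ≠ 0) (hab : a < b)
    (hode : ∀ y ∈ Set.Ioo a b, 0 < dd * deriv (deriv u) y + θ * deriv u y)
    (hx : x ∈ Set.Icc a b) :
    u x ≤ u a + (u b - u a) *
      ((Real.exp (-(θ/dd)*a) - Real.exp (-(θ/dd)*x)) /
        (Real.exp (-(θ/dd)*a) - Real.exp (-(θ/dd)*b))) := by
  set k : ℝ := θ / dd with hk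
  have hkne : k ≠ 0 := div_ne_zero hθ hdd.ne'
  set W : ℝ → ℝ := fun y => (1 - Real.exp (-k * y)) / k with hW
  have hWd : ∀ y : ℝ, HasDerivAt W (Real.exp (-(θ / dd) * y)) y := by
    intro y
    have h1 : HasDerivAt (fun z : ℝ => -k * z) (-k) y := by
      simpa using (hasDerivAt_id y).const_mul (-k)
    have h2 := h1.exp
    have h3 := ((hasDerivAt_const y (1:ℝ)).sub h2).div_const k
    refine h3.congr_deriv ?_
    rw [hk]
    first
    | (field_simp; ring)
    | field_simp
  have hmain := core_comp hu hdd hab hWd hode hx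
  have hsub : ∀ y : ℝ, W y - W a = (Real.exp (-k * a) - Real.exp (-k * y)) / k := by
    intro y
    rw [hW]
    first
    | (field_simp; ring)
    | field_simp
  have hEab : Real.exp (-k * a) - Real.exp (-k * b) ≠ 0 := by
    intro hcontra
    have h1 : (-k * a) = (-k * b) := Real.exp_eq_exp.mp (by linarith)
    have h2 : a = b := mul_left_cancel₀ (neg_ne_zero.mpr hkne) h1
    exact absurd h2 hab.ne
  have hquot : (W x - W a) / (W b - W a)
      = (Real.exp (-k * a) - Real.exp (-k * x)) / (Real.exp (-k * a) - Real.exp (-k * b)) := by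
    rw [hsub x, hsub b, div_div_div_cancel_right₀ hkne]
  rw [hquot] at hmain
  exact hmain

private lemma sgn_neg {f : ℝ → ℝ → ℝ → ℝ} {ub vb wb : ℝ}
    (hub : 0 < ub) (hvb : 0 < vb) (hwb : 0 < wb)
    (hfc : ContinuousOn (fun p : ℝ × ℝ × ℝ => f p.1 p.2.1 p.2.2)
      {p : ℝ × ℝ × ℝ | 0 ≤ p.1 ∧ 0 ≤ p.2.1 ∧ 0 ≤ p.2.2})
    (hzero : ∀ p q r : ℝ, 0 ≤ p → 0 ≤ q → 0 ≤ r → f p q r = 0 →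
      p / ub + q / vb + r / wb ≤ 1)
    (hlarge : ∃ M > 0, ∀ p q r : ℝ, M < p → M < q → M < r → f p q r < 0)
    {u0 v0 w0 : ℝ} (hu0 : 0 ≤ u0) (hv0 : 0 ≤ v0) (hw0 : 0 ≤ w0)
    (hS : 1 < u0 / ub + v0 / vb + w0 / wb) :
    f u0 v0 w0 < 0 := by
  obtain ⟨M, hM0, hMn⟩ := hlarge
  set T : ℝ := M + 1 with hT
  have hT0 : (0:ℝ) < T := by linarith
  set φ : ℝ → ℝ := fun t => f (u0 + t) (v0 + t) (w0 + t) with hφ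
  have hpath : ContinuousOn φ (Set.Icc 0 T) := by
    have hmap : Set.MapsTo (fun t : ℝ => ((u0 + t, v0 + t, w0 + t) : ℝ × ℝ × ℝ))
        (Set.Icc 0 T) {p : ℝ × ℝ × ℝ | 0 ≤ p.1 ∧ 0 ≤ p.2.1 ∧ 0 ≤ p.2.2} := by
      intro t ht
      have h0 := ht.1
      refine ⟨?_, ?_, ?_⟩ <;> dsimp only <;> linarith
    have hcontpath : Continuous (fun t : ℝ => ((u0 + t, v0 + t, w0 + t) : ℝ × ℝ × ℝ)) := by
      continuity
    exact hfc.comp hcontpath.continuousOn hmap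
  have hφT : φ T < 0 := hMn _ _ _ (by simp [hT]; linarith) (by simp [hT]; linarith)
    (by simp [hT]; linarith)
  have hnz : ∀ t ∈ Set.Icc (0:ℝ) T, φ t ≠ 0 := by
    intro t ht h0
    have hkey := hzero (u0 + t) (v0 + t) (w0 + t) (by linarith [ht.1]) (by linarith [ht.1])
      (by linarith [ht.1]) h0
    have h1 : u0 / ub ≤ (u0 + t) / ub := by gcongr <;> linarith [ht.1]
    have h2 : v0 / vb ≤ (v0 + t) / vb := by gcongr <;> linarith [ht.1]
    have h3 : w0 / wb ≤ (w0 + t) / wb := by gcongr <;> linarith [ht.1]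
    linarith
  by_contra hcon
  push_neg at hcon
  have h0mem : (0:ℝ) ∈ Set.Icc (φ T) (φ 0) := by
    constructor
    · exact hφT.le
    · simpa [hφ] using hcon
  obtain ⟨t, ht, hteq⟩ := intermediate_value_Icc' hT0.le hpath h0mem
  exact hnz t ht hteq

set_option maxHeartbeats 1600000

/-- N-barrier maximum principle for systems of three equations,
upper bound. -/
theorem NBMP_three_equations_upper_bound
    (d₁ d₂ d₃ θ : ℝ) (hd₁ : 0 < d₁) (hd₂ : 0 < d₂) (hd₃ : 0 < d₃)
    (ubar ulow vbar vlow wbar wlow : ℝ)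
    (hulow : 0 < ulow) (huu : ulow < ubar)
    (hvlow : 0 < vlow) (hvv : vlow < vbar)
    (hwlow : 0 < wlow) (hww : wlow < wbar)
    (PH : Set (ℝ × ℝ × ℝ))
    (hPH : PH = {p : ℝ × ℝ × ℝ | 0 ≤ p.1 ∧ 0 ≤ p.2.1 ∧ 0 ≤ p.2.2 ∧
      1 ≤ p.1 / ulow + p.2.1 / vlow + p.2.2 / wlow ∧
      p.1 / ubar + p.2.1 / vbar + p.2.2 / wbar ≤ 1})
    (f g h : ℝ → ℝ → ℝ → ℝ)
    (hfc : ContinuousOn (fun p : ℝ × ℝ × ℝ => f p.1 p.2.1 p.2.2)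
      {p | 0 ≤ p.1 ∧ 0 ≤ p.2.1 ∧ 0 ≤ p.2.2})
    (hgc : ContinuousOn (fun p : ℝ × ℝ × ℝ => g p.1 p.2.1 p.2.2)
      {p | 0 ≤ p.1 ∧ 0 ≤ p.2.1 ∧ 0 ≤ p.2.2})
    (hhc : ContinuousOn (fun p : ℝ × ℝ × ℝ => h p.1 p.2.1 p.2.2)
      {p | 0 ≤ p.1 ∧ 0 ≤ p.2.1 ∧ 0 ≤ p.2.2})
    (hSf : {p : ℝ × ℝ × ℝ | 0 ≤ p.1 ∧ 0 ≤ p.2.1 ∧ 0 ≤ p.2.2 ∧ f p.1 p.2.1 p.2.2 = 0} ⊆ PH)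
    (hSg : {p : ℝ × ℝ × ℝ | 0 ≤ p.1 ∧ 0 ≤ p.2.1 ∧ 0 ≤ p.2.2 ∧ g p.1 p.2.1 p.2.2 = 0} ⊆ PH)
    (hSh : {p : ℝ × ℝ × ℝ | 0 ≤ p.1 ∧ 0 ≤ p.2.1 ∧ 0 ≤ p.2.2 ∧ h p.1 p.2.1 p.2.2 = 0} ⊆ PH)
    (hsmall : ∃ δ > 0, ∀ u v w : ℝ, 0 < u → u < δ → 0 < v → v < δ → 0 < w → w < δ →
      0 < f u v w ∧ 0 < g u v w ∧ 0 < h u v w)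
    (hlarge : ∃ M > 0, ∀ u v w : ℝ, M < u → M < v → M < w →
      f u v w < 0 ∧ g u v w < 0 ∧ h u v w < 0)
    (u v w : ℝ → ℝ)
    (hu : ContDiff ℝ 2 u) (hv : ContDiff ℝ 2 v) (hw : ContDiff ℝ 2 w)
    (hupos : ∀ x, 0 < u x) (hvpos : ∀ x, 0 < v x) (hwpos : ∀ x, 0 < w x)
    (hueq : ∀ x, d₁ * deriv (deriv u) x + θ * deriv u x
      + u x * f (u x) (v x) (w x) = 0)
    (hveq : ∀ x, d₂ * deriv (deriv v) x + θ * deriv v x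
      + v x * g (u x) (v x) (w x) = 0)
    (hweq : ∀ x, d₃ * deriv (deriv w) x + θ * deriv w x
      + w x * h (u x) (v x) (w x) = 0)
    (eminus eplus : ℝ × ℝ × ℝ)
    (hlimminus : Tendsto (fun x => (u x, v x, w x)) atBot (nhds eminus))
    (hlimplus : Tendsto (fun x => (u x, v x, w x)) atTop (nhds eplus))
    (heminus : eminus = (0, 0, 0) ∨
      (∃ u₁ : ℝ, 0 < u₁ ∧ f u₁ 0 0 = 0 ∧ eminus = (u₁, 0, 0)) ∨
      (∃ v₂ : ℝ, 0 < v₂ ∧ g 0 v₂ 0 = 0 ∧ eminus = (0, v₂, 0)) ∨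
      (∃ w₃ : ℝ, 0 < w₃ ∧ h 0 0 w₃ = 0 ∧ eminus = (0, 0, w₃)) ∨
      (∃ us vs ws : ℝ, 0 < us ∧ 0 < vs ∧ 0 < ws ∧
        f us vs ws = 0 ∧ g us vs ws = 0 ∧ h us vs ws = 0 ∧ eminus = (us, vs, ws)))
    (heplus : eplus = (0, 0, 0) ∨
      (∃ u₁ : ℝ, 0 < u₁ ∧ f u₁ 0 0 = 0 ∧ eplus = (u₁, 0, 0)) ∨
      (∃ v₂ : ℝ, 0 < v₂ ∧ g 0 v₂ 0 = 0 ∧ eplus = (0, v₂, 0)) ∨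
      (∃ w₃ : ℝ, 0 < w₃ ∧ h 0 0 w₃ = 0 ∧ eplus = (0, 0, w₃)) ∨
      (∃ us vs ws : ℝ, 0 < us ∧ 0 < vs ∧ 0 < ws ∧
        f us vs ws = 0 ∧ g us vs ws = 0 ∧ h us vs ws = 0 ∧ eplus = (us, vs, ws)))
    (α β γ : ℝ) (hα : 0 < α) (hβ : 0 < β) (hγ : 0 < γ) (x : ℝ) :
    α * u x + β * v x + γ * w x ≤
      max (α * ubar) (max (β * vbar) (γ * wbar)) *
        (max d₁ (max d₂ d₃) / min d₁ (min d₂ d₃)) := by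
  classical
  set dmax : ℝ := max d₁ (max d₂ d₃) with hdmaxdef
  set dmin : ℝ := min d₁ (min d₂ d₃) with hdmindef
  set lam : ℝ := max (α * ubar) (max (β * vbar) (γ * wbar)) with hlamdef
  have hub : 0 < ubar := hulow.trans huu
  have hvb : 0 < vbar := hvlow.trans hvv
  have hwb : 0 < wbar := hwlow.trans hww
  have hdmin0 : 0 < dmin := lt_min hd₁ (lt_min hd₂ hd₃)
  have hdmax1 : d₁ ≤ dmax := le_max_left _ _
  have hdmax2 : d₂ ≤ dmax := le_trans (le_max_left _ _) (le_max_right _ _)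
  have hdmax3 : d₃ ≤ dmax := le_trans (le_max_right _ _) (le_max_right _ _)
  have hdmin1 : dmin ≤ d₁ := min_le_left _ _
  have hdmin2 : dmin ≤ d₂ := le_trans (min_le_right _ _) (min_le_left _ _)
  have hdmin3 : dmin ≤ d₃ := le_trans (min_le_right _ _) (min_le_right _ _)
  have hdmax0 : 0 < dmax := lt_of_lt_of_le hd₁ hdmax1
  have hminmax : dmin ≤ dmax := le_trans hdmin1 hdmax1
  have hD1 : 1 ≤ dmax / dmin := (one_le_div hdmin0).mpr hminmax
  have hDpos : 0 < dmax / dmin := div_pos hdmax0 hdmin0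
  have hlam0 : 0 < lam := lt_of_lt_of_le (mul_pos hα hub) (le_max_left _ _)
  -- bound from the upper plane
  have plane : ∀ p q r : ℝ, 0 ≤ p → 0 ≤ q → 0 ≤ r →
      p / ubar + q / vbar + r / wbar ≤ 1 → α * p + β * q + γ * r ≤ lam := by
    intro p q r hp hq hr hS1
    have e1 : α * p = (α * ubar) * (p / ubar) := by field_simp
    have e2 : β * q = (β * vbar) * (q / vbar) := by field_simp
    have e3 : γ * r = (γ * wbar) * (r / wbar) := by field_simp
    have l1 : α * ubar ≤ lam := le_max_left _ _
    have l2 : β * vbar ≤ lam := le_trans (le_max_left _ _) (le_max_right _ _)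
    have l3 : γ * wbar ≤ lam := le_trans (le_max_right _ _) (le_max_right _ _)
    have hp' : 0 ≤ p / ubar := by positivity
    have hq' : 0 ≤ q / vbar := by positivity
    have hr' : 0 ≤ r / wbar := by positivity
    calc α * p + β * q + γ * r
        = (α * ubar) * (p / ubar) + (β * vbar) * (q / vbar) + (γ * wbar) * (r / wbar) := by
          rw [← e1, ← e2, ← e3]
      _ ≤ lam * (p / ubar) + lam * (q / vbar) + lam * (r / wbar) := by
          have t1 := mul_le_mul_of_nonneg_right l1 hp'
          have t2 := mul_le_mul_of_nonneg_right l2 hq'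
          have t3 := mul_le_mul_of_nonneg_right l3 hr'
          linarith only [t1, t2, t3]
      _ = lam * (p / ubar + q / vbar + r / wbar) := by ring
      _ ≤ lam * 1 := mul_le_mul_of_nonneg_left hS1 hlam0.le
      _ = lam := mul_one lam
  -- zero sets are inside the closed region below the upper plane
  have hzf : ∀ p q r : ℝ, 0 ≤ p → 0 ≤ q → 0 ≤ r → f p q r = 0 →
      p / ubar + q / vbar + r / wbar ≤ 1 := by
    intro p q r h1 h2 h3 h4
    have hmem := hSf (show ((p, q, r) : ℝ × ℝ × ℝ) ∈ _ from ⟨h1, h2, h3, h4⟩)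
    rw [hPH] at hmem
    exact hmem.2.2.2.2
  have hzg : ∀ p q r : ℝ, 0 ≤ p → 0 ≤ q → 0 ≤ r → g p q r = 0 →
      p / ubar + q / vbar + r / wbar ≤ 1 := by
    intro p q r h1 h2 h3 h4
    have hmem := hSg (show ((p, q, r) : ℝ × ℝ × ℝ) ∈ _ from ⟨h1, h2, h3, h4⟩)
    rw [hPH] at hmem
    exact hmem.2.2.2.2
  have hzh : ∀ p q r : ℝ, 0 ≤ p → 0 ≤ q → 0 ≤ r → h p q r = 0 →
      p / ubar + q / vbar + r / wbar ≤ 1 := by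
    intro p q r h1 h2 h3 h4
    have hmem := hSh (show ((p, q, r) : ℝ × ℝ × ℝ) ∈ _ from ⟨h1, h2, h3, h4⟩)
    rw [hPH] at hmem
    exact hmem.2.2.2.2
  -- equilibria lie below the upper plane
  have equil : ∀ e : ℝ × ℝ × ℝ,
      (e = (0, 0, 0) ∨
        (∃ u₁ : ℝ, 0 < u₁ ∧ f u₁ 0 0 = 0 ∧ e = (u₁, 0, 0)) ∨
        (∃ v₂ : ℝ, 0 < v₂ ∧ g 0 v₂ 0 = 0 ∧ e = (0, v₂, 0)) ∨
        (∃ w₃ : ℝ, 0 < w₃ ∧ h 0 0 w₃ = 0 ∧ e = (0, 0, w₃)) ∨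
        (∃ us vs ws : ℝ, 0 < us ∧ 0 < vs ∧ 0 < ws ∧
          f us vs ws = 0 ∧ g us vs ws = 0 ∧ h us vs ws = 0 ∧ e = (us, vs, ws))) →
      α * e.1 + β * e.2.1 + γ * e.2.2 ≤ lam := by
    rintro e (rfl | ⟨u₁, h1, h2, rfl⟩ | ⟨v₂, h1, h2, rfl⟩ | ⟨w₃, h1, h2, rfl⟩ |
      ⟨us, vs, ws, h1, h2, h3, h4, h5, h6, rfl⟩)
    · simpa using plane 0 0 0 le_rfl le_rfl le_rfl (by simp)
    · exact plane _ _ _ h1.le le_rfl le_rfl (hzf u₁ 0 0 h1.le le_rfl le_rfl h2)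
    · exact plane _ _ _ le_rfl h1.le le_rfl (hzg 0 v₂ 0 le_rfl h1.le le_rfl h2)
    · exact plane _ _ _ le_rfl le_rfl h1.le (hzh 0 0 w₃ le_rfl le_rfl h1.le h2)
    · exact plane _ _ _ h1.le h2.le h3.le (hzf us vs ws h1.le h2.le h3.le h4)
  -- continuity
  have hcu : Continuous u := hu.continuous
  have hcv : Continuous v := hv.continuous
  have hcw : Continuous w := hw.continuous
  set S : ℝ → ℝ := fun t => u t / ubar + v t / vbar + w t / wbar with hSdef
  have hScont : Continuous S :=
    ((hcu.div_const ubar).add (hcv.div_const vbar)).add (hcw.div_const wbar)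
  by_cases hx0 : S x ≤ 1
  · have h1 := plane (u x) (v x) (w x) (hupos x).le (hvpos x).le (hwpos x).le hx0
    have h2 : lam ≤ lam * (dmax / dmin) := le_mul_of_one_le_right hlam0.le hD1
    linarith only [h1, h2]
  push_neg at hx0
  have hlargef : ∃ M > 0, ∀ p q r : ℝ, M < p → M < q → M < r → f p q r < 0 := by
    obtain ⟨M, hM, hall⟩ := hlarge
    exact ⟨M, hM, fun p q r h1 h2 h3 => (hall p q r h1 h2 h3).1⟩
  have hlargeg : ∃ M > 0, ∀ p q r : ℝ, M < p → M < q → M < r → g p q r < 0 := by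
    obtain ⟨M, hM, hall⟩ := hlarge
    exact ⟨M, hM, fun p q r h1 h2 h3 => (hall p q r h1 h2 h3).2.1⟩
  have hlargeh : ∃ M > 0, ∀ p q r : ℝ, M < p → M < q → M < r → h p q r < 0 := by
    obtain ⟨M, hM, hall⟩ := hlarge
    exact ⟨M, hM, fun p q r h1 h2 h3 => (hall p q r h1 h2 h3).2.2⟩
  -- ODE strict differential inequalities beyond the upper plane
  have hodeu : ∀ y : ℝ, 1 < S y → 0 < d₁ * deriv (deriv u) y + θ * deriv u y := by
    intro y hy
    have he := hueq y
    have hf := sgn_neg hub hvb hwb hfc hzf hlargef (hupos y).le (hvpos y).le (hwpos y).le hy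
    have hprod : 0 < u y * -f (u y) (v y) (w y) := mul_pos (hupos y) (neg_pos.mpr hf)
    linarith only [he, hprod]
  have hodev : ∀ y : ℝ, 1 < S y → 0 < d₂ * deriv (deriv v) y + θ * deriv v y := by
    intro y hy
    have he := hveq y
    have hf := sgn_neg hub hvb hwb hgc hzg hlargeg (hupos y).le (hvpos y).le (hwpos y).le hy
    have hprod : 0 < v y * -g (u y) (v y) (w y) := mul_pos (hvpos y) (neg_pos.mpr hf)
    linarith only [he, hprod]
  have hodew : ∀ y : ℝ, 1 < S y → 0 < d₃ * deriv (deriv w) y + θ * deriv w y := by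
    intro y hy
    have he := hweq y
    have hf := sgn_neg hub hvb hwb hhc hzh hlargeh (hupos y).le (hvpos y).le (hwpos y).le hy
    have hprod : 0 < w y * -h (u y) (v y) (w y) := mul_pos (hwpos y) (neg_pos.mpr hf)
    linarith only [he, hprod]
  -- limits of the linear combination
  have hplimm : Tendsto (fun t => α * u t + β * v t + γ * w t) atBot
      (nhds (α * eminus.1 + β * eminus.2.1 + γ * eminus.2.2)) := by
    have h1 : Tendsto (fun t => u t) atBot (nhds eminus.1) :=
      (continuous_fst.tendsto eminus).comp hlimminus
    have h2 : Tendsto (fun t => v t) atBot (nhds eminus.2.1) :=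
      ((continuous_fst.comp continuous_snd).tendsto eminus).comp hlimminus
    have h3 : Tendsto (fun t => w t) atBot (nhds eminus.2.2) :=
      ((continuous_snd.comp continuous_snd).tendsto eminus).comp hlimminus
    exact ((h1.const_mul α).add (h2.const_mul β)).add (h3.const_mul γ)
  have hplimp : Tendsto (fun t => α * u t + β * v t + γ * w t) atTop
      (nhds (α * eplus.1 + β * eplus.2.1 + γ * eplus.2.2)) := by
    have h1 : Tendsto (fun t => u t) atTop (nhds eplus.1) :=
      (continuous_fst.tendsto eplus).comp hlimplus
    have h2 : Tendsto (fun t => v t) atTop (nhds eplus.2.1) :=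
      ((continuous_fst.comp continuous_snd).tendsto eplus).comp hlimplus
    have h3 : Tendsto (fun t => w t) atTop (nhds eplus.2.2) :=
      ((continuous_snd.comp continuous_snd).tendsto eplus).comp hlimplus
    exact ((h1.const_mul α).add (h2.const_mul β)).add (h3.const_mul γ)
  have hpem := equil eminus heminus
  have hpep := equil eplus heplus
  -- ε-approximation
  refine le_of_forall_pos_le_add fun ε' hε' => ?_
  set ε : ℝ := ε' / (dmax / dmin) with hεdef
  have hε0 : 0 < ε := div_pos hε' hDpos
  -- left endpoint of the excursion
  obtain ⟨a, hax, hSL, hpa⟩ : ∃ a : ℝ, a < x ∧ (∀ t, a < t → t ≤ x → 1 < S t) ∧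
      α * u a + β * v a + γ * w a ≤ lam + ε := by
    by_cases hL : ∃ t, t ≤ x ∧ S t ≤ 1
    · set L : Set ℝ := Set.Iic x ∩ {t | S t ≤ 1} with hLdef
      have hLne : L.Nonempty := by
        obtain ⟨t, h1, h2⟩ := hL
        exact ⟨t, h1, h2⟩
      have hLb : BddAbove L := ⟨x, fun t ht => ht.1⟩
      have hLc : IsClosed L := isClosed_Iic.inter (isClosed_le hScont continuous_const)
      have haL : sSup L ∈ L := hLc.csSup_mem hLne hLb
      refine ⟨sSup L, lt_of_le_of_ne haL.1 ?_, ?_, ?_⟩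
      · intro hcc
        rw [hcc] at haL
        exact absurd haL.2 (not_le.mpr hx0)
      · intro t hat htx
        by_contra hraw
        push_neg at hraw
        exact absurd (le_csSup hLb (show t ∈ L from ⟨htx, hraw⟩)) (not_le.mpr hat)
      · have := plane (u (sSup L)) (v (sSup L)) (w (sSup L))
          (hupos _).le (hvpos _).le (hwpos _).le haL.2
        linarith only [this, hε0]
    · push_neg at hL
      have hev1 : ∀ᶠ t in atBot, α * u t + β * v t + γ * w t < lam + ε :=
        hplimm.eventually_lt_const (by linarith only [hpem, hε0])
      obtain ⟨a, ha1, ha2⟩ := (hev1.and (eventually_lt_atBot x)).exists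
      exact ⟨a, ha2, fun t _ htx => hL t htx, ha1.le⟩
  obtain ⟨b, hxb, hSR, hpb⟩ : ∃ b : ℝ, x < b ∧ (∀ t, x ≤ t → t < b → 1 < S t) ∧
      α * u b + β * v b + γ * w b ≤ lam + ε := by
    by_cases hR : ∃ t, x ≤ t ∧ S t ≤ 1
    · set R : Set ℝ := Set.Ici x ∩ {t | S t ≤ 1} with hRdef
      have hRne : R.Nonempty := by
        obtain ⟨t, h1, h2⟩ := hR
        exact ⟨t, h1, h2⟩
      have hRb : BddBelow R := ⟨x, fun t ht => ht.1⟩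
      have hRc : IsClosed R := isClosed_Ici.inter (isClosed_le hScont continuous_const)
      have haR : sInf R ∈ R := hRc.csInf_mem hRne hRb
      refine ⟨sInf R, lt_of_le_of_ne haR.1 ?_, ?_, ?_⟩
      · intro hcc
        rw [← hcc] at haR
        exact absurd haR.2 (not_le.mpr hx0)
      · intro t hxt htb
        by_contra hraw
        push_neg at hraw
        exact absurd (csInf_le hRb (show t ∈ R from ⟨hxt, hraw⟩)) (not_le.mpr htb)
      · have := plane (u (sInf R)) (v (sInf R)) (w (sInf R))
          (hupos _).le (hvpos _).le (hwpos _).le haR.2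
        linarith only [this, hε0]
    · push_neg at hR
      have hev1 : ∀ᶠ t in atTop, α * u t + β * v t + γ * w t < lam + ε :=
        hplimp.eventually_lt_const (by linarith only [hpep, hε0])
      obtain ⟨b, hb1, hb2⟩ := (hev1.and (eventually_gt_atTop x)).exists
      exact ⟨b, hb2, fun t hxt _ => hR t hxt, hb1.le⟩
  have hab : a < b := hax.trans hxb
  have hSab : ∀ y ∈ Set.Ioo a b, 1 < S y := by
    intro y hy
    rcases le_or_gt y x with hc | hc
    · exact hSL y hy.1 hc
    · exact hSR y hc.le hy.2
  have hxmem : x ∈ Set.Icc a b := ⟨hax.le, hxb.le⟩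
  -- interpolation bounds with a common pivot weight ψ
  obtain ⟨ψ, ψ1, ψ2, ψ3, hub1, hub2, hub3, hψ0, hψ1, hb1, hb2, hb3⟩ :
      ∃ ψ ψ1 ψ2 ψ3 : ℝ,
        (u x ≤ u a + (u b - u a) * ψ1) ∧ (v x ≤ v a + (v b - v a) * ψ2) ∧
        (w x ≤ w a + (w b - w a) * ψ3) ∧ 0 ≤ ψ ∧ ψ ≤ 1 ∧
        (ψ1 ≤ dmax / d₁ * ψ ∧ 1 - ψ1 ≤ dmax / d₁ * (1 - ψ)) ∧
        (ψ2 ≤ dmax / d₂ * ψ ∧ 1 - ψ2 ≤ dmax / d₂ * (1 - ψ)) ∧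
        (ψ3 ≤ dmax / d₃ * ψ ∧ 1 - ψ3 ≤ dmax / d₃ * (1 - ψ)) := by
    have hr1 : 1 ≤ dmax / d₁ := (one_le_div hd₁).mpr hdmax1
    have hr2 : 1 ≤ dmax / d₂ := (one_le_div hd₂).mpr hdmax2
    have hr3 : 1 ≤ dmax / d₃ := (one_le_div hd₃).mpr hdmax3
    rcases eq_or_ne θ 0 with hθ0 | hθ0
    · -- θ = 0 : common linear weight
      set ψ : ℝ := (x - a) / (b - a) with hψdef
      have hba : (0:ℝ) < b - a := by linarith only [hab]
      have hψ0 : 0 ≤ ψ := div_nonneg (by linarith only [hax]) hba.le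
      have hψ1 : ψ ≤ 1 := by
        rw [div_le_one hba]
        linarith only [hxb]
      have hWid : ∀ dd : ℝ, ∀ y : ℝ, HasDerivAt (fun z : ℝ => z) (Real.exp (-(θ/dd)*y)) y := by
        intro dd y
        simpa [hθ0] using hasDerivAt_id' y
      have hq : ((fun z : ℝ => z) x - (fun z : ℝ => z) a) /
          ((fun z : ℝ => z) b - (fun z : ℝ => z) a) = ψ := rfl
      have h1 := core_comp hu hd₁ hab (hWid d₁) (fun y hy => hodeu y (hSab y hy)) hxmem
      have h2 := core_comp hv hd₂ hab (hWid d₂) (fun y hy => hodev y (hSab y hy)) hxmem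
      have h3 := core_comp hw hd₃ hab (hWid d₃) (fun y hy => hodew y (hSab y hy)) hxmem
      rw [hq] at h1 h2 h3
      refine ⟨ψ, ψ, ψ, ψ, h1, h2, h3, hψ0, hψ1, ?_, ?_, ?_⟩ <;>
        exact ⟨le_mul_of_one_le_left hψ0 (by assumption),
          le_mul_of_one_le_left (by linarith only [hψ1]) (by assumption)⟩
    · -- θ ≠ 0 : exponential weights
      set c : ℝ := θ / dmax with hcdef
      have hcne : c ≠ 0 := div_ne_zero hθ0 hdmax0.ne'
      set ψ : ℝ := (Real.exp (-c*a) - Real.exp (-c*x)) /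
        (Real.exp (-c*a) - Real.exp (-c*b)) with hψdef
      have hrc : ∀ dd : ℝ, 0 < dd → dd ≤ dmax → θ / dd = (dmax/dd) * c := by
        intro dd hdd _
        rw [hcdef]
        field_simp
      have hp1 := pivot (c := c) (r := dmax / d₁) hcne hr1 hax hxb
      have hp2 := pivot (c := c) (r := dmax / d₂) hcne hr2 hax hxb
      have hp3 := pivot (c := c) (r := dmax / d₃) hcne hr3 hax hxb
      rw [← hrc d₁ hd₁ hdmax1] at hp1
      rw [← hrc d₂ hd₂ hdmax2] at hp2
      rw [← hrc d₃ hd₃ hdmax3] at hp3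
      have h1 := species_bound hu hd₁ hθ0 hab (fun y hy => hodeu y (hSab y hy)) hxmem
      have h2 := species_bound hv hd₂ hθ0 hab (fun y hy => hodev y (hSab y hy)) hxmem
      have h3 := species_bound hw hd₃ hθ0 hab (fun y hy => hodew y (hSab y hy)) hxmem
      have hψmem : 0 ≤ ψ ∧ ψ ≤ 1 := by
        rcases lt_or_gt_of_ne hcne with hcneg | hcpos
        · have m1 : c * x < c * a := by
            have := mul_lt_mul_of_neg_left hax hcneg
            linarith only [this]
          have m2 : c * b < c * x := by
            have := mul_lt_mul_of_neg_left hxb hcneg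
            linarith only [this]
          have hAX : Real.exp (-c*a) < Real.exp (-c*x) :=
            Real.exp_lt_exp.mpr (by linarith only [m1])
          have hXB : Real.exp (-c*x) < Real.exp (-c*b) :=
            Real.exp_lt_exp.mpr (by linarith only [m2])
          constructor
          · exact div_nonneg_iff.mpr (Or.inr ⟨by linarith only [hAX],
              by linarith only [hAX, hXB]⟩)
          · rw [hψdef, div_le_one_iff]
            right
            right
            exact ⟨by linarith only [hAX, hXB], by linarith only [hXB]⟩
        · have m1 : c * a < c * x := by
            have := mul_lt_mul_of_pos_left hax hcpos
            linarith only [this]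
          have m2 : c * x < c * b := by
            have := mul_lt_mul_of_pos_left hxb hcpos
            linarith only [this]
          have hXA : Real.exp (-c*x) < Real.exp (-c*a) :=
            Real.exp_lt_exp.mpr (by linarith only [m1])
          have hBX : Real.exp (-c*b) < Real.exp (-c*x) :=
            Real.exp_lt_exp.mpr (by linarith only [m2])
          constructor
          · exact div_nonneg (by linarith only [hXA]) (by linarith only [hXA, hBX])
          · rw [hψdef, div_le_one (by linarith only [hXA, hBX])]
            linarith only [hBX]
      exact ⟨ψ, _, _, _, h1, h2, h3, hψmem.1, hψmem.2, hp1, hp2, hp3⟩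
  -- combine
  have hD : ∀ ua ub' ψi ri : ℝ, 0 ≤ ua → 0 ≤ ub' → 1 ≤ ri → ri ≤ dmax / dmin →
      ψi ≤ ri * ψ → 1 - ψi ≤ ri * (1 - ψ) →
      ua + (ub' - ua) * ψi ≤ dmax / dmin * ((1 - ψ) * ua + ψ * ub') := by
    intro ua ub' ψi ri h1 h2 h3 h4 h5 h6
    have e : ua + (ub' - ua) * ψi = (1 - ψi) * ua + ψi * ub' := by ring
    rw [e]
    have t1 : (1 - ψi) * ua ≤ ri * (1 - ψ) * ua := mul_le_mul_of_nonneg_right h6 h1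
    have t2 : ψi * ub' ≤ ri * ψ * ub' := mul_le_mul_of_nonneg_right h5 h2
    have t3 : ri * (1 - ψ) * ua ≤ dmax / dmin * (1 - ψ) * ua :=
      mul_le_mul_of_nonneg_right (mul_le_mul_of_nonneg_right h4 (by linarith)) h1
    have t4 : ri * ψ * ub' ≤ dmax / dmin * ψ * ub' :=
      mul_le_mul_of_nonneg_right (mul_le_mul_of_nonneg_right h4 hψ0) h2
    have expand : dmax / dmin * ((1 - ψ) * ua + ψ * ub')
        = dmax / dmin * (1 - ψ) * ua + dmax / dmin * ψ * ub' := by ring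
    linarith only [t1, t2, t3, t4, expand]
  have hr1 : 1 ≤ dmax / d₁ := (one_le_div hd₁).mpr hdmax1
  have hr2 : 1 ≤ dmax / d₂ := (one_le_div hd₂).mpr hdmax2
  have hr3 : 1 ≤ dmax / d₃ := (one_le_div hd₃).mpr hdmax3
  have hrD1 : dmax / d₁ ≤ dmax / dmin := by
    apply div_le_div_of_nonneg_left hdmax0.le hdmin0 hdmin1
  have hrD2 : dmax / d₂ ≤ dmax / dmin := by
    apply div_le_div_of_nonneg_left hdmax0.le hdmin0 hdmin2
  have hrD3 : dmax / d₃ ≤ dmax / dmin := by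
    apply div_le_div_of_nonneg_left hdmax0.le hdmin0 hdmin3
  have c1 : u x ≤ dmax / dmin * ((1 - ψ) * u a + ψ * u b) :=
    le_trans hub1 (hD (u a) (u b) ψ1 (dmax / d₁) (hupos a).le (hupos b).le hr1 hrD1 hb1.1 hb1.2)
  have c2 : v x ≤ dmax / dmin * ((1 - ψ) * v a + ψ * v b) :=
    le_trans hub2 (hD (v a) (v b) ψ2 (dmax / d₂) (hvpos a).le (hvpos b).le hr2 hrD2 hb2.1 hb2.2)
  have c3 : w x ≤ dmax / dmin * ((1 - ψ) * w a + ψ * w b) :=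
    le_trans hub3 (hD (w a) (w b) ψ3 (dmax / d₃) (hwpos a).le (hwpos b).le hr3 hrD3 hb3.1 hb3.2)
  have csum : α * u x + β * v x + γ * w x ≤
      dmax / dmin * ((1 - ψ) * (α * u a + β * v a + γ * w a)
        + ψ * (α * u b + β * v b + γ * w b)) := by
    have m1 := mul_le_mul_of_nonneg_left c1 hα.le
    have m2 := mul_le_mul_of_nonneg_left c2 hβ.le
    have m3 := mul_le_mul_of_nonneg_left c3 hγ.le
    have expand : dmax / dmin * ((1 - ψ) * (α * u a + β * v a + γ * w a)
        + ψ * (α * u b + β * v b + γ * w b))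
      = α * (dmax / dmin * ((1 - ψ) * u a + ψ * u b))
        + β * (dmax / dmin * ((1 - ψ) * v a + ψ * v b))
        + γ * (dmax / dmin * ((1 - ψ) * w a + ψ * w b)) := by ring
    linarith only [m1, m2, m3, expand]
  have cfin : dmax / dmin * ((1 - ψ) * (α * u a + β * v a + γ * w a)
      + ψ * (α * u b + β * v b + γ * w b)) ≤ dmax / dmin * (lam + ε) := by
    apply mul_le_mul_of_nonneg_left ?_ hDpos.le
    have t1 : (1 - ψ) * (α * u a + β * v a + γ * w a) ≤ (1 - ψ) * (lam + ε) :=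
      mul_le_mul_of_nonneg_left hpa (by linarith)
    have t2 : ψ * (α * u b + β * v b + γ * w b) ≤ ψ * (lam + ε) :=
      mul_le_mul_of_nonneg_left hpb hψ0
    linarith only [t1, t2]
  have hfinal : dmax / dmin * (lam + ε) = lam * (dmax / dmin) + ε' := by
    rw [hεdef]
    field_simp
  linarith only [csum, cfin, hfinal]
end

section
/- (N-barrier maximum principle for systems of three equations: lower bound.) Let d₁, d₂, d₃ > 0 and θ ∈ ℝ. Let ū > u̲ > 0, v̄ > v̲ > 0, w̄ > w̲ > 0, and let PH = {(u,v,w) ∈ ℝ³ : u,v,w ≥ 0, u/u̲ + v/v̲ + w/w̲ ≥ 1, u/ū + v/v̄ + w/w̄ ≤ 1}. Let f, g, h be continuous real-valued functions on [0,∞)³ satisfying: (i) the zero sets {f = 0}, {g = 0}, {h = 0} in the closed first octant are contained in PH; (ii) there exists δ > 0 such that f, g, h > 0 at every (u,v,w) with 0 < u,v,w < δ; (iii) there exists M > 0 such that f, g, h < 0 at every (u,v,w) with u,v,w > M. Suppose u, v, w : ℝ → ℝ are twice continuously differentiable functions, positive on ℝ, satisfying d₁u'' + θu' + u f(u,v,w)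 = 0, d₂v'' + θv' + v g(u,v,w) = 0, and d₃w'' + θw' + w h(u,v,w) = 0 on ℝ, and such that (u(x),v(x),w(x)) converges as x → −∞ to a point e₋ and as x → +∞ to a point e₊, where each of e₋ and e₊ is one of: a point (u₁,0,0) with u₁ > 0 and f(u₁,0,0) = 0; a point (0,v₂,0) with v₂ > 0 and g(0,v₂,0) = 0; a point (0,0,w₃) with w₃ > 0 and h(0,0,w₃) = 0; or a point (u*,v*,w*) with u*,v*,w* > 0 and f(u*,v*,w*) = g(u*,v*,w*) = h(u*,v*,w*) = 0 (in particular, neither e₋ nor e₊ is the extinction state (0,0,0)). Then for every α, β, γ > 0 and every x ∈ ℝ, α·u(x) + β·v(x) + γ·w(x) ≥ min(α·u̲, β·v̲, γ·w̲) · min(d₁,d₂,d₃)/max(d₁,d₂,d₃). -/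
open Filter Set

private lemma NBMP_deriv_nonneg_left {P : ℝ → ℝ} {P'b z₁ b : ℝ} (hd : HasDerivAt P P'b b)
    (hz : z₁ < b) (hlt : ∀ s, z₁ < s → s < b → P s < P b) : 0 ≤ P'b := by
  rw [hasDerivAt_iff_tendsto_slope] at hd
  have hne : (nhdsWithin b (Ioo z₁ b)).NeBot := by
    refine mem_closure_iff_nhdsWithin_neBot.mp ?_
    rw [closure_Ioo hz.ne]
    exact right_mem_Icc.mpr hz.le
  have hd' : Tendsto (slope P b) (nhdsWithin b (Ioo z₁ b)) (nhds P'b) :=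
    hd.mono_left (nhdsWithin_mono b (fun s hs => (hs.2.ne : s ≠ b)))
  refine ge_of_tendsto hd' ?_
  filter_upwards [self_mem_nhdsWithin] with s hs
  have h1 : P s - P b ≤ 0 := (sub_neg.mpr (hlt s hs.1 hs.2)).le
  have h2 : s - b ≤ 0 := (sub_neg.mpr hs.2).le
  rw [slope_def_field]
  exact div_nonneg_iff.mpr (Or.inr ⟨h1, h2⟩)

private lemma NBMP_deriv_nonpos_right {P : ℝ → ℝ} {P'a z₁ a : ℝ} (hd : HasDerivAt P P'a a)
    (hz : a < z₁) (hlt : ∀ s, a < s → s < z₁ → P s < P a) : P'a ≤ 0 := by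
  rw [hasDerivAt_iff_tendsto_slope] at hd
  have hne : (nhdsWithin a (Ioo a z₁)).NeBot := by
    refine mem_closure_iff_nhdsWithin_neBot.mp ?_
    rw [closure_Ioo hz.ne]
    exact left_mem_Icc.mpr hz.le
  have hd' : Tendsto (slope P a) (nhdsWithin a (Ioo a z₁)) (nhds P'a) :=
    hd.mono_left (nhdsWithin_mono a (fun s hs => (hs.1.ne' : s ≠ a)))
  refine le_of_tendsto hd' ?_
  filter_upwards [self_mem_nhdsWithin] with s hs
  have h1 : P s - P a ≤ 0 := (sub_neg.mpr (hlt s hs.1 hs.2)).le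
  have h2 : 0 ≤ s - a := (sub_pos.mpr hs.1).le
  rw [slope_def_field]
  exact div_nonpos_of_nonpos_of_nonneg h1 h2

private lemma NBMP_pos_of_ivt (ulow vlow wlow : ℝ) (hul : 0 < ulow) (hvl : 0 < vlow)
    (hwl : 0 < wlow) (f : ℝ → ℝ → ℝ → ℝ)
    (hfc : ContinuousOn (fun p : ℝ × ℝ × ℝ => f p.1 p.2.1 p.2.2)
      {p : ℝ × ℝ × ℝ | 0 ≤ p.1 ∧ 0 ≤ p.2.1 ∧ 0 ≤ p.2.2})
    (hzero : ∀ a b c : ℝ, 0 < a → 0 < b → 0 < c →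
      a / ulow + b / vlow + c / wlow < 1 → f a b c ≠ 0)
    (δ : ℝ) (hδ : 0 < δ)
    (hpos : ∀ a b c : ℝ, 0 < a → a < δ → 0 < b → b < δ → 0 < c → c < δ → 0 < f a b c)
    {a b c : ℝ} (ha : 0 < a) (hb : 0 < b) (hc : 0 < c)
    (hsum : a / ulow + b / vlow + c / wlow < 1) : 0 < f a b c := by
  by_contra hle
  push_neg at hle
  have hflt : f a b c < 0 := lt_of_le_of_ne hle (hzero a b c ha hb hc hsum)
  set S : ℝ := 1/ulow + 1/vlow + 1/wlow with hS_def
  have hSpos : 0 < S := by positivity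
  set t : ℝ := min (δ/2) (1/(2*S)) with ht_def
  have htpos : 0 < t := lt_min (by positivity) (by positivity)
  have htδ : t < δ := lt_of_le_of_lt (min_le_left _ _) (by linarith)
  have htsum : t / ulow + t / vlow + t / wlow < 1 := by
    have h1 : t / ulow + t / vlow + t / wlow = t * S := by rw [hS_def]; ring
    have h2 : t ≤ 1/(2*S) := min_le_right _ _
    have h3 : t * S ≤ (1/(2*S)) * S := mul_le_mul_of_nonneg_right h2 hSpos.le
    have h4 : (1/(2*S)) * S = 1/2 := by field_simp
    linarith
  have hft : 0 < f t t t := hpos t t t htpos htδ htpos htδ htpos htδ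
  -- path from (t,t,t) to (a,b,c)
  set p : ℝ → ℝ × ℝ × ℝ := fun r => ((1-r)*t + r*a, (1-r)*t + r*b, (1-r)*t + r*c) with hp_def
  have hco : ∀ (x : ℝ), 0 < x → ∀ r ∈ Icc (0:ℝ) 1, 0 < (1-r)*t + r*x := by
    intro x hx r hr
    have h1 : min t x ≤ t := min_le_left _ _
    have h2 : min t x ≤ x := min_le_right _ _
    have h3 : 0 < min t x := lt_min htpos hx
    nlinarith [hr.1, hr.2]
  have hpsum : ∀ r ∈ Icc (0:ℝ) 1,
      ((1-r)*t + r*a)/ulow + ((1-r)*t + r*b)/vlow + ((1-r)*t + r*c)/wlow < 1 := by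
    intro r hr
    have heq : ((1-r)*t + r*a)/ulow + ((1-r)*t + r*b)/vlow + ((1-r)*t + r*c)/wlow
        = (1-r)*(t/ulow + t/vlow + t/wlow) + r*(a/ulow + b/vlow + c/wlow) := by ring
    rw [heq]
    rcases eq_or_lt_of_le hr.2 with h1 | h1
    · subst h1; simpa using hsum
    · nlinarith [hr.1, htsum, hsum]
  have hcont : ContinuousOn (fun r => f (p r).1 (p r).2.1 (p r).2.2) (Icc 0 1) := by
    apply hfc.comp
    · fun_prop
    · intro r hr
      exact ⟨(hco a ha r hr).le, (hco b hb r hr).le, (hco c hc r hr).le⟩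
  have h01 : (0:ℝ) ≤ 1 := by norm_num
  have himg := intermediate_value_Icc' h01 hcont
  have h0mem : (0:ℝ) ∈ Icc (f (p 1).1 (p 1).2.1 (p 1).2.2) (f (p 0).1 (p 0).2.1 (p 0).2.2) := by
    constructor
    · show f (p 1).1 (p 1).2.1 (p 1).2.2 ≤ 0
      have : p 1 = (a, b, c) := by rw [hp_def]; norm_num
      rw [this]; exact hflt.le
    · show (0:ℝ) ≤ f (p 0).1 (p 0).2.1 (p 0).2.2
      have : p 0 = (t, t, t) := by rw [hp_def]; norm_num
      rw [this]; exact hft.le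
  obtain ⟨r, hrmem, hr0⟩ := himg h0mem
  exact hzero _ _ _ (hco a ha r hrmem) (hco b hb r hrmem) (hco c hc r hrmem)
    (hpsum r hrmem) hr0

private lemma NBMP_core (θ lam dmax Lp Lm x₀ : ℝ) (P P' Q F' : ℝ → ℝ)
    (hlampos : 0 < lam) (hdmaxpos : 0 < dmax)
    (hPdv : ∀ s, HasDerivAt P (P' s) s)
    (hFdv : ∀ s, HasDerivAt (fun r => P' r + θ * Q r) (F' s) s)
    (hF'neg : ∀ s, P s < lam → F' s < 0)
    (hQge : ∀ s, P s / dmax ≤ Q s)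
    (hQsm : ∀ s, P s ≤ P x₀ → Q s < lam / dmax)
    (hx0 : P x₀ < lam)
    (hPtop : Tendsto P atTop (nhds Lp)) (hPbot : Tendsto P atBot (nhds Lm))
    (hLp : lam ≤ Lp) (hLm : lam ≤ Lm) : False := by
  set F : ℝ → ℝ := fun r => P' r + θ * Q r with hF_def
  have hFval : ∀ s, F s = P' s + θ * Q s := fun _ => rfl
  have hFdiff : Differentiable ℝ F := fun s => (hFdv s).differentiableAt
  have hFc : Continuous F := hFdiff.continuous
  have hderivF : ∀ s, deriv F s = F' s := fun s => (hFdv s).deriv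
  have hPdiff : Differentiable ℝ P := fun s => (hPdv s).differentiableAt
  have hPc : Continuous P := hPdiff.continuous
  have hderivP : ∀ s, deriv P s = P' s := fun s => (hPdv s).deriv
  obtain ⟨Rp, hRp⟩ := eventually_atTop.mp (hPtop.eventually (eventually_gt_nhds (lt_of_lt_of_le hx0 hLp)))
  obtain ⟨Rm, hRm⟩ := eventually_atBot.mp (hPbot.eventually (eventually_gt_nhds (lt_of_lt_of_le hx0 hLm)))
  have hxmem : x₀ ∈ Icc (min Rm x₀) (max Rp x₀) := ⟨min_le_right _ _, le_max_right _ _⟩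
  obtain ⟨z₁, hz₁mem, hz₁min⟩ := isCompact_Icc.exists_isMinOn ⟨x₀, hxmem⟩ hPc.continuousOn
  rw [isMinOn_iff] at hz₁min
  have hglob : ∀ y, P z₁ ≤ P y := by
    intro y
    rcases le_or_gt y (max Rp x₀) with h1 | h1
    · rcases le_or_gt (min Rm x₀) y with h2 | h2
      · exact hz₁min y ⟨h2, h1⟩
      · exact (hz₁min x₀ hxmem).trans (hRm y (h2.le.trans (min_le_left _ _))).le
    · exact (hz₁min x₀ hxmem).trans (hRp y ((le_max_left _ _).trans h1.le)).le
  have hPz₁x : P z₁ ≤ P x₀ := hglob x₀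
  have hPz₁lam : P z₁ < lam := lt_of_le_of_lt hPz₁x hx0
  have hQz₁ : Q z₁ < lam / dmax := hQsm z₁ hPz₁x
  have hlocmin : IsLocalMin P z₁ := Filter.Eventually.of_forall (fun y => hglob y)
  have hP'z₁ : P' z₁ = 0 := hlocmin.hasDerivAt_eq_zero (hPdv z₁)
  have hFz₁ : F z₁ = θ * Q z₁ := by rw [hFval, hP'z₁, zero_add]
  rcases le_or_gt θ 0 with hθ | hθ
  · -- θ ≤ 0 : work to the left of z₁
    by_cases hS : {s : ℝ | s ≤ z₁ ∧ lam ≤ P s}.Nonempty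
    · set a := sSup {s : ℝ | s ≤ z₁ ∧ lam ≤ P s} with ha_def
      have hclosed : IsClosed {s : ℝ | s ≤ z₁ ∧ lam ≤ P s} := by
        have : {s : ℝ | s ≤ z₁ ∧ lam ≤ P s} = Iic z₁ ∩ {s | lam ≤ P s} := rfl
        rw [this]
        exact isClosed_Iic.inter (isClosed_le continuous_const hPc)
      have hbdd : BddAbove {s : ℝ | s ≤ z₁ ∧ lam ≤ P s} := ⟨z₁, fun s hs => hs.1⟩
      have haS := hclosed.csSup_mem hS hbdd
      have halam : lam ≤ P a := haS.2
      have haz : a < z₁ := lt_of_le_of_ne haS.1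
        (fun he => absurd (he ▸ halam) (not_le.mpr hPz₁lam))
      have hbet : ∀ s, a < s → s ≤ z₁ → P s < lam := by
        intro s h1 h2
        by_contra hge
        push_neg at hge
        exact absurd (le_csSup hbdd ⟨h2, hge⟩) (not_le.mpr h1)
      have hP'a : P' a ≤ 0 :=
        NBMP_deriv_nonpos_right (hPdv a) haz
          (fun s h1 h2 => lt_of_lt_of_le (hbet s h1 h2.le) halam)
      have hanti : StrictAntiOn F (Icc a z₁) := by
        apply strictAntiOn_of_deriv_neg (convex_Icc _ _) hFc.continuousOn
        intro s hs
        rw [interior_Icc] at hs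
        rw [hderivF s]
        exact hF'neg s (hbet s hs.1 hs.2.le)
      have hFa : F z₁ < F a := hanti ⟨le_refl a, haz.le⟩ ⟨haz.le, le_refl z₁⟩ haz
      have hQa : lam / dmax ≤ Q a :=
        le_trans ((div_le_div_iff_of_pos_right hdmaxpos).mpr halam) (hQge a)
      have h1 : θ * Q a ≤ θ * (lam / dmax) := mul_le_mul_of_nonpos_left hQa hθ
      have h2 : θ * (lam / dmax) ≤ θ * Q z₁ := mul_le_mul_of_nonpos_left hQz₁.le hθ
      have hFa' : F a = P' a + θ * Q a := hFval a
      linarith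
    · have hall : ∀ s, s ≤ z₁ → P s < lam := by
        intro s hs
        by_contra hge
        push_neg at hge
        exact hS ⟨s, hs, hge⟩
      have hLmeq : Lm = lam :=
        le_antisymm (le_of_tendsto hPbot (eventually_atBot.mpr ⟨z₁, fun s hs => (hall s hs).le⟩)) hLm
      have hanti : StrictAntiOn F (Iic z₁) := by
        apply strictAntiOn_of_deriv_neg (convex_Iic _) hFc.continuousOn
        intro s hs
        rw [interior_Iic] at hs
        rw [hderivF s]
        exact hF'neg s (hall s hs.le)
      have hQlt : dmax * Q z₁ < Lm := by
        rw [hLmeq]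
        have := (lt_div_iff₀ hdmaxpos).mp hQz₁
        linarith
      obtain ⟨X₀, hX₀⟩ := eventually_atBot.mp (hPbot.eventually (eventually_gt_nhds hQlt))
      set X := min X₀ (z₁ - 1) with hX_def
      have hXz : X < z₁ := lt_of_le_of_lt (min_le_right _ _) (by linarith)
      have hP'pos : ∀ s ∈ interior (Iic X), 0 ≤ deriv P s := by
        intro s hs
        rw [interior_Iic] at hs
        have hsz : s < z₁ := hs.trans hXz
        have h1 : F z₁ < F s := hanti (mem_Iic.mpr hsz.le) (mem_Iic.mpr le_rfl) hsz
        have h2 : dmax * Q z₁ < P s := hX₀ s (hs.le.trans (min_le_left _ _))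
        have h3 : Q z₁ < Q s :=
          lt_of_lt_of_le ((lt_div_iff₀ hdmaxpos).mpr (by linarith)) (hQge s)
        have h4 : 0 ≤ (-θ) * (Q s - Q z₁) := mul_nonneg (neg_nonneg.mpr hθ) (by linarith)
        have h5 : F s = P' s + θ * Q s := hFval s
        rw [hderivP s]
        nlinarith
      have hmono : MonotoneOn P (Iic X) :=
        monotoneOn_of_deriv_nonneg (convex_Iic _) hPc.continuousOn
          (fun s _ => (hPdv s).differentiableAt.differentiableWithinAt) hP'pos
      have hlast : Lm ≤ P X :=
        le_of_tendsto hPbot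
          (eventually_atBot.mpr ⟨X, fun s hs => hmono (mem_Iic.mpr hs) (mem_Iic.mpr le_rfl) hs⟩)
      rw [hLmeq] at hlast
      exact absurd hlast (not_le.mpr (hall X hXz.le))
  · -- θ > 0 : work to the right of z₁
    by_cases hS : {s : ℝ | z₁ ≤ s ∧ lam ≤ P s}.Nonempty
    · set b := sInf {s : ℝ | z₁ ≤ s ∧ lam ≤ P s} with hb_def
      have hclosed : IsClosed {s : ℝ | z₁ ≤ s ∧ lam ≤ P s} := by
        have : {s : ℝ | z₁ ≤ s ∧ lam ≤ P s} = Ici z₁ ∩ {s | lam ≤ P s} := rfl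
        rw [this]
        exact isClosed_Ici.inter (isClosed_le continuous_const hPc)
      have hbdd : BddBelow {s : ℝ | z₁ ≤ s ∧ lam ≤ P s} := ⟨z₁, fun s hs => hs.1⟩
      have hbS := hclosed.csInf_mem hS hbdd
      have hblam : lam ≤ P b := hbS.2
      have hbz : z₁ < b := lt_of_le_of_ne hbS.1
        (fun he => absurd (he ▸ hblam) (not_le.mpr hPz₁lam))
      have hbet : ∀ s, z₁ ≤ s → s < b → P s < lam := by
        intro s h1 h2
        by_contra hge
        push_neg at hge
        exact absurd (csInf_le hbdd ⟨h1, hge⟩) (not_le.mpr h2)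
      have hP'b : 0 ≤ P' b :=
        NBMP_deriv_nonneg_left (hPdv b) hbz
          (fun s h1 h2 => lt_of_lt_of_le (hbet s h1.le h2) hblam)
      have hanti : StrictAntiOn F (Icc z₁ b) := by
        apply strictAntiOn_of_deriv_neg (convex_Icc _ _) hFc.continuousOn
        intro s hs
        rw [interior_Icc] at hs
        rw [hderivF s]
        exact hF'neg s (hbet s hs.1.le hs.2)
      have hFb : F b < F z₁ := hanti ⟨le_refl z₁, hbz.le⟩ ⟨hbz.le, le_refl b⟩ hbz
      have hQb : lam / dmax ≤ Q b :=
        le_trans ((div_le_div_iff_of_pos_right hdmaxpos).mpr hblam) (hQge b)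
      have h1 : θ * (lam / dmax) ≤ θ * Q b := mul_le_mul_of_nonneg_left hQb hθ.le
      have h2 : θ * Q z₁ < θ * (lam / dmax) := mul_lt_mul_of_pos_left hQz₁ hθ
      have hFb' : F b = P' b + θ * Q b := hFval b
      linarith
    · have hall : ∀ s, z₁ ≤ s → P s < lam := by
        intro s hs
        by_contra hge
        push_neg at hge
        exact hS ⟨s, hs, hge⟩
      have hLpeq : Lp = lam :=
        le_antisymm (le_of_tendsto hPtop (eventually_atTop.mpr ⟨z₁, fun s hs => (hall s hs).le⟩)) hLp
      have hanti : StrictAntiOn F (Ici z₁) := by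
        apply strictAntiOn_of_deriv_neg (convex_Ici _) hFc.continuousOn
        intro s hs
        rw [interior_Ici] at hs
        rw [hderivF s]
        exact hF'neg s (hall s hs.le)
      have hQlt : dmax * Q z₁ < Lp := by
        rw [hLpeq]
        have := (lt_div_iff₀ hdmaxpos).mp hQz₁
        linarith
      obtain ⟨X₀, hX₀⟩ := eventually_atTop.mp (hPtop.eventually (eventually_gt_nhds hQlt))
      set X := max X₀ (z₁ + 1) with hX_def
      have hXz : z₁ < X := lt_of_lt_of_le (by linarith) (le_max_right _ _)
      have hP'neg : ∀ s ∈ interior (Ici X), deriv P s ≤ 0 := by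
        intro s hs
        rw [interior_Ici] at hs
        have hsz : z₁ < s := hXz.trans hs
        have h1 : F s < F z₁ := hanti (mem_Ici.mpr le_rfl) (mem_Ici.mpr hsz.le) hsz
        have h2 : dmax * Q z₁ < P s := hX₀ s ((le_max_left _ _).trans hs.le)
        have h3 : Q z₁ < Q s :=
          lt_of_lt_of_le ((lt_div_iff₀ hdmaxpos).mpr (by linarith)) (hQge s)
        have h4 : θ * (Q z₁ - Q s) ≤ 0 :=
          mul_nonpos_of_nonneg_of_nonpos hθ.le (by linarith)
        have h5 : F s = P' s + θ * Q s := hFval s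
        rw [hderivP s]
        nlinarith
      have hmono : AntitoneOn P (Ici X) :=
        antitoneOn_of_deriv_nonpos (convex_Ici _) hPc.continuousOn
          (fun s _ => (hPdv s).differentiableAt.differentiableWithinAt) hP'neg
      have hlast : Lp ≤ P X :=
        le_of_tendsto hPtop
          (eventually_atTop.mpr ⟨X, fun s hs => hmono (mem_Ici.mpr le_rfl) (mem_Ici.mpr hs) hs⟩)
      rw [hLpeq] at hlast
      exact absurd hlast (not_le.mpr (hall X hXz.le))

set_option maxHeartbeats 1000000

/-- N-barrier maximum principle for systems of three equations,
lower bound. -/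
theorem NBMP_three_equations_lower_bound
    (d₁ d₂ d₃ θ : ℝ) (hd₁ : 0 < d₁) (hd₂ : 0 < d₂) (hd₃ : 0 < d₃)
    (ubar ulow vbar vlow wbar wlow : ℝ)
    (hulow : 0 < ulow) (huu : ulow < ubar)
    (hvlow : 0 < vlow) (hvv : vlow < vbar)
    (hwlow : 0 < wlow) (hww : wlow < wbar)
    (PH : Set (ℝ × ℝ × ℝ))
    (hPH : PH = {p : ℝ × ℝ × ℝ | 0 ≤ p.1 ∧ 0 ≤ p.2.1 ∧ 0 ≤ p.2.2 ∧
      1 ≤ p.1 / ulow + p.2.1 / vlow + p.2.2 / wlow ∧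
      p.1 / ubar + p.2.1 / vbar + p.2.2 / wbar ≤ 1})
    (f g h : ℝ → ℝ → ℝ → ℝ)
    (hfc : ContinuousOn (fun p : ℝ × ℝ × ℝ => f p.1 p.2.1 p.2.2)
      {p | 0 ≤ p.1 ∧ 0 ≤ p.2.1 ∧ 0 ≤ p.2.2})
    (hgc : ContinuousOn (fun p : ℝ × ℝ × ℝ => g p.1 p.2.1 p.2.2)
      {p | 0 ≤ p.1 ∧ 0 ≤ p.2.1 ∧ 0 ≤ p.2.2})
    (hhc : ContinuousOn (fun p : ℝ × ℝ × ℝ => h p.1 p.2.1 p.2.2)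
      {p | 0 ≤ p.1 ∧ 0 ≤ p.2.1 ∧ 0 ≤ p.2.2})
    (hSf : {p : ℝ × ℝ × ℝ | 0 ≤ p.1 ∧ 0 ≤ p.2.1 ∧ 0 ≤ p.2.2 ∧ f p.1 p.2.1 p.2.2 = 0} ⊆ PH)
    (hSg : {p : ℝ × ℝ × ℝ | 0 ≤ p.1 ∧ 0 ≤ p.2.1 ∧ 0 ≤ p.2.2 ∧ g p.1 p.2.1 p.2.2 = 0} ⊆ PH)
    (hSh : {p : ℝ × ℝ × ℝ | 0 ≤ p.1 ∧ 0 ≤ p.2.1 ∧ 0 ≤ p.2.2 ∧ h p.1 p.2.1 p.2.2 = 0} ⊆ PH)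
    (hsmall : ∃ δ > 0, ∀ u v w : ℝ, 0 < u → u < δ → 0 < v → v < δ → 0 < w → w < δ →
      0 < f u v w ∧ 0 < g u v w ∧ 0 < h u v w)
    (hlarge : ∃ M > 0, ∀ u v w : ℝ, M < u → M < v → M < w →
      f u v w < 0 ∧ g u v w < 0 ∧ h u v w < 0)
    (u v w : ℝ → ℝ)
    (hu : ContDiff ℝ 2 u) (hv : ContDiff ℝ 2 v) (hw : ContDiff ℝ 2 w)
    (hupos : ∀ x, 0 < u x) (hvpos : ∀ x, 0 < v x) (hwpos : ∀ x, 0 < w x)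
    (hueq : ∀ x, d₁ * deriv (deriv u) x + θ * deriv u x
      + u x * f (u x) (v x) (w x) = 0)
    (hveq : ∀ x, d₂ * deriv (deriv v) x + θ * deriv v x
      + v x * g (u x) (v x) (w x) = 0)
    (hweq : ∀ x, d₃ * deriv (deriv w) x + θ * deriv w x
      + w x * h (u x) (v x) (w x) = 0)
    (eminus eplus : ℝ × ℝ × ℝ)
    (hlimminus : Tendsto (fun x => (u x, v x, w x)) atBot (nhds eminus))
    (hlimplus : Tendsto (fun x => (u x, v x, w x)) atTop (nhds eplus))
    (heminus : (∃ u₁ : ℝ, 0 < u₁ ∧ f u₁ 0 0 = 0 ∧ eminus = (u₁, 0, 0)) ∨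
      (∃ v₂ : ℝ, 0 < v₂ ∧ g 0 v₂ 0 = 0 ∧ eminus = (0, v₂, 0)) ∨
      (∃ w₃ : ℝ, 0 < w₃ ∧ h 0 0 w₃ = 0 ∧ eminus = (0, 0, w₃)) ∨
      (∃ us vs ws : ℝ, 0 < us ∧ 0 < vs ∧ 0 < ws ∧
        f us vs ws = 0 ∧ g us vs ws = 0 ∧ h us vs ws = 0 ∧ eminus = (us, vs, ws)))
    (heplus : (∃ u₁ : ℝ, 0 < u₁ ∧ f u₁ 0 0 = 0 ∧ eplus = (u₁, 0, 0)) ∨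
      (∃ v₂ : ℝ, 0 < v₂ ∧ g 0 v₂ 0 = 0 ∧ eplus = (0, v₂, 0)) ∨
      (∃ w₃ : ℝ, 0 < w₃ ∧ h 0 0 w₃ = 0 ∧ eplus = (0, 0, w₃)) ∨
      (∃ us vs ws : ℝ, 0 < us ∧ 0 < vs ∧ 0 < ws ∧
        f us vs ws = 0 ∧ g us vs ws = 0 ∧ h us vs ws = 0 ∧ eplus = (us, vs, ws)))
    (α β γ : ℝ) (hα : 0 < α) (hβ : 0 < β) (hγ : 0 < γ) (x : ℝ) :
    min (α * ulow) (min (β * vlow) (γ * wlow)) *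
        (min d₁ (min d₂ d₃) / max d₁ (max d₂ d₃)) ≤
      α * u x + β * v x + γ * w x := by

  by_contra hcon
  push_neg at hcon
  set lam := min (α * ulow) (min (β * vlow) (γ * wlow)) with hlam_def
  set dmin := min d₁ (min d₂ d₃) with hdmin_def
  set dmax := max d₁ (max d₂ d₃) with hdmax_def
  have hlampos : 0 < lam := lt_min (by positivity) (lt_min (by positivity) (by positivity))
  have hdminpos : 0 < dmin := lt_min hd₁ (lt_min hd₂ hd₃)
  have hdmaxpos : 0 < dmax := lt_of_lt_of_le hd₁ (le_max_left _ _)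
  have hdmin1 : dmin ≤ d₁ := min_le_left _ _
  have hdmin2 : dmin ≤ d₂ := le_trans (min_le_right _ _) (min_le_left _ _)
  have hdmin3 : dmin ≤ d₃ := le_trans (min_le_right _ _) (min_le_right _ _)
  have hdmax1 : d₁ ≤ dmax := le_max_left _ _
  have hdmax2 : d₂ ≤ dmax := le_trans (le_max_left _ _) (le_max_right _ _)
  have hdmax3 : d₃ ≤ dmax := le_trans (le_max_right _ _) (le_max_right _ _)
  have hdmm : dmin ≤ dmax := hdmin1.trans hdmax1
  -- differentiability
  have hu1 : Differentiable ℝ u := hu.differentiable (by norm_num)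
  have hv1 : Differentiable ℝ v := hv.differentiable (by norm_num)
  have hw1 : Differentiable ℝ w := hw.differentiable (by norm_num)
  have hu2 : Differentiable ℝ (deriv u) := by
    have h2 : ContDiff ℝ ((1 : WithTop ℕ∞) + 1) u := by norm_num; exact hu
    exact ((contDiff_succ_iff_deriv.mp h2).2.2).differentiable one_ne_zero
  have hv2 : Differentiable ℝ (deriv v) := by
    have h2 : ContDiff ℝ ((1 : WithTop ℕ∞) + 1) v := by norm_num; exact hv
    exact ((contDiff_succ_iff_deriv.mp h2).2.2).differentiable one_ne_zero
  have hw2 : Differentiable ℝ (deriv w) := by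
    have h2 : ContDiff ℝ ((1 : WithTop ℕ∞) + 1) w := by norm_num; exact hw
    exact ((contDiff_succ_iff_deriv.mp h2).2.2).differentiable one_ne_zero
  -- key combination lemma
  have hkey : ∀ a b c : ℝ, 0 ≤ a → 0 ≤ b → 0 ≤ c →
      1 ≤ a / ulow + b / vlow + c / wlow → lam ≤ α * a + β * b + γ * c := by
    intro a b c ha hb hc hsum
    have h1 : lam ≤ α * ulow := min_le_left _ _
    have h2 : lam ≤ β * vlow := le_trans (min_le_right _ _) (min_le_left _ _)
    have h3 : lam ≤ γ * wlow := le_trans (min_le_right _ _) (min_le_right _ _)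
    have k1 : lam * (a / ulow) ≤ α * a := by
      have := mul_le_mul_of_nonneg_right h1 (by positivity : 0 ≤ a / ulow)
      have e1 : α * ulow * (a / ulow) = α * a := by field_simp
      linarith
    have k2 : lam * (b / vlow) ≤ β * b := by
      have := mul_le_mul_of_nonneg_right h2 (by positivity : 0 ≤ b / vlow)
      have e2 : β * vlow * (b / vlow) = β * b := by field_simp
      linarith
    have k3 : lam * (c / wlow) ≤ γ * c := by
      have := mul_le_mul_of_nonneg_right h3 (by positivity : 0 ≤ c / wlow)
      have e3 : γ * wlow * (c / wlow) = γ * c := by field_simp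
      linarith
    have k4 : lam ≤ lam * (a / ulow + b / vlow + c / wlow) :=
      le_mul_of_one_le_right hlampos.le hsum
    nlinarith
  -- positivity of f, g, h below the lower plane
  obtain ⟨δ, hδ, hδfgh⟩ := hsmall
  have hzf : ∀ a b c : ℝ, 0 < a → 0 < b → 0 < c →
      a / ulow + b / vlow + c / wlow < 1 → f a b c ≠ 0 := by
    intro a b c ha hb hc hs hf0
    have hm := hSf (show (a, b, c) ∈ _ from ⟨ha.le, hb.le, hc.le, hf0⟩)
    rw [hPH] at hm
    exact absurd hm.2.2.2.1 (not_le.mpr hs)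
  have hzg : ∀ a b c : ℝ, 0 < a → 0 < b → 0 < c →
      a / ulow + b / vlow + c / wlow < 1 → g a b c ≠ 0 := by
    intro a b c ha hb hc hs hf0
    have hm := hSg (show (a, b, c) ∈ _ from ⟨ha.le, hb.le, hc.le, hf0⟩)
    rw [hPH] at hm
    exact absurd hm.2.2.2.1 (not_le.mpr hs)
  have hzh : ∀ a b c : ℝ, 0 < a → 0 < b → 0 < c →
      a / ulow + b / vlow + c / wlow < 1 → h a b c ≠ 0 := by
    intro a b c ha hb hc hs hf0
    have hm := hSh (show (a, b, c) ∈ _ from ⟨ha.le, hb.le, hc.le, hf0⟩)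
    rw [hPH] at hm
    exact absurd hm.2.2.2.1 (not_le.mpr hs)
  have hfp : ∀ a b c : ℝ, 0 < a → 0 < b → 0 < c →
      a / ulow + b / vlow + c / wlow < 1 → 0 < f a b c := fun a b c ha hb hc hs =>
    NBMP_pos_of_ivt ulow vlow wlow hulow hvlow hwlow f hfc hzf δ hδ
      (fun a b c h1 h2 h3 h4 h5 h6 => (hδfgh a b c h1 h2 h3 h4 h5 h6).1) ha hb hc hs
  have hgp : ∀ a b c : ℝ, 0 < a → 0 < b → 0 < c →
      a / ulow + b / vlow + c / wlow < 1 → 0 < g a b c := fun a b c ha hb hc hs =>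
    NBMP_pos_of_ivt ulow vlow wlow hulow hvlow hwlow g hgc hzg δ hδ
      (fun a b c h1 h2 h3 h4 h5 h6 => (hδfgh a b c h1 h2 h3 h4 h5 h6).2.1) ha hb hc hs
  have hhp : ∀ a b c : ℝ, 0 < a → 0 < b → 0 < c →
      a / ulow + b / vlow + c / wlow < 1 → 0 < h a b c := fun a b c ha hb hc hs =>
    NBMP_pos_of_ivt ulow vlow wlow hulow hvlow hwlow h hhc hzh δ hδ
      (fun a b c h1 h2 h3 h4 h5 h6 => (hδfgh a b c h1 h2 h3 h4 h5 h6).2.2) ha hb hc hs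
  -- the sum is below 1 whenever P is below lam
  have hsumlt : ∀ s : ℝ, α * u s + β * v s + γ * w s < lam →
      u s / ulow + v s / vlow + w s / wlow < 1 := by
    intro s hs
    by_contra hge
    push_neg at hge
    exact absurd (hkey (u s) (v s) (w s) (hupos s).le (hvpos s).le (hwpos s).le hge)
      (not_le.mpr hs)
  -- derivative setup
  have hPdv : ∀ s, HasDerivAt (fun r => α * u r + β * v r + γ * w r)
      (α * deriv u s + β * deriv v s + γ * deriv w s) s := fun s =>
    (((hu1 s).hasDerivAt.const_mul α).add ((hv1 s).hasDerivAt.const_mul β)).add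
      ((hw1 s).hasDerivAt.const_mul γ)
  have hFdv : ∀ s, HasDerivAt
      (fun r => (α * deriv u r + β * deriv v r + γ * deriv w r) +
        θ * (α / d₁ * u r + β / d₂ * v r + γ / d₃ * w r))
      (-(α / d₁ * (u s * f (u s) (v s) (w s)) + β / d₂ * (v s * g (u s) (v s) (w s))
        + γ / d₃ * (w s * h (u s) (v s) (w s)))) s := by
    intro s
    have hP'dv : HasDerivAt (fun r => α * deriv u r + β * deriv v r + γ * deriv w r)
        (α * deriv (deriv u) s + β * deriv (deriv v) s + γ * deriv (deriv w) s) s :=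
      (((hu2 s).hasDerivAt.const_mul α).add ((hv2 s).hasDerivAt.const_mul β)).add
        ((hw2 s).hasDerivAt.const_mul γ)
    have hQdv : HasDerivAt (fun r => α / d₁ * u r + β / d₂ * v r + γ / d₃ * w r)
        (α / d₁ * deriv u s + β / d₂ * deriv v s + γ / d₃ * deriv w s) s :=
      (((hu1 s).hasDerivAt.const_mul (α / d₁)).add ((hv1 s).hasDerivAt.const_mul (β / d₂))).add
        ((hw1 s).hasDerivAt.const_mul (γ / d₃))
    have base := hP'dv.add (hQdv.const_mul θ)
    have e1 : deriv (deriv u) s = -(θ * deriv u s + u s * f (u s) (v s) (w s)) / d₁ := by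
      have h0 := hueq s
      field_simp
      linarith
    have e2 : deriv (deriv v) s = -(θ * deriv v s + v s * g (u s) (v s) (w s)) / d₂ := by
      have h0 := hveq s
      field_simp
      linarith
    have e3 : deriv (deriv w) s = -(θ * deriv w s + w s * h (u s) (v s) (w s)) / d₃ := by
      have h0 := hweq s
      field_simp
      linarith
    have heq : (α * deriv (deriv u) s + β * deriv (deriv v) s + γ * deriv (deriv w) s) +
        θ * (α / d₁ * deriv u s + β / d₂ * deriv v s + γ / d₃ * deriv w s) =
        -(α / d₁ * (u s * f (u s) (v s) (w s)) + β / d₂ * (v s * g (u s) (v s) (w s))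
          + γ / d₃ * (w s * h (u s) (v s) (w s))) := by
      rw [e1, e2, e3]
      field_simp
      ring
    exact heq ▸ base
  -- F' is negative below lam
  have hF'neg : ∀ s, α * u s + β * v s + γ * w s < lam →
      (-(α / d₁ * (u s * f (u s) (v s) (w s)) + β / d₂ * (v s * g (u s) (v s) (w s))
        + γ / d₃ * (w s * h (u s) (v s) (w s)))) < 0 := by
    intro s hs
    have hsum := hsumlt s hs
    have h1 := hfp (u s) (v s) (w s) (hupos s) (hvpos s) (hwpos s) hsum
    have h2 := hgp (u s) (v s) (w s) (hupos s) (hvpos s) (hwpos s) hsum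
    have h3 := hhp (u s) (v s) (w s) (hupos s) (hvpos s) (hwpos s) hsum
    have t1 : 0 < α / d₁ * (u s * f (u s) (v s) (w s)) :=
      mul_pos (by positivity) (mul_pos (hupos s) h1)
    have t2 : 0 < β / d₂ * (v s * g (u s) (v s) (w s)) :=
      mul_pos (by positivity) (mul_pos (hvpos s) h2)
    have t3 : 0 < γ / d₃ * (w s * h (u s) (v s) (w s)) :=
      mul_pos (by positivity) (mul_pos (hwpos s) h3)
    linarith
  -- Q bounds
  have hQge : ∀ s, (α * u s + β * v s + γ * w s) / dmax ≤
      α / d₁ * u s + β / d₂ * v s + γ / d₃ * w s := by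
    intro s
    have heq : (α * u s + β * v s + γ * w s) / dmax =
        α / dmax * u s + β / dmax * v s + γ / dmax * w s := by
      field_simp
    have c1 : α / dmax ≤ α / d₁ := div_le_div_of_nonneg_left hα.le hd₁ hdmax1
    have c2 : β / dmax ≤ β / d₂ := div_le_div_of_nonneg_left hβ.le hd₂ hdmax2
    have c3 : γ / dmax ≤ γ / d₃ := div_le_div_of_nonneg_left hγ.le hd₃ hdmax3
    have m1 := mul_le_mul_of_nonneg_right c1 (hupos s).le
    have m2 := mul_le_mul_of_nonneg_right c2 (hvpos s).le
    have m3 := mul_le_mul_of_nonneg_right c3 (hwpos s).le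
    linarith
  have hQle : ∀ s, α / d₁ * u s + β / d₂ * v s + γ / d₃ * w s ≤
      (α * u s + β * v s + γ * w s) / dmin := by
    intro s
    have heq : (α * u s + β * v s + γ * w s) / dmin =
        α / dmin * u s + β / dmin * v s + γ / dmin * w s := by
      field_simp
    have c1 : α / d₁ ≤ α / dmin := div_le_div_of_nonneg_left hα.le hdminpos hdmin1
    have c2 : β / d₂ ≤ β / dmin := div_le_div_of_nonneg_left hβ.le hdminpos hdmin2
    have c3 : γ / d₃ ≤ γ / dmin := div_le_div_of_nonneg_left hγ.le hdminpos hdmin3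
    have m1 := mul_le_mul_of_nonneg_right c1 (hupos s).le
    have m2 := mul_le_mul_of_nonneg_right c2 (hvpos s).le
    have m3 := mul_le_mul_of_nonneg_right c3 (hwpos s).le
    linarith
  have hQsm : ∀ s, (α * u s + β * v s + γ * w s) ≤ (α * u x + β * v x + γ * w x) →
      α / d₁ * u s + β / d₂ * v s + γ / d₃ * w s < lam / dmax := by
    intro s hs
    refine lt_of_le_of_lt (hQle s) ?_
    rw [div_lt_div_iff₀ hdminpos hdmaxpos]
    have hx2 : (α * u x + β * v x + γ * w x) * dmax < lam * dmin := by
      have h5 := mul_lt_mul_of_pos_right hcon hdmaxpos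
      have e5 : lam * (dmin / dmax) * dmax = lam * dmin := by field_simp
      linarith
    nlinarith [mul_le_mul_of_nonneg_right hs hdmaxpos.le]
  -- limits
  have hφ : Continuous (fun pr : ℝ × ℝ × ℝ => α * pr.1 + β * pr.2.1 + γ * pr.2.2) := by
    fun_prop
  have hPtop : Tendsto (fun s => α * u s + β * v s + γ * w s) atTop
      (nhds (α * eplus.1 + β * eplus.2.1 + γ * eplus.2.2)) :=
    (hφ.tendsto eplus).comp hlimplus
  have hPbot : Tendsto (fun s => α * u s + β * v s + γ * w s) atBot
      (nhds (α * eminus.1 + β * eminus.2.1 + γ * eminus.2.2)) :=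
    (hφ.tendsto eminus).comp hlimminus
  have hLbound : ∀ e : ℝ × ℝ × ℝ,
      ((∃ u₁ : ℝ, 0 < u₁ ∧ f u₁ 0 0 = 0 ∧ e = (u₁, 0, 0)) ∨
      (∃ v₂ : ℝ, 0 < v₂ ∧ g 0 v₂ 0 = 0 ∧ e = (0, v₂, 0)) ∨
      (∃ w₃ : ℝ, 0 < w₃ ∧ h 0 0 w₃ = 0 ∧ e = (0, 0, w₃)) ∨
      (∃ us vs ws : ℝ, 0 < us ∧ 0 < vs ∧ 0 < ws ∧
        f us vs ws = 0 ∧ g us vs ws = 0 ∧ h us vs ws = 0 ∧ e = (us, vs, ws))) →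
      lam ≤ α * e.1 + β * e.2.1 + γ * e.2.2 := by
    intro e he
    rcases he with ⟨u₁, h1, h2, rfl⟩ | ⟨v₂, h1, h2, rfl⟩ | ⟨w₃, h1, h2, rfl⟩ |
      ⟨us, vs, ws, h1, h2, h3, h4, h5, h6, rfl⟩
    · have hm := hSf (show ((u₁ : ℝ), (0 : ℝ), (0 : ℝ)) ∈ _ from ⟨h1.le, le_rfl, le_rfl, h2⟩)
      rw [hPH] at hm
      exact hkey u₁ 0 0 h1.le le_rfl le_rfl hm.2.2.2.1
    · have hm := hSg (show ((0 : ℝ), (v₂ : ℝ), (0 : ℝ)) ∈ _ from ⟨le_rfl, h1.le, le_rfl, h2⟩)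
      rw [hPH] at hm
      exact hkey 0 v₂ 0 le_rfl h1.le le_rfl hm.2.2.2.1
    · have hm := hSh (show ((0 : ℝ), (0 : ℝ), (w₃ : ℝ)) ∈ _ from ⟨le_rfl, le_rfl, h1.le, h2⟩)
      rw [hPH] at hm
      exact hkey 0 0 w₃ le_rfl le_rfl h1.le hm.2.2.2.1
    · have hm := hSf (show ((us : ℝ), (vs : ℝ), (ws : ℝ)) ∈ _ from ⟨h1.le, h2.le, h3.le, h4⟩)
      rw [hPH] at hm
      exact hkey us vs ws h1.le h2.le h3.le hm.2.2.2.1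
  have hLp : lam ≤ α * eplus.1 + β * eplus.2.1 + γ * eplus.2.2 := hLbound eplus heplus
  have hLm : lam ≤ α * eminus.1 + β * eminus.2.1 + γ * eminus.2.2 := hLbound eminus heminus
  have hx0 : α * u x + β * v x + γ * w x < lam :=
    lt_of_lt_of_le hcon
      (mul_le_of_le_one_right hlampos.le (div_le_one_of_le₀ hdmm hdmaxpos.le))
  exact NBMP_core θ lam dmax
    (α * eplus.1 + β * eplus.2.1 + γ * eplus.2.2)
    (α * eminus.1 + β * eminus.2.1 + γ * eminus.2.2) x
    (fun s => α * u s + β * v s + γ * w s)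
    (fun s => α * deriv u s + β * deriv v s + γ * deriv w s)
    (fun s => α / d₁ * u s + β / d₂ * v s + γ / d₃ * w s)
    (fun s => -(α / d₁ * (u s * f (u s) (v s) (w s)) + β / d₂ * (v s * g (u s) (v s) (w s))
      + γ / d₃ * (w s * h (u s) (v s) (w s))))
    hlampos hdmaxpos hPdv hFdv hF'neg hQge hQsm hx0 hPtop hPbot hLp hLm
end
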